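/- arXiv:math/0510043 — 6 statements merged into one kernel-verified Lean document; each statement's English description precedes it below -/
import Mathlib

section
/- Let X and (X_n)_{n≥1} be i.i.d. integrable real random variables with E[X]=0, and let G be a moderate function. If for every a > 0 the series S(X,G,a) := Σ_{n≥1} n^{-1}·G(n)·P[|S_n/n| ≥ a] is finite, then for every a > 0 the last deviation time L_a is almost surely finite and G(L_a) is integrable. -/
open MeasureTheory ProbabilityTheory ENNReal

/-- Partial sums `S_n = X_1 + ⋯ + X_n` (here `X i` for `i < n`). -/
noncomputable def partialSum {Ω : Type*} (X : ℕ → Ω → ℝ) (n : ℕ) (ω : Ω) : ℝ :=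
  ∑ i ∈ Finset.range n, X i ω

/-- The last deviation time `L_a = sup({0} ∪ {n ≥ 1 : |S_n/n| ≥ a}) ∈ ℕ ∪ {∞}`. -/
noncomputable def lastDev {Ω : Type*} (X : ℕ → Ω → ℝ) (a : ℝ) (ω : Ω) : ℕ∞ :=
  ⨆ n ∈ {n : ℕ | 1 ≤ n ∧ a ≤ |partialSum X n ω / n|}, (n : ℕ∞)

/-- Evaluation of `G` at an extended natural number, with `G(∞) = ∞`. -/
noncomputable def evalG (G : ℝ → ℝ) : ℕ∞ → ℝ≥0∞
  | ⊤ => ⊤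
  | (n : ℕ) => ENNReal.ofReal (G n)

/-- A positive function on `[0,∞)` is moderate if it is non-decreasing, tends to `+∞`,
and `G(2t) ≤ c·G(t)`. -/
def Moderate (G : ℝ → ℝ) : Prop :=
  (∀ t ≥ 0, 0 < G t) ∧ MonotoneOn G (Set.Ici 0) ∧
    Filter.Tendsto G Filter.atTop Filter.atTop ∧
    ∃ c : ℝ, ∀ t ≥ 0, G (2 * t) ≤ c * G t

/-- The series `S(X,G,a) = Σ_{n ≥ 1} n⁻¹ G(n) P[|S_n/n| ≥ a]`, valued in `ℝ≥0∞`. -/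
noncomputable def devSeries {Ω : Type*} [MeasurableSpace Ω] (μ : Measure Ω)
    (X : ℕ → Ω → ℝ) (G : ℝ → ℝ) (a : ℝ) : ℝ≥0∞ :=
  ∑' n : {n : ℕ // 1 ≤ n}, ((n : ℕ) : ℝ≥0∞)⁻¹ * ENNReal.ofReal (G (n : ℕ)) *
    μ {ω | a ≤ |partialSum X (n : ℕ) ω / (n : ℕ)|}

section AuxLastDev
lemma evalG_coe (G : ℝ → ℝ) (n : ℕ) : evalG G (n : ℕ∞) = ENNReal.ofReal (G n) := rfl

variable {Ω : Type*} {Xs : ℕ → Ω → ℝ} {a : ℝ} {ω : Ω}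

lemma lastDev_le_iff {N : ℕ} :
    lastDev Xs a ω ≤ (N : ℕ∞) ↔
      ∀ n : ℕ, 1 ≤ n → a ≤ |partialSum Xs n ω / n| → n ≤ N := by
  constructor
  · intro h n h1 h2
    have hmem : n ∈ {n : ℕ | 1 ≤ n ∧ a ≤ |partialSum Xs n ω / ↑n|} := ⟨h1, h2⟩
    have h2' : (n:ℕ∞) ≤ lastDev Xs a ω :=
      le_iSup₂ (f := fun n (_ : n ∈ {n : ℕ | 1 ≤ n ∧ a ≤ |partialSum Xs n ω / ↑n|}) => (n:ℕ∞))
        n hmem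
    have : (n:ℕ∞) ≤ (N:ℕ∞) := le_trans h2' h
    exact_mod_cast this
  · intro h
    apply iSup₂_le
    rintro n ⟨h1, h2⟩
    exact_mod_cast h n h1 h2

lemma lastDev_attained {N : ℕ} (h : lastDev Xs a ω = (N : ℕ∞)) (hN : 1 ≤ N) :
    a ≤ |partialSum Xs N ω / N| := by
  by_contra hc
  have hle : lastDev Xs a ω ≤ ((N - 1 : ℕ) : ℕ∞) := by
    rw [lastDev_le_iff]
    intro n h1 h2
    have hn : n ≤ N := by
      have := lastDev_le_iff.mp (le_of_eq h) n h1 h2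
      exact this
    rcases Nat.lt_or_ge n N with h' | h'
    · omega
    · exfalso
      have hnN : n = N := by omega
      rw [hnN] at h2
      exact hc h2
  rw [h] at hle
  have : N ≤ N - 1 := by exact_mod_cast hle
  omega

end AuxLastDev

section AuxProb
set_option linter.unusedSectionVars false

variable {Ω : Type*} [MeasurableSpace Ω] {μ : Measure Ω} [IsProbabilityMeasure μ]
  {Xs : ℕ → Ω → ℝ}

lemma meas_sum_attach (S : Finset ℕ) :
    Measurable (fun v : {x // x ∈ S} → ℝ => ∑ i ∈ S.attach, v i) :=
  Finset.measurable_sum _ (fun i _ => measurable_pi_apply i)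

lemma indepFun_tuple_sum (hXs : ∀ n, Measurable (Xs n))
    (hindep : iIndepFun Xs μ)
    (S T : Finset ℕ) (hST : Disjoint S T) :
    IndepFun (fun ω (i : S) => Xs i ω) (fun ω => ∑ i ∈ T, Xs i ω) μ := by
  have h2 := (hindep.indepFun_finset S T hST hXs).comp measurable_id (meas_sum_attach T)
  have : (fun ω => ∑ i ∈ T, Xs i ω)
      = (fun v : {x // x ∈ T} → ℝ => ∑ i ∈ T.attach, v i) ∘ (fun ω (i : T) => Xs i ω) := by
    funext ω; exact (Finset.sum_attach _ _).symm
  rw [this]; exact h2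

lemma indepFun_sum_sum (hXs : ∀ n, Measurable (Xs n))
    (hindep : iIndepFun Xs μ)
    (S T : Finset ℕ) (hST : Disjoint S T) :
    IndepFun (fun ω => ∑ i ∈ S, Xs i ω) (fun ω => ∑ i ∈ T, Xs i ω) μ := by
  have h := (hindep.indepFun_finset S T hST hXs).comp (meas_sum_attach S) (meas_sum_attach T)
  have hS : (fun ω => ∑ i ∈ S, Xs i ω)
      = (fun v : {x // x ∈ S} → ℝ => ∑ i ∈ S.attach, v i) ∘ (fun ω (i : S) => Xs i ω) := by
    funext ω; exact (Finset.sum_attach _ _).symm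
  have hT : (fun ω => ∑ i ∈ T, Xs i ω)
      = (fun v : {x // x ∈ T} → ℝ => ∑ i ∈ T.attach, v i) ∘ (fun ω (i : T) => Xs i ω) := by
    funext ω; exact (Finset.sum_attach _ _).symm
  rw [hS, hT]; exact h

lemma identDistrib_add {f g f' g' : Ω → ℝ}
    (hf : Measurable f) (hg : Measurable g) (hf' : Measurable f') (hg' : Measurable g')
    (hfg : IndepFun f g μ) (hfg' : IndepFun f' g' μ)
    (h1 : IdentDistrib f f' μ μ) (h2 : IdentDistrib g g' μ μ) :
    IdentDistrib (fun ω => f ω + g ω) (fun ω => f' ω + g' ω) μ μ := by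
  refine ⟨(hf.add hg).aemeasurable, (hf'.add hg').aemeasurable, ?_⟩
  have e1 : μ.map (fun ω => f ω + g ω)
      = (μ.map (fun ω => (f ω, g ω))).map (fun p : ℝ × ℝ => p.1 + p.2) := by
    rw [Measure.map_map measurable_add (hf.prodMk hg)]; rfl
  have e2 : μ.map (fun ω => f' ω + g' ω)
      = (μ.map (fun ω => (f' ω, g' ω))).map (fun p : ℝ × ℝ => p.1 + p.2) := by
    rw [Measure.map_map measurable_add (hf'.prodMk hg')]; rfl
  rw [e1, e2,
    (indepFun_iff_map_prod_eq_prod_map_map hf.aemeasurable hg.aemeasurable).mp hfg,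
    (indepFun_iff_map_prod_eq_prod_map_map hf'.aemeasurable hg'.aemeasurable).mp hfg',
    h1.map_eq, h2.map_eq]

lemma identDistrib_sum {X : Ω → ℝ} (hXs : ∀ n, Measurable (Xs n))
    (hindep : iIndepFun Xs μ)
    (hident : ∀ n, IdentDistrib (Xs n) X μ μ) :
    ∀ (m : ℕ) (s : Finset ℕ), s.card = m →
      IdentDistrib (fun ω => ∑ i ∈ s, Xs i ω) (fun ω => ∑ i ∈ Finset.range m, Xs i ω) μ μ := by
  intro m
  induction m with
  | zero =>
      intro s hs
      rw [Finset.card_eq_zero] at hs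
      subst hs
      simp only [Finset.sum_empty, Finset.range_zero]
      exact IdentDistrib.refl aemeasurable_const
  | succ m ih =>
      intro s hs
      have hne : s.Nonempty := Finset.card_pos.mp (by omega)
      set j := s.max' hne with hj
      have hjs : j ∈ s := s.max'_mem hne
      have hcard : (s.erase j).card = m := by
        rw [Finset.card_erase_of_mem hjs, hs]; omega
      have hmain := identDistrib_add (μ := μ)
        (f := fun ω => ∑ i ∈ s.erase j, Xs i ω) (g := Xs j)
        (f' := fun ω => ∑ i ∈ Finset.range m, Xs i ω) (g' := Xs m)
        (Finset.measurable_sum _ (fun i _ => hXs i)) (hXs j)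
        (Finset.measurable_sum _ (fun i _ => hXs i)) (hXs m)
        ?_ ?_ (ih _ hcard) ((hident j).trans (hident m).symm)
      · have e1 : (fun ω => ∑ i ∈ s.erase j, Xs i ω + Xs j ω)
            = (fun ω => ∑ i ∈ s, Xs i ω) := by
          funext ω; rw [Finset.sum_erase_add _ _ hjs]
        have e2 : (fun ω => ∑ i ∈ Finset.range m, Xs i ω + Xs m ω)
            = (fun ω => ∑ i ∈ Finset.range (m+1), Xs i ω) := by
          funext ω; rw [Finset.sum_range_succ]
        rwa [e1, e2] at hmain
      · have := indepFun_tuple_sum hXs hindep ∅ ∅ (by simp)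
        have h := indepFun_sum_sum hXs hindep (s.erase j) {j}
          (Finset.disjoint_singleton_right.mpr (Finset.notMem_erase j s))
        simpa using h
      · have h := indepFun_sum_sum hXs hindep (Finset.range m) {m}
          (by simp)
        simpa using h

lemma meas_pS (hXs : ∀ n, Measurable (Xs n)) (n : ℕ) : Measurable (partialSum Xs n) := by
  unfold partialSum; exact Finset.measurable_sum _ (fun i _ => hXs i)

open Filter in
lemma wlln_event {X : Ω → ℝ} (hXs : ∀ n, Measurable (Xs n))
    (hindep : iIndepFun Xs μ)
    (hident : ∀ n, IdentDistrib (Xs n) X μ μ)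
    (hint : Integrable X μ) (hcent : μ[X] = 0) {δ : ℝ} {ε : ℝ≥0∞} (hδ : 0 < δ) (hε : 0 < ε) :
    ∃ M₀ : ℕ, ∀ m, M₀ ≤ m → μ {ω | δ ≤ |partialSum Xs m ω / m|} ≤ ε := by
  have hint0 : Integrable (Xs 0) μ := (hident 0).symm.integrable_snd hint
  have hid0 : ∀ i, IdentDistrib (Xs i) (Xs 0) μ μ := fun i => (hident i).trans (hident 0).symm
  have hpair : Pairwise (Function.onFun (IndepFun · · μ) Xs) := fun i j hij => hindep.indepFun hij
  have hae := strong_law_ae_real Xs hint0 hpair hid0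
  have hzero : μ[Xs 0] = 0 := by rw [(hident 0).integral_eq, hcent]
  rw [hzero] at hae
  have htim : TendstoInMeasure μ (fun m ω => partialSum Xs m ω / m) atTop (fun _ => (0:ℝ)) := by
    apply tendstoInMeasure_of_tendsto_ae
      (fun n => ((meas_pS hXs n).div_const _).aestronglyMeasurable)
    exact hae
  have h := tendstoInMeasure_iff_dist.mp htim δ hδ
  have h2 : ∀ᶠ m in atTop, μ {x | δ ≤ dist (partialSum Xs m x / m) 0} ≤ ε :=
    (h.eventually_lt_const hε).mono (fun m hm => le_of_lt hm)
  obtain ⟨M₀, hM₀⟩ := eventually_atTop.mp h2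
  refine ⟨M₀, fun m hm => ?_⟩
  have : {ω | δ ≤ |partialSum Xs m ω / m|} = {x | δ ≤ dist (partialSum Xs m x / m) 0} := by
    simp [Real.dist_eq, abs_div, Nat.abs_cast]
  rw [this]; exact hM₀ m hm

lemma lintegral_abs_pS {X : Ω → ℝ} (hXs : ∀ n, Measurable (Xs n))
    (hident : ∀ n, IdentDistrib (Xs n) X μ μ) (m : ℕ) :
    ∫⁻ ω, ENNReal.ofReal |partialSum Xs m ω| ∂μ ≤ m * ∫⁻ ω, ‖X ω‖₊ ∂μ := by
  have hpt : ∀ ω, ENNReal.ofReal |partialSum Xs m ω| ≤ ∑ i ∈ Finset.range m, ENNReal.ofReal |Xs i ω| := by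
    intro ω
    calc ENNReal.ofReal |partialSum Xs m ω| ≤ ENNReal.ofReal (∑ i ∈ Finset.range m, |Xs i ω|) :=
          ENNReal.ofReal_le_ofReal (Finset.abs_sum_le_sum_abs _ _)
      _ = ∑ i ∈ Finset.range m, ENNReal.ofReal |Xs i ω| :=
          ENNReal.ofReal_sum_of_nonneg (fun i _ => abs_nonneg _)
  calc ∫⁻ ω, ENNReal.ofReal |partialSum Xs m ω| ∂μ
      ≤ ∫⁻ ω, ∑ i ∈ Finset.range m, ENNReal.ofReal |Xs i ω| ∂μ := lintegral_mono hpt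
    _ = ∑ i ∈ Finset.range m, ∫⁻ ω, ENNReal.ofReal |Xs i ω| ∂μ :=
        lintegral_finset_sum _ (fun i _ => ENNReal.measurable_ofReal.comp (hXs i).abs)
    _ = ∑ i ∈ Finset.range m, ∫⁻ ω, ENNReal.ofReal |X ω| ∂μ := by
        refine Finset.sum_congr rfl (fun i _ => ?_)
        exact ((hident i).comp (ENNReal.measurable_ofReal.comp measurable_abs)).lintegral_eq
    _ = m * ∫⁻ ω, ‖X ω‖₊ ∂μ := by
        simp only [← Real.enorm_eq_ofReal_abs, enorm_eq_nnnorm, Finset.sum_const, Finset.card_range, nsmul_eq_mul]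

lemma markov_pS {X : Ω → ℝ} (hXs : ∀ n, Measurable (Xs n))
    (hident : ∀ n, IdentDistrib (Xs n) X μ μ) (m : ℕ) {t : ℝ} (ht : 0 < t) :
    μ {ω | t ≤ |partialSum Xs m ω|} ≤ (m * ∫⁻ ω, ‖X ω‖₊ ∂μ) / ENNReal.ofReal t := by
  have h := mul_meas_ge_le_lintegral₀ (μ := μ)
    (f := fun ω => ENNReal.ofReal |partialSum Xs m ω|)
    ((ENNReal.measurable_ofReal.comp (meas_pS hXs m).abs)).aemeasurable (ENNReal.ofReal t)
  have hset : {x | ENNReal.ofReal t ≤ ENNReal.ofReal |partialSum Xs m x|} = {ω | t ≤ |partialSum Xs m ω|} := by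
    ext ω; simp [ENNReal.ofReal_le_ofReal_iff (abs_nonneg _)]
  rw [hset] at h
  rw [ENNReal.le_div_iff_mul_le (Or.inl (by simp [ht])) (Or.inl ENNReal.ofReal_ne_top)]
  rw [mul_comm]
  exact h.trans (lintegral_abs_pS hXs hident m)

open Filter in
lemma smallness {X : Ω → ℝ} (hXs : ∀ n, Measurable (Xs n))
    (hindep : iIndepFun Xs μ)
    (hident : ∀ n, IdentDistrib (Xs n) X μ μ)
    (hint : Integrable X μ) (hcent : μ[X] = 0) {a : ℝ} (ha : 0 < a) :
    ∃ j₀ : ℕ, ∀ j, j₀ ≤ j → ∀ N k : ℕ, 2^j ≤ N → N < 2^(j+1) → 2^(j+1) ≤ k → k < 2^(j+2) →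
      μ {ω | a * 2^j / 2 ≤ |∑ i ∈ Finset.Ico N k, Xs i ω|} ≤ 1/2 := by
  obtain ⟨M₀, hM₀⟩ := wlln_event hXs hindep hident hint hcent
    (δ := a/6) (ε := 1/2) (by linarith) (by norm_num)
  set K := ∫⁻ ω, ‖X ω‖₊ ∂μ with hK
  have hKlt : K < ⊤ := hint.2
  set B : ℝ≥0∞ := (M₀ : ℝ≥0∞) * K with hB
  have hBlt : B < ⊤ := ENNReal.mul_lt_top (by simp) hKlt
  -- choose j₀ with ofReal (a * 2^j / 2) ≥ 2 * B for j ≥ j₀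
  have hgrow : Tendsto (fun j : ℕ => a * 2^j / 2) atTop atTop := by
    apply Tendsto.atTop_div_const (by norm_num)
    exact (tendsto_pow_atTop_atTop_of_one_lt (by norm_num : (1:ℝ) < 2)).const_mul_atTop ha
  obtain ⟨j₀, hj₀⟩ := (hgrow.eventually_ge_atTop ((2*B).toReal + 1)).exists_forall_of_atTop
  refine ⟨j₀, fun j hj N k hN1 hN2 hk1 hk2 => ?_⟩
  set t := a * 2^j / 2 with htdef
  have ht : 0 < t := by positivity
  set m := k - N with hm
  have hm1 : 1 ≤ m := by omega
  have hmle : m ≤ 3 * 2^j := by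
    have : (2:ℕ)^(j+2) = 4 * 2^j := by ring
    have h2 : (2:ℕ)^(j+1) = 2 * 2^j := by ring
    omega
  -- identdistrib
  have hcard : (Finset.Ico N k).card = m := Nat.card_Ico N k
  have hid := identDistrib_sum hXs hindep hident m (Finset.Ico N k) hcard
  have hsmeas : MeasurableSet {x : ℝ | t ≤ |x|} :=
    measurableSet_le measurable_const measurable_abs
  have heq : μ {ω | t ≤ |∑ i ∈ Finset.Ico N k, Xs i ω|} = μ {ω | t ≤ |partialSum Xs m ω|} := by
    have := hid.measure_mem_eq hsmeas
    exact this
  rw [heq]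
  by_cases hcase : M₀ ≤ m
  · -- WLLN case
    have hsub : {ω | t ≤ |partialSum Xs m ω|} ⊆ {ω | a/6 ≤ |partialSum Xs m ω / m|} := by
      intro ω hω
      simp only [Set.mem_setOf_eq] at hω ⊢
      have hmpos : (0:ℝ) < m := by positivity
      rw [abs_div, abs_of_pos hmpos, le_div_iff₀ hmpos]
      calc a/6 * m ≤ a/6 * (3 * 2^j) := by
            apply mul_le_mul_of_nonneg_left _ (by linarith)
            exact_mod_cast hmle
        _ = t := by rw [htdef]; ring
        _ ≤ |partialSum Xs m ω| := hω
    exact (measure_mono hsub).trans (hM₀ m hcase)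
  · -- Markov case
    push_neg at hcase
    have h1 := markov_pS hXs hident m ht
    have h2 : (m : ℝ≥0∞) * K ≤ B := by
      apply mul_le_mul_left _ K |>.trans_eq rfl
      exact_mod_cast Nat.cast_le.mpr hcase.le
    have h3 : (2:ℝ≥0∞) * B ≤ ENNReal.ofReal t := by
      have := hj₀ j hj
      calc (2:ℝ≥0∞) * B = ENNReal.ofReal ((2*B).toReal) := by
            rw [ENNReal.ofReal_toReal]
            exact (ENNReal.mul_lt_top (by norm_num) hBlt).ne
        _ ≤ ENNReal.ofReal t := ENNReal.ofReal_le_ofReal (by linarith)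
    calc μ {ω | t ≤ |partialSum Xs m ω|} ≤ ((m:ℝ≥0∞) * K) / ENNReal.ofReal t := h1
      _ ≤ B / (2 * B) := by
          apply ENNReal.div_le_div h2 h3 |>.trans_eq rfl
      _ ≤ 1/2 := by
          rcases eq_or_ne B 0 with h0 | h0
          · simp [h0]
          · rw [ENNReal.div_le_iff (mul_ne_zero (by norm_num) h0) (by finiteness)]
            rw [div_eq_mul_inv, one_mul, mul_comm 2 B, ← mul_assoc, mul_right_comm,
              ENNReal.inv_mul_cancel (by norm_num) (by norm_num), one_mul]

lemma measSet_A (hXs : ∀ n, Measurable (Xs n)) (b : ℝ) (n : ℕ) :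
    MeasurableSet {ω | b ≤ |partialSum Xs n ω / n|} :=
  measurableSet_le measurable_const ((meas_pS hXs n).div_const _).abs

lemma ottaviani {X : Ω → ℝ} (hXs : ∀ n, Measurable (Xs n))
    (hindep : iIndepFun Xs μ)
    (hident : ∀ n, IdentDistrib (Xs n) X μ μ)
    (hint : Integrable X μ) (hcent : μ[X] = 0) {a : ℝ} (ha : 0 < a) :
    ∃ j₀ : ℕ, ∀ j, j₀ ≤ j → ∀ k, 2^(j+1) ≤ k → k < 2^(j+2) →
      μ (⋃ N ∈ Finset.Ico (2^j) (2^(j+1)), {ω | a ≤ |partialSum Xs N ω / N|})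
        ≤ 2 * μ {ω | a/8 ≤ |partialSum Xs k ω / k|} := by
  classical
  obtain ⟨j₀, hj₀⟩ := smallness hXs hindep hident hint hcent ha
  refine ⟨j₀, fun j hj k hk1 hk2 => ?_⟩
  set t : ℝ := a * 2^j / 2 with ht
  have htpos : 0 < t := by positivity
  set A : ℕ → Set Ω := fun N => {ω | a ≤ |partialSum Xs N ω / N|} with hA
  set E : ℕ → Set Ω := fun N => A N ∩ ⋂ M ∈ Finset.Ico (2^j) N, (A M)ᶜ with hE
  set W : ℕ → Ω → ℝ := fun N ω => ∑ i ∈ Finset.Ico N k, Xs i ω with hW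
  set Cc : ℕ → Set Ω := fun N => {ω | |W N ω| < t} with hCc
  have hAmeas : ∀ N, MeasurableSet (A N) := fun N => measSet_A hXs a N
  have hEmeas : ∀ N, MeasurableSet (E N) := fun N =>
    (hAmeas N).inter (MeasurableSet.biInter (Finset.Ico _ _).countable_toSet
      (fun M _ => (hAmeas M).compl))
  have hWmeas : ∀ N, Measurable (W N) := fun N => Finset.measurable_sum _ (fun i _ => hXs i)
  have hCcmeas : ∀ N, MeasurableSet (Cc N) :=
    fun N => measurableSet_lt (hWmeas N).abs measurable_const
  -- small probability of large increment
  have hCsmall : ∀ N ∈ Finset.Ico (2^j : ℕ) (2^(j+1)), μ (Cc N)ᶜ ≤ 1/2 := by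
    intro N hN
    rw [Finset.mem_Ico] at hN
    have : (Cc N)ᶜ = {ω | t ≤ |W N ω|} := by
      ext ω; simp [hCc, not_lt]
    rw [this]
    exact hj₀ j hj N k hN.1 hN.2 hk1 hk2
  have hCcbig : ∀ N ∈ Finset.Ico (2^j : ℕ) (2^(j+1)), 1/2 ≤ μ (Cc N) := by
    intro N hN
    have hadd : μ (Cc N) + μ (Cc N)ᶜ = 1 := by
      rw [measure_add_measure_compl (hCcmeas N), measure_univ]
    have h3 : (1:ℝ≥0∞) - 1/2 ≤ μ (Cc N) := by
      rw [tsub_le_iff_right]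
      calc (1:ℝ≥0∞) = μ (Cc N) + μ (Cc N)ᶜ := hadd.symm
        _ ≤ μ (Cc N) + 1/2 := add_le_add_right (hCsmall N hN) _
    calc (1:ℝ≥0∞)/2 = 1 - 1/2 := by rw [ENNReal.sub_half]; norm_num
      _ ≤ μ (Cc N) := h3
  -- independence of E N and Cc N
  have hindepEN : ∀ N, μ (E N ∩ Cc N) = μ (E N) * μ (Cc N) := by
    intro N
    set V : Ω → ({x // x ∈ Finset.range N} → ℝ) := fun ω i => Xs i ω with hV
    have hVW : IndepFun V (W N) μ :=
      indepFun_tuple_sum hXs hindep (Finset.range N) (Finset.Ico N k)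
        (by simp [Finset.disjoint_left]; omega)
    set σ : ℕ → ({x // x ∈ Finset.range N} → ℝ) → ℝ :=
      fun M v => ∑ i ∈ Finset.range M, if h : i ∈ Finset.range N then v ⟨i, h⟩ else 0 with hσ
    have hσmeas : ∀ M, Measurable (σ M) := by
      intro M
      apply Finset.measurable_sum
      intro i _
      by_cases h : i ∈ Finset.range N
      · simp only [dif_pos h]; exact measurable_pi_apply _
      · simp only [dif_neg h]; exact measurable_const
    have hσeq : ∀ M, M ≤ N → ∀ ω, σ M (V ω) = partialSum Xs M ω := by
      intro M hM ω
      apply Finset.sum_congr rfl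
      intro i hi
      rw [Finset.mem_range] at hi
      rw [dif_pos (Finset.mem_range.mpr (lt_of_lt_of_le hi hM))]
    set B : Set ({x // x ∈ Finset.range N} → ℝ) :=
      {v | a ≤ |σ N v / N|} ∩ ⋂ M ∈ Finset.Ico (2^j : ℕ) N, {v | ¬ (a ≤ |σ M v / M|)} with hB
    have hBmeas : MeasurableSet B := by
      apply MeasurableSet.inter
      · exact measurableSet_le measurable_const ((hσmeas N).div_const _).abs
      · apply MeasurableSet.biInter (Finset.Ico _ _).countable_toSet
        intro M _
        exact (measurableSet_le measurable_const ((hσmeas M).div_const _).abs).compl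
    have hEeq : E N = V ⁻¹' B := by
      ext ω
      simp only [hE, hB, Set.mem_inter_iff, Set.mem_iInter, Set.mem_compl_iff,
        Set.mem_preimage, Set.mem_setOf_eq, hA]
      constructor
      · rintro ⟨h1, h2⟩
        refine ⟨by rw [hσeq N le_rfl]; exact h1, fun M hM => ?_⟩
        rw [hσeq M (le_of_lt (Finset.mem_Ico.mp hM).2)]
        exact h2 M hM
      · rintro ⟨h1, h2⟩
        refine ⟨by rw [← hσeq N le_rfl]; exact h1, fun M hM => ?_⟩
        have := h2 M hM
        rwa [hσeq M (le_of_lt (Finset.mem_Ico.mp hM).2)] at this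
    have hCceq : Cc N = (W N) ⁻¹' {x : ℝ | |x| < t} := rfl
    rw [hEeq, hCceq]
    exact (indepFun_iff_measure_inter_preimage_eq_mul.mp hVW) B {x : ℝ | |x| < t}
      hBmeas (measurableSet_lt measurable_abs measurable_const)
  -- E N ≤ 2 μ (E N ∩ Cc N)
  have hEle : ∀ N ∈ Finset.Ico (2^j : ℕ) (2^(j+1)), μ (E N) ≤ 2 * μ (E N ∩ Cc N) := by
    intro N hN
    rw [hindepEN N]
    calc μ (E N) = μ (E N) * 1 := (mul_one _).symm
      _ ≤ μ (E N) * (2 * μ (Cc N)) := by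
          apply mul_le_mul_right
          calc (1:ℝ≥0∞) = 2 * (1/2) := by
                rw [ENNReal.mul_div_cancel] <;> norm_num
            _ ≤ 2 * μ (Cc N) := mul_le_mul_right (hCcbig N hN) 2
      _ = 2 * (μ (E N) * μ (Cc N)) := by ring
  -- E N ∩ Cc N ⊆ A' k
  have hsubA' : ∀ N ∈ Finset.Ico (2^j : ℕ) (2^(j+1)),
      E N ∩ Cc N ⊆ {ω | a/8 ≤ |partialSum Xs k ω / k|} := by
    intro N hN ω hω
    rw [Finset.mem_Ico] at hN
    obtain ⟨⟨h1, _⟩, h2⟩ := hω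
    have h2j : (1:ℕ) ≤ 2^j := Nat.one_le_two_pow
    have hNpos : 0 < N := by omega
    have hkpos : 0 < k := by have : (1:ℕ) ≤ 2^(j+1) := Nat.one_le_two_pow; omega
    have hNr : (0:ℝ) < N := by exact_mod_cast hNpos
    have hkr : (0:ℝ) < k := by exact_mod_cast hkpos
    simp only [hA, Set.mem_setOf_eq] at h1
    have habs : a * N ≤ |partialSum Xs N ω| := by
      rw [abs_div, abs_of_pos hNr, le_div_iff₀ hNr] at h1
      linarith
    have hsplit : partialSum Xs k ω = partialSum Xs N ω + W N ω := by
      rw [hW]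
      simp only [partialSum, Finset.range_eq_Ico]
      rw [Finset.sum_Ico_consecutive _ (Nat.zero_le N) (by omega : N ≤ k)]
    have hxN : (2:ℝ)^j ≤ N := by exact_mod_cast hN.1
    have hxk : (k:ℝ) ≤ 4 * 2^j := by
      have e : (2:ℕ)^(j+2) = 4 * 2^j := by ring
      have : k ≤ 4 * 2^j := by omega
      exact_mod_cast this
    have h2t : 2 * t ≤ a * N := by
      rw [ht]
      have : a * 2^j ≤ a * N := by nlinarith
      linarith
    have hwa : |W N ω| < t := h2
    have hlow : t ≤ |partialSum Xs k ω| := by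
      have := abs_sub_abs_le_abs_sub (partialSum Xs N ω) (W N ω)
      have habs2 : |partialSum Xs N ω - W N ω| ≥ |partialSum Xs N ω| - |W N ω| := by
        exact abs_sub_abs_le_abs_sub _ _
      have : |partialSum Xs k ω| ≥ |partialSum Xs N ω| - |W N ω| := by
        rw [hsplit]
        calc |partialSum Xs N ω + W N ω| ≥ |partialSum Xs N ω| - |W N ω| := by
              have := abs_add_le (partialSum Xs N ω + W N ω) (-(W N ω))
              simp only [add_neg_cancel_right, abs_neg] at this
              linarith
          _ ≥ |partialSum Xs N ω| - |W N ω| := le_refl _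
      nlinarith [abs_nonneg (W N ω)]
    rw [Set.mem_setOf_eq, abs_div, abs_of_pos hkr, le_div_iff₀ hkr]
    have htk : a * k / 8 ≤ t := by
      rw [ht]; nlinarith
    linarith
  -- pairwise disjoint
  have hdisj : ((Finset.Ico (2^j:ℕ) (2^(j+1)) : Finset ℕ) : Set ℕ).PairwiseDisjoint
      (fun N => E N ∩ Cc N) := by
    intro N hN N' hN' hne
    simp only [Finset.coe_Ico, Set.mem_Ico] at hN hN'
    have key : ∀ P P' : ℕ, 2^j ≤ P → P < P' → Disjoint (E P ∩ Cc P) (E P' ∩ Cc P') := by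
      intro P P' hP hPP'
      rw [Set.disjoint_left]
      rintro ω ⟨⟨hAP, _⟩, _⟩ ⟨⟨_, hnot⟩, _⟩
      have : ω ∈ (A P)ᶜ := by
        have := Set.mem_iInter₂.mp hnot P (Finset.mem_Ico.mpr ⟨hP, hPP'⟩)
        exact this
      exact this hAP
    rcases hne.lt_or_gt with h | h
    · exact key N N' hN.1 h
    · exact (key N' N hN'.1 h).symm
  -- minimal element: union of A's ⊆ union of E's
  have hDsub : (⋃ N ∈ Finset.Ico (2^j:ℕ) (2^(j+1)), A N)
      ⊆ ⋃ N ∈ Finset.Ico (2^j:ℕ) (2^(j+1)), E N := by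
    intro ω hω
    rw [Set.mem_iUnion₂] at hω ⊢
    obtain ⟨N, hN, hωA⟩ := hω
    set s : Finset ℕ := (Finset.Ico (2^j:ℕ) (2^(j+1))).filter (fun M => ω ∈ A M) with hs
    have hsne : s.Nonempty := ⟨N, Finset.mem_filter.mpr ⟨hN, hωA⟩⟩
    set N₀ := s.min' hsne with hN₀
    have hN₀s : N₀ ∈ s := s.min'_mem hsne
    rw [Finset.mem_filter] at hN₀s
    refine ⟨N₀, hN₀s.1, hN₀s.2, ?_⟩
    rw [Set.mem_iInter₂]
    intro M hM
    rw [Finset.mem_Ico] at hM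
    intro hωM
    have hMs : M ∈ s := Finset.mem_filter.mpr
      ⟨Finset.mem_Ico.mpr ⟨hM.1, lt_trans hM.2 (Finset.mem_Ico.mp hN₀s.1).2⟩, hωM⟩
    have := s.min'_le M hMs
    omega
  -- final chain
  calc μ (⋃ N ∈ Finset.Ico (2^j:ℕ) (2^(j+1)), A N)
      ≤ μ (⋃ N ∈ Finset.Ico (2^j:ℕ) (2^(j+1)), E N) := measure_mono hDsub
    _ ≤ ∑ N ∈ Finset.Ico (2^j:ℕ) (2^(j+1)), μ (E N) := measure_biUnion_finset_le _ _
    _ ≤ ∑ N ∈ Finset.Ico (2^j:ℕ) (2^(j+1)), 2 * μ (E N ∩ Cc N) := Finset.sum_le_sum hEle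
    _ = 2 * ∑ N ∈ Finset.Ico (2^j:ℕ) (2^(j+1)), μ (E N ∩ Cc N) := by rw [Finset.mul_sum]
    _ = 2 * μ (⋃ N ∈ Finset.Ico (2^j:ℕ) (2^(j+1)), E N ∩ Cc N) := by
        rw [measure_biUnion_finset hdisj
          (fun N _ => (hEmeas N).inter (hCcmeas N))]
    _ ≤ 2 * μ {ω | a/8 ≤ |partialSum Xs k ω / k|} := by
        apply mul_le_mul_right
        apply measure_mono
        exact Set.iUnion₂_subset hsubA'

end AuxProb

theorem stmt2 {Ω : Type*} [MeasurableSpace Ω] (μ : Measure Ω) [IsProbabilityMeasure μ]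
    (X : Ω → ℝ) (Xs : ℕ → Ω → ℝ)
    (hX : Measurable X) (hXs : ∀ n, Measurable (Xs n))
    (hindep : iIndepFun Xs μ)
    (hident : ∀ n, IdentDistrib (Xs n) X μ μ)
    (hint : Integrable X μ) (hcent : μ[X] = 0)
    (G : ℝ → ℝ) (hG : Moderate G)
    (hser : ∀ a > (0 : ℝ), devSeries μ Xs G a < ⊤) :
    ∀ a > (0 : ℝ), (∀ᵐ ω ∂μ, lastDev Xs a ω ≠ ⊤) ∧
      ∫⁻ ω, evalG G (lastDev Xs a ω) ∂μ < ⊤ := by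
  intro a ha
  classical
  -- Strong law: a.e. finiteness
  have hint0 : Integrable (Xs 0) μ := (hident 0).symm.integrable_snd hint
  have hpair : Pairwise (Function.onFun (IndepFun · · μ) Xs) := fun i j hij => hindep.indepFun hij
  have hid0 : ∀ i, IdentDistrib (Xs i) (Xs 0) μ μ := fun i => (hident i).trans (hident 0).symm
  have hae := strong_law_ae_real Xs hint0 hpair hid0
  have hzero : μ[Xs 0] = 0 := by rw [(hident 0).integral_eq, hcent]
  rw [hzero] at hae
  have hfin : ∀ᵐ ω ∂μ, lastDev Xs a ω ≠ ⊤ := by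
    filter_upwards [hae] with ω hω
    have hev : ∀ᶠ n : ℕ in Filter.atTop, |partialSum Xs n ω / n| < a := by
      have h2 := hω.eventually (Metric.ball_mem_nhds (0:ℝ) ha)
      filter_upwards [h2] with n hn
      have : dist ((∑ i ∈ Finset.range n, Xs i ω) / n) 0 < a := hn
      rw [Real.dist_eq, sub_zero] at this
      exact this
    obtain ⟨N₀, hN₀⟩ := Filter.eventually_atTop.mp hev
    have hle : lastDev Xs a ω ≤ (N₀ : ℕ∞) := by
      rw [lastDev_le_iff]
      intro n h1 h2
      by_contra hgt
      push_neg at hgt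
      exact absurd h2 (not_le.mpr (hN₀ n (by omega)))
    intro htop
    rw [htop] at hle
    exact WithTop.coe_ne_top (top_le_iff.mp hle)
  refine ⟨hfin, ?_⟩
  -- setup
  have ha8 : (0:ℝ) < a/8 := by linarith
  set A : ℕ → Set Ω := fun n => {ω | a ≤ |partialSum Xs n ω / n|} with hA
  set A' : ℕ → Set Ω := fun k => {ω | a/8 ≤ |partialSum Xs k ω / k|} with hA'
  set f : ℕ → ℝ≥0∞ :=
    fun k => ((k:ℕ):ℝ≥0∞)⁻¹ * ENNReal.ofReal (G k) * μ (A' k) with hf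
  set D : ℕ → Set Ω := fun j => ⋃ N ∈ Finset.Ico (2^j:ℕ) (2^(j+1)), A N with hD
  have hAmeas : ∀ n, MeasurableSet (A n) := fun n => measSet_A hXs a n
  have hDmeas : ∀ j, MeasurableSet (D j) := fun j =>
    MeasurableSet.biUnion (Finset.Ico _ _).countable_toSet (fun N _ => hAmeas N)
  set c : ℕ → ℝ≥0∞ := fun j => ENNReal.ofReal (G ((2^(j+1):ℕ):ℝ)) with hcdef
  set F : ℕ → ℝ≥0∞ := fun j => c j * μ (D j) with hF
  obtain ⟨j₀, hj₀⟩ := ottaviani hXs hindep hident hint hcent ha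
  -- pointwise bound
  have hpt : ∀ᵐ ω ∂μ, evalG G (lastDev Xs a ω) ≤
      ENNReal.ofReal (G 0) + ∑' j : ℕ, (D j).indicator (fun _ => c j) ω := by
    filter_upwards [hfin] with ω hω
    obtain ⟨N, hN⟩ : ∃ N : ℕ, lastDev Xs a ω = (N:ℕ∞) := by
      cases h : lastDev Xs a ω with
      | top => exact absurd h hω
      | coe N => exact ⟨N, rfl⟩
    rcases Nat.eq_zero_or_pos N with h0 | hpos
    · subst h0
      rw [hN, evalG_coe]
      simp only [Nat.cast_zero]
      exact le_self_add
    · set j := Nat.log 2 N with hj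
      have h1 : 2^j ≤ N := Nat.pow_log_le_self 2 (by omega)
      have h2 : N < 2^(j+1) := Nat.lt_pow_succ_log_self (by norm_num) N
      have hAN : ω ∈ A N := lastDev_attained hN hpos
      have hωD : ω ∈ D j := by
        rw [hD]
        exact Set.mem_biUnion (Finset.mem_Ico.mpr ⟨h1, h2⟩) hAN
      calc evalG G (lastDev Xs a ω) = ENNReal.ofReal (G N) := by rw [hN, evalG_coe]
        _ ≤ c j := by
            apply ENNReal.ofReal_le_ofReal
            apply hG.2.1 (by positivity : (0:ℝ) ≤ (N:ℝ))
              (by positivity : (0:ℝ) ≤ ((2^(j+1):ℕ):ℝ))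
            exact_mod_cast h2.le
        _ = (D j).indicator (fun _ => c j) ω := (Set.indicator_of_mem hωD (fun _ => c j)).symm
        _ ≤ ∑' j : ℕ, (D j).indicator (fun _ => c j) ω := ENNReal.le_tsum j
        _ ≤ _ := le_add_self
  -- integral bound
  have hintegral : ∫⁻ ω, evalG G (lastDev Xs a ω) ∂μ ≤ ENNReal.ofReal (G 0) + ∑' j, F j := by
    calc ∫⁻ ω, evalG G (lastDev Xs a ω) ∂μ
        ≤ ∫⁻ ω, (ENNReal.ofReal (G 0) + ∑' j : ℕ, (D j).indicator (fun _ => c j) ω) ∂μ :=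
          lintegral_mono_ae hpt
      _ = ENNReal.ofReal (G 0) + ∑' j, F j := by
          rw [lintegral_add_left measurable_const, lintegral_const, measure_univ, mul_one,
            lintegral_tsum (fun j => (measurable_const.indicator (hDmeas j)).aemeasurable)]
          congr 1
          refine tsum_congr (fun j => ?_)
          rw [lintegral_indicator_const (hDmeas j)]
  -- block bound for j ≥ j₀
  have hblock : ∀ j, j₀ ≤ j → F j ≤ 4 * ∑ k ∈ Finset.Ico (2^(j+1):ℕ) (2^(j+2)), f k := by
    intro j hj
    set cc : ℝ≥0∞ := ((2^(j+1):ℕ) : ℝ≥0∞) with hcc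
    have hc0 : cc ≠ 0 := by
      simp only [hcc, ne_eq, Nat.cast_eq_zero]
      positivity
    have hct : cc ≠ ⊤ := by simp [hcc]
    have hkey : μ (D j) * cc ≤ 2 * ∑ k ∈ Finset.Ico (2^(j+1):ℕ) (2^(j+2)), μ (A' k) := by
      have hcard : (Finset.Ico (2^(j+1):ℕ) (2^(j+2))).card = 2^(j+1) := by
        rw [Nat.card_Ico]
        have : (2:ℕ)^(j+2) = 2 * 2^(j+1) := by ring
        omega
      calc μ (D j) * cc = (Finset.Ico (2^(j+1):ℕ) (2^(j+2))).card • μ (D j) := by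
            rw [hcard, nsmul_eq_mul, mul_comm, hcc]
        _ = ∑ _k ∈ Finset.Ico (2^(j+1):ℕ) (2^(j+2)), μ (D j) := by
            rw [Finset.sum_const]
        _ ≤ ∑ k ∈ Finset.Ico (2^(j+1):ℕ) (2^(j+2)), 2 * μ (A' k) := by
            apply Finset.sum_le_sum
            intro k hk
            rw [Finset.mem_Ico] at hk
            exact hj₀ j hj k hk.1 hk.2
        _ = 2 * ∑ k ∈ Finset.Ico (2^(j+1):ℕ) (2^(j+2)), μ (A' k) := by
            rw [Finset.mul_sum]
    have hper : ∀ k ∈ Finset.Ico (2^(j+1):ℕ) (2^(j+2)),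
        c j * μ (A' k) ≤ 2 * cc * f k := by
      intro k hk
      rw [Finset.mem_Ico] at hk
      have hkc : ((k:ℕ):ℝ≥0∞) ≤ 2 * cc := by
        rw [hcc]
        have h2' : (k:ℕ) ≤ 2 * 2^(j+1) := by
          have : (2:ℕ)^(j+2) = 2 * 2^(j+1) := by ring
          omega
        calc ((k:ℕ):ℝ≥0∞) ≤ ((2 * 2^(j+1) : ℕ):ℝ≥0∞) := by exact_mod_cast h2'
          _ = 2 * ((2^(j+1):ℕ):ℝ≥0∞) := by push_cast; ring
      have hGle : c j ≤ ENNReal.ofReal (G k) := by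
        apply ENNReal.ofReal_le_ofReal
        apply hG.2.1 (by positivity : (0:ℝ) ≤ ((2^(j+1):ℕ):ℝ))
          (by positivity : (0:ℝ) ≤ (k:ℝ))
        exact_mod_cast hk.1
      have hone : (1:ℝ≥0∞) ≤ 2 * cc * ((k:ℕ):ℝ≥0∞)⁻¹ := by
        have hinv : (2 * cc)⁻¹ ≤ ((k:ℕ):ℝ≥0∞)⁻¹ := by
          apply ENNReal.inv_le_inv.mpr hkc
        calc (1:ℝ≥0∞) = (2 * cc) * (2 * cc)⁻¹ := by
              rw [ENNReal.mul_inv_cancel (by simp [hc0]) (by finiteness)]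
          _ ≤ (2 * cc) * ((k:ℕ):ℝ≥0∞)⁻¹ := mul_le_mul_right hinv _
      calc c j * μ (A' k) = 1 * (c j * μ (A' k)) := (one_mul _).symm
        _ ≤ (2 * cc * ((k:ℕ):ℝ≥0∞)⁻¹) * (ENNReal.ofReal (G k) * μ (A' k)) := by
            exact mul_le_mul' hone (mul_le_mul_left hGle _)
        _ = 2 * cc * (((k:ℕ):ℝ≥0∞)⁻¹ * ENNReal.ofReal (G k) * μ (A' k)) := by ring
        _ = 2 * cc * f k := by rw [hf]
    have hmulc : F j * cc ≤ (4 * ∑ k ∈ Finset.Ico (2^(j+1):ℕ) (2^(j+2)), f k) * cc := by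
      calc F j * cc = c j * (μ (D j) * cc) := by rw [hF]; ring
        _ ≤ c j * (2 * ∑ k ∈ Finset.Ico (2^(j+1):ℕ) (2^(j+2)), μ (A' k)) :=
            mul_le_mul_right hkey _
        _ = 2 * ∑ k ∈ Finset.Ico (2^(j+1):ℕ) (2^(j+2)), c j * μ (A' k) := by
            rw [← mul_assoc, mul_comm (c j) 2, mul_assoc, Finset.mul_sum]
        _ ≤ 2 * ∑ k ∈ Finset.Ico (2^(j+1):ℕ) (2^(j+2)), 2 * cc * f k :=
            mul_le_mul_right (Finset.sum_le_sum hper) _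
        _ = (4 * ∑ k ∈ Finset.Ico (2^(j+1):ℕ) (2^(j+2)), f k) * cc := by
            rw [← Finset.mul_sum]; ring
    exact (ENNReal.mul_le_mul_iff_left hc0 hct).mp hmulc
  -- sum over a finite set of indices ≥ 1 is at most the devSeries
  have hfinsum : ∀ T : Finset ℕ, (∀ k ∈ T, 1 ≤ k) →
      ∑ k ∈ T, f k ≤ devSeries μ Xs G (a/8) := by
    intro T hT
    have hdev : devSeries μ Xs G (a/8) = ∑' n : ℕ, Set.indicator {n : ℕ | 1 ≤ n} f n := by
      rw [devSeries]
      rw [← tsum_subtype {n : ℕ | 1 ≤ n} f]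
      rfl
    rw [hdev]
    calc ∑ k ∈ T, f k = ∑ k ∈ T, Set.indicator {n : ℕ | 1 ≤ n} f k := by
          refine Finset.sum_congr rfl (fun k hk => ?_)
          rw [Set.indicator_of_mem (show k ∈ {n : ℕ | 1 ≤ n} from hT k hk) f]
      _ ≤ ∑' n : ℕ, Set.indicator {n : ℕ | 1 ≤ n} f n := ENNReal.sum_le_tsum T
  -- tail estimate
  have htail : ∑' j, F j ≤
      (∑ j ∈ Finset.range j₀, c j) + 4 * devSeries μ Xs G (a/8) := by
    rw [ENNReal.tsum_eq_iSup_nat]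
    apply iSup_le
    intro n
    rw [← Finset.sum_filter_add_sum_filter_not (Finset.range n) (fun j => j < j₀)]
    apply add_le_add
    · calc ∑ j ∈ (Finset.range n).filter (fun j => j < j₀), F j
          ≤ ∑ j ∈ (Finset.range n).filter (fun j => j < j₀), c j := by
            apply Finset.sum_le_sum
            intro j _
            rw [hF]
            calc c j * μ (D j) ≤ c j * 1 := mul_le_mul_right prob_le_one _
              _ = c j := mul_one _
        _ ≤ ∑ j ∈ Finset.range j₀, c j := by
            apply Finset.sum_le_sum_of_subset
            intro j hj
            rw [Finset.mem_filter] at hj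
            exact Finset.mem_range.mpr hj.2
    · set s : Finset ℕ := (Finset.range n).filter (fun j => ¬ j < j₀) with hs
      have hsge : ∀ j ∈ s, j₀ ≤ j := by
        intro j hj
        rw [hs, Finset.mem_filter] at hj
        omega
      calc ∑ j ∈ s, F j
          ≤ ∑ j ∈ s, 4 * ∑ k ∈ Finset.Ico (2^(j+1):ℕ) (2^(j+2)), f k :=
            Finset.sum_le_sum (fun j hj => hblock j (hsge j hj))
        _ = 4 * ∑ j ∈ s, ∑ k ∈ Finset.Ico (2^(j+1):ℕ) (2^(j+2)), f k := by
            rw [Finset.mul_sum]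
        _ = 4 * ∑ k ∈ s.biUnion (fun j => Finset.Ico (2^(j+1):ℕ) (2^(j+2))), f k := by
            congr 1
            rw [Finset.sum_biUnion]
            intro x hx y hy hxy
            have key : ∀ u v : ℕ, u < v →
                Disjoint (Finset.Ico (2^(u+1):ℕ) (2^(u+2))) (Finset.Ico (2^(v+1):ℕ) (2^(v+2))) := by
              intro u v huv
              rw [Finset.disjoint_left]
              intro k hk1 hk2
              rw [Finset.mem_Ico] at hk1 hk2
              have : (2:ℕ)^(u+2) ≤ 2^(v+1) := Nat.pow_le_pow_right (by norm_num) (by omega)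
              omega
            rcases hxy.lt_or_gt with h | h
            · exact key x y h
            · exact (key y x h).symm
        _ ≤ 4 * devSeries μ Xs G (a/8) := by
            apply mul_le_mul_right
            apply hfinsum
            intro k hk
            rw [Finset.mem_biUnion] at hk
            obtain ⟨j, _, hkj⟩ := hk
            rw [Finset.mem_Ico] at hkj
            have : (1:ℕ) ≤ 2^(j+1) := Nat.one_le_two_pow
            omega
  -- conclude
  apply lt_of_le_of_lt hintegral
  apply ENNReal.add_lt_top.mpr
  constructor
  · exact ENNReal.ofReal_lt_top
  · apply lt_of_le_of_lt htail
    apply ENNReal.add_lt_top.mpr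
    constructor
    · apply ENNReal.sum_lt_top.mpr
      intro j _
      exact ENNReal.ofReal_lt_top
    · exact ENNReal.mul_lt_top (by norm_num) (hser (a/8) ha8)
end

section
/- Let X and (X_n)_{n≥1} be i.i.d. integrable real random variables with E[X]=0, and let G be a moderate function. If for every a > 0 the last deviation time L_a is almost surely finite and G(L_a) is integrable, then |X|·G(|X|) is integrable. -/
open MeasureTheory ProbabilityTheory ENNReal

lemma prodb (q : ℕ → ℝ≥0∞) (hq : ∀ j, q j ≤ 1) (F : Finset ℕ) :
    (∏ j ∈ F, (1 - q j)) * (1 + ∑ j ∈ F, q j) ≤ 1 := by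
  classical
  induction F using Finset.induction with
  | empty => simp
  | insert a F' ha ih =>
    rw [Finset.prod_insert ha, Finset.sum_insert ha]
    have h1 : (1 : ℝ≥0∞) + (q a + ∑ j ∈ F', q j) ≤ (1 + q a) * (1 + ∑ j ∈ F', q j) := by
      have : (1 + q a) * (1 + ∑ j ∈ F', q j)
          = 1 + (q a + ∑ j ∈ F', q j) + q a * ∑ j ∈ F', q j := by ring
      rw [this]; exact le_self_add
    have h2 : (1 - q a) * (1 + q a) ≤ 1 := by
      rw [mul_add, mul_one]
      calc (1 - q a) + (1 - q a) * q a ≤ (1 - q a) + 1 * q a := by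
            exact add_le_add_right (mul_le_mul_left tsub_le_self _) _
        _ = 1 := by rw [one_mul, tsub_add_cancel_of_le (hq a)]
    calc ((1 - q a) * ∏ j ∈ F', (1 - q j)) * (1 + (q a + ∑ j ∈ F', q j))
        ≤ ((1 - q a) * ∏ j ∈ F', (1 - q j)) * ((1 + q a) * (1 + ∑ j ∈ F', q j)) :=
          mul_le_mul_right h1 _
      _ = ((1 - q a) * (1 + q a)) * ((∏ j ∈ F', (1 - q j)) * (1 + ∑ j ∈ F', q j)) := by ring
      _ ≤ 1 * 1 := mul_le_mul' h2 ih
      _ = 1 := by rw [one_mul]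

lemma key_ineq (q : ℕ → ℝ≥0∞) (hq : ∀ j, q j ≤ 1) (F : Finset ℕ) {m : ℝ≥0∞}
    (hm : 1 - ∏ j ∈ F, (1 - q j) ≤ m) (hm4 : m ≤ 1/4) :
    ∑ j ∈ F, q j ≤ 2 * m := by
  have hpr := prodb q hq F
  set s := ∑ j ∈ F, q j with hs_def
  have hs : s ≠ ∞ := by
    refine ne_top_of_le_ne_top (by simp : (F.card : ℝ≥0∞) ≠ ∞) ?_
    rw [hs_def]
    calc ∑ j ∈ F, q j ≤ ∑ j ∈ F, 1 := Finset.sum_le_sum fun j _ => hq j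
      _ = F.card := by simp
  have h1s0 : (1 : ℝ≥0∞) + s ≠ 0 := by simp
  have h1st : (1 : ℝ≥0∞) + s ≠ ∞ := by simp [hs]
  have hinv : (∏ j ∈ F, (1 - q j)) ≤ (1 + s)⁻¹ :=
    ENNReal.le_inv_iff_mul_le.2 hpr
  have hfrac : s / (1 + s) ≤ 1 - ∏ j ∈ F, (1 - q j) := by
    refine (ENNReal.cancel_of_ne (a := ∏ j ∈ F, (1 - q j)) ?_).le_tsub_of_add_le_right ?_
    · exact ne_top_of_le_ne_top (by simp [h1s0, h1st]) hinv
    · calc s / (1 + s) + ∏ j ∈ F, (1 - q j) ≤ s / (1 + s) + (1 + s)⁻¹ :=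
          add_le_add_right hinv _
        _ = s / (1 + s) + 1 / (1 + s) := by rw [one_div]
        _ = (s + 1) / (1 + s) := ENNReal.div_add_div_same
        _ = 1 := by rw [add_comm s 1]; exact ENNReal.div_self h1s0 h1st
  have hfm : s / (1 + s) ≤ m := hfrac.trans hm
  have hsm : s ≤ m * (1 + s) := by
    calc s = s / (1 + s) * (1 + s) := by
          rw [ENNReal.div_mul_cancel h1s0 h1st]
      _ ≤ m * (1 + s) := mul_le_mul_left hfm _
  have hs4 : s ≤ m + s / 4 := by
    calc s ≤ m * (1 + s) := hsm
      _ = m + m * s := by rw [mul_add, mul_one]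
      _ ≤ m + (1/4) * s := add_le_add_right (mul_le_mul_left hm4 _) _
      _ = m + s / 4 := by rw [one_div, ENNReal.div_eq_inv_mul]
  have half : s / 2 ≤ m := by
    have h24 : s / 4 ≤ s / 2 := by
      rw [ENNReal.div_eq_inv_mul, ENNReal.div_eq_inv_mul]
      exact mul_le_mul_left (by simp [ENNReal.inv_le_inv]; norm_num) _
    have hsub : s / 2 ≤ s - s / 4 := by
      refine (ENNReal.cancel_of_ne (a := s / 4) ?_).le_tsub_of_add_le_right ?_
      · exact ne_top_of_le_ne_top hs (h24.trans ENNReal.half_le_self)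
      · calc s / 2 + s / 4 ≤ s / 2 + s / 2 := add_le_add_right h24 _
          _ = s := ENNReal.add_halves s
    exact hsub.trans (tsub_le_iff_right.2 hs4)
  calc s = s / 2 * 2 := by
        rw [ENNReal.div_mul_cancel (by norm_num) (by norm_num)]
    _ ≤ m * 2 := mul_le_mul_left half _
    _ = 2 * m := mul_comm _ _

theorem stmt3 {Ω : Type*} [MeasurableSpace Ω] (μ : Measure Ω) [IsProbabilityMeasure μ]
    (X : Ω → ℝ) (Xs : ℕ → Ω → ℝ)
    (hX : Measurable X) (hXs : ∀ n, Measurable (Xs n))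
    (hindep : iIndepFun Xs μ)
    (hident : ∀ n, IdentDistrib (Xs n) X μ μ)
    (hint : Integrable X μ) (hcent : μ[X] = 0)
    (G : ℝ → ℝ) (hG : Moderate G)
    (hL : ∀ a > (0 : ℝ), (∀ᵐ ω ∂μ, lastDev Xs a ω ≠ ⊤) ∧
      ∫⁻ ω, evalG G (lastDev Xs a ω) ∂μ < ⊤) :
    ∫⁻ ω, ENNReal.ofReal (|X ω| * G |X ω|) ∂μ < ⊤ := by
  classical
  obtain ⟨hGpos, hGmono, hGtop, c, hGc⟩ := hG
  obtain ⟨hfin, hI⟩ := hL 1 one_pos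
  have hmono' : ∀ x y : ℝ, 0 ≤ x → x ≤ y → G x ≤ G y := fun x y hx hxy =>
    hGmono (Set.mem_Ici.2 hx) (Set.mem_Ici.2 (hx.trans hxy)) hxy
  have hc1 : 1 ≤ c := by
    have h0 := hGc 0 le_rfl
    rw [mul_zero] at h0
    have h1 := hGpos 0 le_rfl
    nlinarith [h0, h1]
  -- partial sums are measurable
  have hSmeas : ∀ k, Measurable (partialSum Xs k) := by
    intro k
    exact Finset.measurable_sum _ fun i _ => hXs i
  -- the deviation events
  set Dev : ℕ → Set Ω := fun k => {ω | (k : ℝ) ≤ |partialSum Xs k ω|} with hDev_def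
  have hDevMeas : ∀ k, MeasurableSet (Dev k) :=
    fun k => measurableSet_le measurable_const (hSmeas k).abs
  set E : ℕ → Set Ω := fun n => ⋃ (k : ℕ) (_ : n ≤ k ∧ 1 ≤ k), Dev k with hE_def
  have hEmeas : ∀ n, MeasurableSet (E n) := by
    intro n
    exact MeasurableSet.iUnion fun k => MeasurableSet.iUnion fun _ => hDevMeas k
  have hEanti : Antitone E := by
    intro n m hnm
    refine Set.iUnion₂_subset fun k hk => ?_
    exact Set.subset_iUnion₂ (s := fun k _ => Dev k) k ⟨hnm.trans hk.1, hk.2⟩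
  -- E n forces the last deviation time to be at least n
  have hEL : ∀ n ω, ω ∈ E n → (n : ℕ∞) ≤ lastDev Xs 1 ω := by
    intro n ω hω
    obtain ⟨k, hk, hωk⟩ := Set.mem_iUnion₂.1 hω
    have hk1 : 1 ≤ k := hk.2
    have hkpos : (0:ℝ) < k := by exact_mod_cast hk1
    have hmem : k ∈ {m : ℕ | 1 ≤ m ∧ (1:ℝ) ≤ |partialSum Xs m ω / m|} := by
      refine ⟨hk1, ?_⟩
      rw [abs_div, abs_of_pos hkpos, le_div_iff₀ hkpos, one_mul]
      exact hωk
    calc (n : ℕ∞) ≤ (k : ℕ∞) := by exact_mod_cast hk.1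
      _ ≤ lastDev Xs 1 ω := le_biSup (fun m : ℕ => (m : ℕ∞)) hmem
  -- the single-jump events
  set A : ℕ → Set Ω := fun k => Xs k ⁻¹' {x : ℝ | 2 * ((k : ℝ) + 1) ≤ |x|} with hA_def
  have hsetMeas : ∀ k : ℕ, MeasurableSet {x : ℝ | 2 * ((k : ℝ) + 1) ≤ |x|} :=
    fun k => measurableSet_le measurable_const measurable_abs
  have hAmeas : ∀ k, MeasurableSet (A k) := fun k => (hsetMeas k).preimage (hXs k)
  set p : ℕ → ℝ≥0∞ := fun k => μ (A k) with hp_def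
  set q : ℕ → ℝ≥0∞ := fun j => μ {ω | 2 * ((j : ℝ) + 1) ≤ |X ω|} with hq_def
  have hq1 : ∀ j, q j ≤ 1 := fun j => prob_le_one
  have hpq : ∀ k, p k = q k := by
    intro k
    have := (hident k).measure_mem_eq (hsetMeas k)
    simpa [hp_def, hq_def, A, Set.preimage] using this
  -- a single jump at time k ≥ n forces a deviation at time k or k+1
  have hAE : ∀ n k : ℕ, 1 ≤ n → n ≤ k → A k ⊆ E n := by
    intro n k hn hk ω hω
    have hXk : 2 * ((k : ℝ) + 1) ≤ |Xs k ω| := hω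
    by_cases hdev : (k : ℝ) ≤ |partialSum Xs k ω|
    · exact Set.mem_iUnion₂.2 ⟨k, ⟨hk, hn.trans hk⟩, hdev⟩
    · push_neg at hdev
      have hS1 : partialSum Xs (k+1) ω = partialSum Xs k ω + Xs k ω :=
        Finset.sum_range_succ _ _
      have habs : |Xs k ω| ≤ |partialSum Xs k ω + Xs k ω| + |partialSum Xs k ω| := by
        have h := abs_add_le (partialSum Xs k ω + Xs k ω) (-(partialSum Xs k ω))
        simpa using h
      have hdev1 : ((k+1 : ℕ) : ℝ) ≤ |partialSum Xs (k+1) ω| := by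
        rw [hS1]
        push_cast
        linarith
      exact Set.mem_iUnion₂.2 ⟨k+1, ⟨hk.trans (Nat.le_succ k), Nat.succ_le_succ (Nat.zero_le k)⟩, hdev1⟩
  -- independence: product formula
  have hcompl : ∀ k, μ ((A k)ᶜ) = 1 - p k := fun k => by
    rw [hp_def]; exact prob_compl_eq_one_sub (hAmeas k)
  have hprod : ∀ F : Finset ℕ, μ (⋂ k ∈ F, (A k)ᶜ) = ∏ k ∈ F, (1 - p k) := by
    intro F
    have hmeassets : ∀ k, k ∈ F → MeasurableSet ({x : ℝ | 2 * ((k : ℝ) + 1) ≤ |x|}ᶜ) :=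
      fun k _ => (hsetMeas k).compl
    have hmul := hindep.measure_inter_preimage_eq_mul
      (sets := fun i => {x : ℝ | 2 * ((i : ℝ) + 1) ≤ |x|}ᶜ) F hmeassets
    simp only [Set.preimage_compl] at hmul
    calc μ (⋂ k ∈ F, (A k)ᶜ) = ∏ k ∈ F, μ ((A k)ᶜ) := hmul
      _ = ∏ k ∈ F, (1 - p k) := Finset.prod_congr rfl fun k _ => hcompl k
  -- union lower bound
  have hunion : ∀ (n : ℕ) (F : Finset ℕ), 1 ≤ n → (∀ j ∈ F, n ≤ j) →
      1 - ∏ j ∈ F, (1 - p j) ≤ μ (E n) := by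
    intro n F hn hF
    have hsub : (⋃ j ∈ F, A j) ⊆ E n := Set.iUnion₂_subset fun j hj => hAE n j hn (hF j hj)
    have hUmeas : MeasurableSet (⋃ j ∈ F, A j) :=
      F.measurableSet_biUnion fun j _ => hAmeas j
    have hcomplU : μ ((⋃ j ∈ F, A j)ᶜ) = ∏ j ∈ F, (1 - p j) := by
      rw [Set.compl_iUnion₂]
      exact hprod F
    have h1 : μ ((⋃ j ∈ F, A j)ᶜ) = 1 - μ (⋃ j ∈ F, A j) := prob_compl_eq_one_sub hUmeas
    have h2 : 1 - ∏ j ∈ F, (1 - p j) = μ (⋃ j ∈ F, A j) := by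
      rw [← hcomplU, h1, ENNReal.sub_sub_cancel (by norm_num) prob_le_one]
    rw [h2]
    exact measure_mono hsub
  -- choose N with μ (E n) ≤ 1/4 for n ≥ N
  obtain ⟨N, hN⟩ : ∃ N : ℕ, ∀ n, N ≤ n → μ (E n) ≤ 1/4 := by
    have hinter : μ (⋂ n, E n) = 0 := by
      have hsub2 : (⋂ n, E n) ⊆ {ω | lastDev Xs 1 ω = ⊤} := by
        intro ω hω
        simp only [Set.mem_iInter] at hω
        by_contra h
        set m := (lastDev Xs 1 ω).toNat with hm_def
        have hm : (m : ℕ∞) = lastDev Xs 1 ω := ENat.coe_toNat h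
        have hle := hEL (m+1) ω (hω (m+1))
        rw [← hm] at hle
        have : m + 1 ≤ m := by exact_mod_cast hle
        omega
      have h0 : μ {ω | lastDev Xs 1 ω = ⊤} = 0 := by
        have := hfin
        rw [ae_iff] at this
        simpa using this
      exact measure_mono_null hsub2 h0
    have htend := tendsto_measure_iInter_atTop
      (fun n => (hEmeas n).nullMeasurableSet) hEanti ⟨0, measure_ne_top μ _⟩
    rw [hinter] at htend
    have hev : ∀ᶠ n in Filter.atTop, μ (E n) < 1/4 := by
      have h14 : (0 : ℝ≥0∞) < 1/4 := by norm_num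
      exact htend.eventually_lt_const h14
    obtain ⟨N, hN⟩ := Filter.eventually_atTop.1 hev
    exact ⟨N, fun n hn => (hN n hn).le⟩
  -- tail sums
  set t : ℕ → ℝ≥0∞ := fun n => ∑' k, q (n + k) with ht_def
  have htail : ∀ n, 1 ≤ n → N ≤ n → t n ≤ 2 * μ (E n) := by
    intro n h1n hNn
    show (∑' k, q (n + k)) ≤ 2 * μ (E n)
    rw [ENNReal.tsum_eq_iSup_sum]
    refine iSup_le fun K => ?_
    have hinj : ∀ x ∈ K, ∀ y ∈ K, n + x = n + y → x = y := by intro x _ y _ h; omega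
    have himg : ∑ j ∈ K.image (fun k => n + k), q j = ∑ k ∈ K, q (n + k) :=
      Finset.sum_image hinj
    rw [← himg]
    set F := K.image (fun k => n + k) with hF_def
    refine key_ineq q hq1 F ?_ (hN n hNn)
    have hFmem : ∀ j ∈ F, n ≤ j := by
      intro j hj
      rw [hF_def, Finset.mem_image] at hj
      obtain ⟨k, _, rfl⟩ := hj
      omega
    have hu := hunion n F h1n hFmem
    calc 1 - ∏ j ∈ F, (1 - q j) = 1 - ∏ j ∈ F, (1 - p j) := by
          simp_rw [hpq]
      _ ≤ μ (E n) := hu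
  have htled : ∀ n, t n ≤ ∑' j, q j := by
    intro n
    exact ENNReal.tsum_comp_le_tsum_of_injective (add_right_injective n) q
  -- the increments of G
  set d : ℕ → ℝ≥0∞ := fun n => ENNReal.ofReal (G (n + 1) - G n) with hd_def
  have hdfin : ∀ n, d n ≠ ∞ := fun n => ENNReal.ofReal_ne_top
  have htel : ∀ m : ℕ, ∑ n ∈ Finset.range m, d n = ENNReal.ofReal (G m - G 0) := by
    intro m
    induction m with
    | zero => simp
    | succ m ih =>
      rw [Finset.sum_range_succ, ih, hd_def]
      rw [← ENNReal.ofReal_add (sub_nonneg.2 (hmono' 0 m le_rfl (Nat.cast_nonneg m)))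
        (sub_nonneg.2 (hmono' m (m+1) (Nat.cast_nonneg m) (by linarith)))]
      push_cast
      ring_nf
  -- Σ d(n) μ(E(n+1)) ≤ ∫ G(L)
  have hdsum : ∑' n, d n * μ (E (n + 1)) ≤ ∫⁻ ω, evalG G (lastDev Xs 1 ω) ∂μ := by
    have step1 : ∀ n : ℕ, d n * μ (E (n+1))
        = ∫⁻ ω, (E (n+1)).indicator (fun _ => d n) ω ∂μ := by
      intro n
      rw [lintegral_indicator_const (hEmeas (n+1))]
    calc ∑' n, d n * μ (E (n + 1))
        = ∑' n, ∫⁻ ω, (E (n+1)).indicator (fun _ => d n) ω ∂μ := tsum_congr step1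
      _ = ∫⁻ ω, ∑' n, (E (n+1)).indicator (fun _ => d n) ω ∂μ :=
          (lintegral_tsum fun n => (measurable_const.indicator (hEmeas (n+1))).aemeasurable).symm
      _ ≤ ∫⁻ ω, evalG G (lastDev Xs 1 ω) ∂μ := by
          refine lintegral_mono_ae ?_
          filter_upwards [hfin] with ω hω
          set m := (lastDev Xs 1 ω).toNat with hm_def
          have hm : (m : ℕ∞) = lastDev Xs 1 ω := ENat.coe_toNat hω
          have hev : evalG G (lastDev Xs 1 ω) = ENNReal.ofReal (G m) := by
            rw [← hm]; rfl
          rw [hev]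
          calc ∑' n, (E (n+1)).indicator (fun _ => d n) ω
              ≤ ∑' n, (if n < m then d n else 0) := by
                refine Summable.tsum_le_tsum (fun n => ?_) ENNReal.summable ENNReal.summable
                by_cases hω' : ω ∈ E (n+1)
                · have hle := hEL (n+1) ω hω'
                  rw [← hm] at hle
                  have hn : n + 1 ≤ m := by exact_mod_cast hle
                  simp [Set.indicator_of_mem hω', Nat.lt_of_succ_le hn]
                · simp [Set.indicator_of_notMem hω']
            _ = ∑ n ∈ Finset.range m, (if n < m then d n else 0) := by
                refine tsum_eq_sum ?_
                intro n hn
                rw [Finset.mem_range] at hn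
                simp [hn]
            _ = ∑ n ∈ Finset.range m, d n := by
                refine Finset.sum_congr rfl fun n hn => ?_
                rw [Finset.mem_range] at hn
                simp [hn]
            _ = ENNReal.ofReal (G m - G 0) := htel m
            _ ≤ ENNReal.ofReal (G m) := by
                refine ENNReal.ofReal_le_ofReal ?_
                have := (hGpos 0 le_rfl).le
                linarith
  -- the indicators
  set J : ℕ → Ω → ℝ≥0∞ :=
    fun j => Set.indicator {ω | 2 * ((j : ℝ) + 1) ≤ |X ω|} (fun _ => 1) with hJ_def
  set In : ℕ → Ω → ℝ≥0∞ :=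
    fun n => Set.indicator {ω | 4 * ((n : ℝ) + 2) ≤ |X ω|} (fun _ => 1) with hIn_def
  have hJsetMeas : ∀ j : ℕ, MeasurableSet {ω | 2 * ((j : ℝ) + 1) ≤ |X ω|} :=
    fun j => measurableSet_le measurable_const hX.abs
  have hInsetMeas : ∀ n : ℕ, MeasurableSet {ω | 4 * ((n : ℝ) + 2) ≤ |X ω|} :=
    fun n => measurableSet_le measurable_const hX.abs
  have hJmeas : ∀ j, Measurable (J j) :=
    fun j => measurable_const.indicator (hJsetMeas j)
  have hInmeas : ∀ n, Measurable (In n) :=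
    fun n => measurable_const.indicator (hInsetMeas n)
  have hqJ : ∀ j, ∫⁻ ω, J j ω ∂μ = q j := by
    intro j
    rw [hJ_def, hq_def]
    simp [lintegral_indicator_const (hJsetMeas j)]
  -- |X| is integrable (as a lower integral)
  have hXfin : ∫⁻ ω, ENNReal.ofReal |X ω| ∂μ < ⊤ := by
    have h2 := hint.2
    rw [HasFiniteIntegral] at h2
    calc ∫⁻ ω, ENNReal.ofReal |X ω| ∂μ = ∫⁻ ω, ‖X ω‖₊ ∂μ := by
          refine lintegral_congr fun ω => ?_
          rw [← enorm_eq_nnnorm, ← ofReal_norm, Real.norm_eq_abs]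
      _ < ⊤ := h2
  -- Σ' q j < ∞
  have hC0 : (∑' j, q j) < ⊤ := by
    have hswapq : ∑' j, q j = ∫⁻ ω, ∑' j, J j ω ∂μ := by
      rw [lintegral_tsum (fun j => (hJmeas j).aemeasurable)]
      exact tsum_congr fun j => (hqJ j).symm
    have hpt : ∀ ω, (∑' j, J j ω) ≤ ENNReal.ofReal (|X ω| / 2) := by
      intro ω
      set r := |X ω| with hr_def
      have hr0 : (0:ℝ) ≤ r := abs_nonneg _
      set M := ⌊r/2⌋₊ with hM_def
      calc (∑' j, J j ω) ≤ ∑' j, (if j < M then (1:ℝ≥0∞) else 0) := by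
            refine Summable.tsum_le_tsum (fun j => ?_) ENNReal.summable ENNReal.summable
            by_cases hj : ω ∈ {ω | 2 * ((j : ℝ) + 1) ≤ |X ω|}
            · have h2j : 2 * ((j : ℝ) + 1) ≤ r := hj
              have hjM : j + 1 ≤ M := Nat.le_floor (by push_cast; linarith)
              have : j < M := by omega
              simp [hJ_def, Set.indicator_of_mem hj, this]
            · simp [hJ_def, Set.indicator_of_notMem hj]
        _ = ∑ j ∈ Finset.range M, (if j < M then (1:ℝ≥0∞) else 0) := by
            refine tsum_eq_sum ?_
            intro j hj
            rw [Finset.mem_range] at hj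
            simp [hj]
        _ = (M : ℝ≥0∞) := by
            rw [Finset.sum_congr rfl fun j hj => if_pos (Finset.mem_range.1 hj)]
            simp
        _ ≤ ENNReal.ofReal (r / 2) := by
            rw [← ENNReal.ofReal_natCast M]
            exact ENNReal.ofReal_le_ofReal (Nat.floor_le (by positivity))
    calc (∑' j, q j) = ∫⁻ ω, ∑' j, J j ω ∂μ := hswapq
      _ ≤ ∫⁻ ω, ENNReal.ofReal (|X ω| / 2) ∂μ := lintegral_mono hpt
      _ ≤ ∫⁻ ω, ENNReal.ofReal |X ω| ∂μ := by
          refine lintegral_mono fun ω => ENNReal.ofReal_le_ofReal ?_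
          have := abs_nonneg (X ω)
          linarith
      _ < ⊤ := hXfin
  -- Σ' d n t (n+1) < ∞
  have hT : ∑' n, d n * t (n + 1) < ⊤ := by
    have hterm : ∀ n, d n * t (n+1)
        ≤ (if n + 1 < N then d n * (∑' j, q j) else 0) + 2 * (d n * μ (E (n+1))) := by
      intro n
      by_cases h : n + 1 < N
      · rw [if_pos h]
        exact le_add_right (mul_le_mul_right (htled (n+1)) _)
      · rw [if_neg h, zero_add]
        calc d n * t (n+1) ≤ d n * (2 * μ (E (n+1))) :=
              mul_le_mul_right (htail (n+1) (Nat.succ_le_succ (Nat.zero_le n)) (by omega)) _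
          _ = 2 * (d n * μ (E (n+1))) := by ring
    calc ∑' n, d n * t (n + 1)
        ≤ ∑' n, ((if n + 1 < N then d n * (∑' j, q j) else 0) + 2 * (d n * μ (E (n+1)))) :=
          Summable.tsum_le_tsum hterm ENNReal.summable ENNReal.summable
      _ = (∑' n, if n + 1 < N then d n * (∑' j, q j) else 0)
          + 2 * ∑' n, d n * μ (E (n+1)) := by
          rw [ENNReal.tsum_add, ENNReal.tsum_mul_left]
      _ < ⊤ := by
          refine ENNReal.add_lt_top.2 ⟨?_, ?_⟩
          · have : (∑' n, if n + 1 < N then d n * (∑' j, q j) else 0)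
                = ∑ n ∈ Finset.range N, (if n + 1 < N then d n * (∑' j, q j) else 0) := by
              refine tsum_eq_sum ?_
              intro n hn
              rw [Finset.mem_range] at hn
              rw [if_neg (by omega)]
            rw [this]
            refine ENNReal.sum_lt_top.2 fun n _ => ?_
            split
            · exact ENNReal.mul_lt_top (ENNReal.ofReal_lt_top) hC0
            · exact ENNReal.zero_lt_top
          · refine ENNReal.mul_lt_top (by norm_num) (lt_of_le_of_lt hdsum hI)
  -- per-n integral bound
  have hInt : ∀ n : ℕ, ∫⁻ ω, ENNReal.ofReal |X ω| * In n ω ∂μ ≤ 4 * t (n + 1) := by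
    intro n
    have hpt : ∀ ω, ENNReal.ofReal |X ω| * In n ω ≤ 4 * ∑' k, J (n + 1 + k) ω := by
      intro ω
      set r := |X ω| with hr_def
      have hr0 : (0:ℝ) ≤ r := abs_nonneg _
      by_cases h4 : ω ∈ {ω | 4 * ((n : ℝ) + 2) ≤ |X ω|}
      · have h4' : 4 * ((n : ℝ) + 2) ≤ r := h4
        have hIn1 : In n ω = 1 := by simp [hIn_def, Set.indicator_of_mem h4]
        rw [hIn1, mul_one]
        have hfl : n + 2 ≤ ⌊r/2⌋₊ := Nat.le_floor (by push_cast; linarith)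
        set M' := ⌊r/2⌋₊ - (n+2) + 1 with hM'_def
        have hsum : (M' : ℝ≥0∞) ≤ ∑' k, J (n + 1 + k) ω := by
          have hflr : (⌊r/2⌋₊ : ℝ) ≤ r/2 := Nat.floor_le (by positivity)
          have hterm1 : ∀ k ∈ Finset.range M', J (n + 1 + k) ω = 1 := by
            intro k hk
            rw [Finset.mem_range] at hk
            have hk' : n + 2 + k ≤ ⌊r/2⌋₊ := by omega
            have hc2 : ((n + 2 + k : ℕ) : ℝ) ≤ (⌊r/2⌋₊ : ℝ) := Nat.cast_le.2 hk'
            have hmem : ω ∈ {ω | 2 * (((n+1+k : ℕ) : ℝ) + 1) ≤ |X ω|} := by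
              show 2 * (((n+1+k : ℕ) : ℝ) + 1) ≤ |X ω|
              rw [← hr_def]
              push_cast at hc2 ⊢
              linarith
            simp [hJ_def, Set.indicator_of_mem hmem]
          calc (M' : ℝ≥0∞) = ∑ k ∈ Finset.range M', (1:ℝ≥0∞) := by simp
            _ = ∑ k ∈ Finset.range M', J (n + 1 + k) ω :=
                (Finset.sum_congr rfl hterm1).symm
            _ ≤ ∑' k, J (n + 1 + k) ω :=
                Summable.sum_le_tsum _ (fun _ _ => zero_le) ENNReal.summable
        have hM'r : r ≤ 4 * (M' : ℝ) := by
          have h1 : (⌊r/2⌋₊ : ℝ) ≤ r/2 := Nat.floor_le (by positivity)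
          have h2 : r/2 < ⌊r/2⌋₊ + 1 := Nat.lt_floor_add_one _
          have hcast : (M' : ℝ) = (⌊r/2⌋₊ : ℝ) - ((n:ℝ)+2) + 1 := by
            rw [hM'_def]
            push_cast [Nat.cast_sub hfl]
            ring
          rw [hcast]
          linarith
        calc ENNReal.ofReal r ≤ ENNReal.ofReal (4 * (M' : ℝ)) := ENNReal.ofReal_le_ofReal hM'r
          _ = 4 * (M' : ℝ≥0∞) := by
              rw [ENNReal.ofReal_mul (by norm_num), ENNReal.ofReal_natCast]
              norm_num
          _ ≤ 4 * ∑' k, J (n + 1 + k) ω := mul_le_mul_right hsum _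
      · have hIn0 : In n ω = 0 := by simp [hIn_def, Set.indicator_of_notMem h4]
        rw [hIn0, mul_zero]
        exact zero_le
    calc ∫⁻ ω, ENNReal.ofReal |X ω| * In n ω ∂μ
        ≤ ∫⁻ ω, 4 * ∑' k, J (n + 1 + k) ω ∂μ := lintegral_mono hpt
      _ = 4 * ∑' k, ∫⁻ ω, J (n + 1 + k) ω ∂μ := by
          rw [lintegral_const_mul 4 (Measurable.ennreal_tsum fun k => hJmeas (n+1+k)),
            lintegral_tsum (fun k => (hJmeas (n+1+k)).aemeasurable)]
      _ = 4 * t (n + 1) := by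
          congr 1
          exact tsum_congr fun k => hqJ (n+1+k)
  have hB : ∑' n, d n * ∫⁻ ω, ENNReal.ofReal |X ω| * In n ω ∂μ < ⊤ := by
    calc ∑' n, d n * ∫⁻ ω, ENNReal.ofReal |X ω| * In n ω ∂μ
        ≤ ∑' n, d n * (4 * t (n+1)) :=
          Summable.tsum_le_tsum (fun n => mul_le_mul_right (hInt n) _) ENNReal.summable ENNReal.summable
      _ = 4 * ∑' n, d n * t (n+1) := by
          rw [← ENNReal.tsum_mul_left]
          exact tsum_congr fun n => by ring
      _ < ⊤ := ENNReal.mul_lt_top (by norm_num) hT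
  have hswap : ∫⁻ ω, ENNReal.ofReal |X ω| * (∑' n, d n * In n ω) ∂μ
      = ∑' n, d n * ∫⁻ ω, ENNReal.ofReal |X ω| * In n ω ∂μ := by
    have hptw : ∀ ω, ENNReal.ofReal |X ω| * (∑' n, d n * In n ω)
        = ∑' n, d n * (ENNReal.ofReal |X ω| * In n ω) := by
      intro ω
      rw [← ENNReal.tsum_mul_left]
      exact tsum_congr fun n => by ring
    simp_rw [hptw]
    rw [lintegral_tsum (f := fun n ω => d n * (ENNReal.ofReal |X ω| * In n ω)) (fun n =>
      ((measurable_const.mul ((hX.abs.ennreal_ofReal).mul (hInmeas n)))).aemeasurable)]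
    exact tsum_congr fun n => lintegral_const_mul' _ _ (hdfin n)
  -- pointwise final bound
  have hpoint : ∀ ω, ENNReal.ofReal (|X ω| * G |X ω|)
      ≤ ENNReal.ofReal (16 * G 16) + ENNReal.ofReal (c ^ 3) *
        (ENNReal.ofReal |X ω| * ((∑' n, d n * In n ω) + ENNReal.ofReal (G 0))) := by
    intro ω
    set r := |X ω| with hr_def
    have hr0 : (0:ℝ) ≤ r := abs_nonneg _
    by_cases hr : r < 16
    · have h16 : r * G r ≤ 16 * G 16 := by
        have h1 : G r ≤ G 16 := hmono' r 16 hr0 hr.le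
        have h2 : 0 < G r := hGpos r hr0
        nlinarith
      calc ENNReal.ofReal (r * G r) ≤ ENNReal.ofReal (16 * G 16) :=
            ENNReal.ofReal_le_ofReal h16
        _ ≤ _ := le_self_add
    · push_neg at hr
      set M' := ⌊r/4⌋₊ - 1 with hM'_def
      have hr40 : (0:ℝ) ≤ r/4 := by linarith
      have hfl4 : 4 ≤ ⌊r/4⌋₊ := Nat.le_floor (by push_cast; linarith)
      have hflle : (⌊r/4⌋₊ : ℝ) ≤ r/4 := Nat.floor_le hr40
      have hflgt : r/4 < ⌊r/4⌋₊ + 1 := Nat.lt_floor_add_one _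
      have hsum : (∑' n, d n * In n ω) = ∑ n ∈ Finset.range M', d n := by
        refine tsum_eq_sum ?_ |>.trans (Finset.sum_congr rfl fun n hn => ?_)
        · intro n hn
          rw [Finset.mem_range, not_lt] at hn
          have hnotmem : ω ∉ {ω | 4 * ((n : ℝ) + 2) ≤ |X ω|} := by
            intro hmem
            have h4 : 4 * ((n : ℝ) + 2) ≤ r := hmem
            have : (n + 2 : ℕ) ≤ ⌊r/4⌋₊ := Nat.le_floor (by push_cast; linarith)
            omega
          simp [hIn_def, Set.indicator_of_notMem hnotmem]
        · rw [Finset.mem_range] at hn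
          have hn2 : n + 2 ≤ ⌊r/4⌋₊ := by omega
          have hc2 : ((n + 2 : ℕ) : ℝ) ≤ (⌊r/4⌋₊ : ℝ) := Nat.cast_le.2 hn2
          have hmem : ω ∈ {ω | 4 * ((n : ℝ) + 2) ≤ |X ω|} := by
            show 4 * ((n : ℝ) + 2) ≤ |X ω|
            rw [← hr_def]
            push_cast at hc2
            linarith
          simp [hIn_def, Set.indicator_of_mem hmem]
      have hGM : ENNReal.ofReal (G M') ≤ (∑' n, d n * In n ω) + ENNReal.ofReal (G 0) := by
        rw [hsum, htel M']
        rw [← ENNReal.ofReal_add (sub_nonneg.2 (hmono' 0 M' le_rfl (Nat.cast_nonneg M')))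
          (hGpos 0 le_rfl).le]
        simp
      have hM'cast : (M' : ℝ) = (⌊r/4⌋₊ : ℝ) - 1 := by
        rw [hM'_def]
        push_cast [Nat.cast_sub (by omega : 1 ≤ ⌊r/4⌋₊)]
        ring
      have hM'r : r/8 ≤ (M' : ℝ) := by
        rw [hM'cast]
        linarith
      have hM'0 : (0:ℝ) ≤ (M' : ℝ) := Nat.cast_nonneg _
      have hc0 : (0:ℝ) ≤ c := by linarith
      have hGrM : G r ≤ c ^ 3 * G M' := by
        have e1 : G r ≤ c * G (r/2) := by
          have h := hGc (r/2) (by linarith)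
          rw [show 2 * (r/2) = r by ring] at h
          exact h
        have e2 : G (r/2) ≤ c * G (r/4) := by
          have h := hGc (r/4) (by linarith)
          rw [show 2 * (r/4) = r/2 by ring] at h
          exact h
        have e3 : G (r/4) ≤ c * G (r/8) := by
          have h := hGc (r/8) (by linarith)
          rw [show 2 * (r/8) = r/4 by ring] at h
          exact h
        have e4 : G (r/8) ≤ G M' := hmono' (r/8) M' (by linarith) hM'r
        calc G r ≤ c * G (r/2) := e1
          _ ≤ c * (c * G (r/4)) := mul_le_mul_of_nonneg_left e2 hc0
          _ ≤ c * (c * (c * G (r/8))) :=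
              mul_le_mul_of_nonneg_left (mul_le_mul_of_nonneg_left e3 hc0) hc0
          _ ≤ c * (c * (c * G M')) :=
              mul_le_mul_of_nonneg_left
                (mul_le_mul_of_nonneg_left (mul_le_mul_of_nonneg_left e4 hc0) hc0) hc0
          _ = c ^ 3 * G M' := by ring
      have hmulR : r * G r ≤ c ^ 3 * (r * G M') := by
        calc r * G r ≤ r * (c ^ 3 * G M') := mul_le_mul_of_nonneg_left hGrM hr0
          _ = c ^ 3 * (r * G M') := by ring
      calc ENNReal.ofReal (r * G r) ≤ ENNReal.ofReal (c ^ 3 * (r * G M')) :=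
            ENNReal.ofReal_le_ofReal hmulR
        _ = ENNReal.ofReal (c ^ 3) * (ENNReal.ofReal r * ENNReal.ofReal (G M')) := by
            rw [ENNReal.ofReal_mul (by positivity), ENNReal.ofReal_mul hr0]
        _ ≤ ENNReal.ofReal (c ^ 3) *
            (ENNReal.ofReal r * ((∑' n, d n * In n ω) + ENNReal.ofReal (G 0))) :=
            mul_le_mul_right (mul_le_mul_right hGM _) _
        _ ≤ _ := le_add_self
  -- final assembly
  have hmeasTsum : Measurable fun ω => ∑' n, d n * In n ω :=
    Measurable.ennreal_tsum fun n => measurable_const.mul (hInmeas n)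
  have hmeasF1 : Measurable fun ω => ENNReal.ofReal |X ω| * (∑' n, d n * In n ω) :=
    (hX.abs.ennreal_ofReal).mul hmeasTsum
  calc ∫⁻ ω, ENNReal.ofReal (|X ω| * G |X ω|) ∂μ
      ≤ ∫⁻ ω, (ENNReal.ofReal (16 * G 16) + ENNReal.ofReal (c ^ 3) *
          (ENNReal.ofReal |X ω| * ((∑' n, d n * In n ω) + ENNReal.ofReal (G 0)))) ∂μ :=
        lintegral_mono hpoint
    _ = ENNReal.ofReal (16 * G 16) + ENNReal.ofReal (c ^ 3) *
        ∫⁻ ω, ENNReal.ofReal |X ω| * ((∑' n, d n * In n ω) + ENNReal.ofReal (G 0)) ∂μ := by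
        rw [lintegral_add_left measurable_const, lintegral_const, measure_univ, mul_one,
          lintegral_const_mul' _ _ ENNReal.ofReal_ne_top]
    _ < ⊤ := by
        refine ENNReal.add_lt_top.2 ⟨ENNReal.ofReal_lt_top, ?_⟩
        refine ENNReal.mul_lt_top ENNReal.ofReal_lt_top ?_
        have hsplit : ∫⁻ ω, ENNReal.ofReal |X ω| *
            ((∑' n, d n * In n ω) + ENNReal.ofReal (G 0)) ∂μ
            = (∫⁻ ω, ENNReal.ofReal |X ω| * (∑' n, d n * In n ω) ∂μ)
              + ∫⁻ ω, ENNReal.ofReal |X ω| * ENNReal.ofReal (G 0) ∂μ := by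
          simp_rw [mul_add]
          rw [lintegral_add_left hmeasF1]
        rw [hsplit, hswap]
        refine ENNReal.add_lt_top.2 ⟨hB, ?_⟩
        have hc2 : ∫⁻ ω, ENNReal.ofReal |X ω| * ENNReal.ofReal (G 0) ∂μ
            = ENNReal.ofReal (G 0) * ∫⁻ ω, ENNReal.ofReal |X ω| ∂μ := by
          simp_rw [mul_comm (ENNReal.ofReal _) (ENNReal.ofReal (G 0))]
          exact lintegral_const_mul' _ _ ENNReal.ofReal_ne_top
        rw [hc2]
        exact ENNReal.mul_lt_top ENNReal.ofReal_lt_top hXfin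
end

section
/- Let G be a moderate function with G(2t) ≤ c·G(t) for all t ≥ 0, let X and (X_n)_{n≥1} be i.i.d. integrable real random variables, let α ∈ (0,1), and let t ≥ 1 satisfy E[|X|·1_{|X| ≥ t}] ≤ 1 − α. Then E[|X|·G(|X|)] ≤ 4c²·( t·G(t) + α^{-1}·E[G(L_{1/2})] ), where L_{1/2} is the last time n with |S_n/n| ≥ 1/2. -/
open MeasureTheory ProbabilityTheory ENNReal

/- ### Auxiliary lemmas -/

/-- Bonferroni-type product bound. -/
theorem aux_bonf_prod {ι : Type*} (s : Finset ι) (f : ι → ℝ) (h0 : ∀ i ∈ s, 0 ≤ f i)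
    (h1 : ∀ i ∈ s, f i ≤ 1) :
    ∏ i ∈ s, (1 - f i) ≤ 1 - (∑ i ∈ s, f i) + (∑ i ∈ s, f i)^2/2 := by
  classical
  induction s using Finset.cons_induction with
  | empty => simp
  | cons a s ha ih =>
    rw [Finset.prod_cons, Finset.sum_cons]
    have hS0 : 0 ≤ ∑ i ∈ s, f i := Finset.sum_nonneg fun i hi => h0 i (Finset.mem_cons_of_mem hi)
    have hp0 : 0 ≤ f a := h0 a (Finset.mem_cons_self a s)
    have hp1 : f a ≤ 1 := h1 a (Finset.mem_cons_self a s)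
    have ih' := ih (fun i hi => h0 i (Finset.mem_cons_of_mem hi))
      (fun i hi => h1 i (Finset.mem_cons_of_mem hi))
    nlinarith [ih', hS0, hp0, hp1, sq_nonneg (∑ i ∈ s, f i)]

theorem aux_bonf {ι : Type*} (s : Finset ι) (f : ι → ℝ) (α : ℝ) (hα0 : 0 < α) (hα1 : α < 1)
    (h0 : ∀ i ∈ s, 0 ≤ f i) (h1 : ∀ i ∈ s, f i ≤ 1) (hS : ∑ i ∈ s, f i ≤ 1 - α) :
    α * ∑ i ∈ s, f i + ∏ i ∈ s, (1 - f i) ≤ 1 := by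
  have h := aux_bonf_prod s f h0 h1
  have hS0 : 0 ≤ ∑ i ∈ s, f i := Finset.sum_nonneg h0
  nlinarith [hS0, h, hS]

/-- A large increment forces a deviation. -/
theorem aux_lastDev_ge {Ω : Type*} (Xs : ℕ → Ω → ℝ) (ω : Ω) (i : ℕ) (hi : 1 ≤ i)
    (h : (i : ℝ) + 1 ≤ |Xs i ω|) : (i : ℕ∞) ≤ lastDev Xs (1/2) ω := by
  have hS : partialSum Xs (i+1) ω = partialSum Xs i ω + Xs i ω := Finset.sum_range_succ _ _
  have hi0 : (0:ℝ) < i := by exact_mod_cast hi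
  rcases le_or_gt (1/2 : ℝ) |partialSum Xs i ω / i| with h1 | h1
  · exact le_iSup₂ (f := fun (n : ℕ)
      (_ : n ∈ {n : ℕ | 1 ≤ n ∧ (1/2:ℝ) ≤ |partialSum Xs n ω / n|}) => (n : ℕ∞)) i ⟨hi, h1⟩
  · have h2 : (1/2 : ℝ) ≤ |partialSum Xs (i+1) ω / (i+1)| := by
      have hlt : |partialSum Xs i ω| < i / 2 := by
        rw [abs_div, abs_of_pos hi0] at h1
        calc |partialSum Xs i ω| = |partialSum Xs i ω| / i * i := by field_simp
        _ < (1/2) * i := by apply mul_lt_mul_of_pos_right h1 hi0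
        _ = i / 2 := by ring
      have hXb : |Xs i ω| ≤ |partialSum Xs (i+1) ω| + |partialSum Xs i ω| := by
        have : Xs i ω = partialSum Xs (i+1) ω - partialSum Xs i ω := by rw [hS]; ring
        rw [this]; exact abs_sub _ _
      have hbig : (i+1:ℝ)/2 ≤ |partialSum Xs (i+1) ω| := by nlinarith
      rw [abs_div, abs_of_pos (by positivity : (0:ℝ) < (i:ℝ)+1)]
      rw [le_div_iff₀ (by positivity)]
      nlinarith
    have h3 : ((i+1 : ℕ) : ℕ∞) ≤ lastDev Xs (1/2) ω := by
      apply le_iSup₂ (f := fun (n : ℕ)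
        (_ : n ∈ {n : ℕ | 1 ≤ n ∧ (1/2:ℝ) ≤ |partialSum Xs n ω / n|}) => (n : ℕ∞)) (i+1)
      constructor
      · omega
      · push_cast; exact h2
    exact le_trans (by exact_mod_cast Nat.le_succ i) h3

/-- Increments of `G` at integers. -/
noncomputable def wG (G : ℝ → ℝ) (n : ℕ) : ℝ :=
  if n = 0 then G 0 else G (n : ℝ) - G ((n - 1 : ℕ) : ℝ)

theorem aux_wG_tele (G : ℝ → ℝ) : ∀ m : ℕ, ∑ n ∈ Finset.range (m+1), wG G n = G (m : ℝ) := by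
  intro m
  induction m with
  | zero => simp [wG]
  | succ m ih =>
    rw [Finset.sum_range_succ, ih, wG]
    simp

theorem aux_wG_nonneg (G : ℝ → ℝ) (hpos : ∀ s ≥ (0:ℝ), 0 < G s)
    (hmono : MonotoneOn G (Set.Ici 0)) (n : ℕ) : 0 ≤ wG G n := by
  unfold wG
  split
  · exact (hpos 0 le_rfl).le
  · have h1 : ((n-1:ℕ):ℝ) ≤ (n:ℝ) := by exact_mod_cast Nat.sub_le n 1
    have := hmono (Set.mem_Ici.2 (by positivity)) (Set.mem_Ici.2 (by positivity)) h1
    linarith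

/-- Double sum swap. -/
theorem aux_rswap (G : ℝ → ℝ) (q : ℕ → ℝ) (N K : ℕ) :
    ∑ n ∈ Finset.range K, wG G n * ∑ k ∈ Finset.Icc (max n N + 1) K, q k
      = ∑ k ∈ Finset.Icc (N+1) K, q k * G ((k-1 : ℕ) : ℝ) := by
  classical
  have h1 : ∀ n, ∑ k ∈ Finset.Icc (max n N + 1) K, q k
      = ∑ k ∈ Finset.Icc (N+1) K, if max n N + 1 ≤ k then q k else 0 := by
    intro n
    rw [Finset.sum_ite, Finset.sum_const_zero, add_zero]
    apply Finset.sum_congr _ (fun _ _ => rfl)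
    ext a
    simp only [Finset.mem_filter, Finset.mem_Icc]
    omega
  calc ∑ n ∈ Finset.range K, wG G n * ∑ k ∈ Finset.Icc (max n N + 1) K, q k
      = ∑ n ∈ Finset.range K, ∑ k ∈ Finset.Icc (N+1) K,
          if max n N + 1 ≤ k then wG G n * q k else 0 := by
        apply Finset.sum_congr rfl; intro n _
        rw [h1, Finset.mul_sum]
        apply Finset.sum_congr rfl; intro k _
        rw [mul_ite, mul_zero]
    _ = ∑ k ∈ Finset.Icc (N+1) K, ∑ n ∈ Finset.range K,
          if max n N + 1 ≤ k then wG G n * q k else 0 := Finset.sum_comm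
    _ = ∑ k ∈ Finset.Icc (N+1) K, q k * G ((k-1 : ℕ) : ℝ) := by
        apply Finset.sum_congr rfl; intro k hk
        rw [Finset.mem_Icc] at hk
        have hk1 : 1 ≤ k := le_trans (Nat.succ_le_succ (Nat.zero_le N)) hk.1
        have h2 : ∀ n ∈ Finset.range K, (if max n N + 1 ≤ k then wG G n * q k else 0)
            = if n < k then wG G n * q k else 0 := by
          intro n hn
          congr 1
          simp only [eq_iff_iff]
          omega
        rw [Finset.sum_congr rfl h2, ← Finset.sum_filter]
        have hfil : (Finset.range K).filter (fun n => n < k) = Finset.range k := by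
          ext a; simp only [Finset.mem_filter, Finset.mem_range]; omega
        rw [hfil, ← Finset.sum_mul]
        have h3 : ∑ n ∈ Finset.range k, wG G n = G ((k-1:ℕ):ℝ) := by
          have := aux_wG_tele G (k-1)
          rwa [Nat.sub_add_cancel hk1] at this
        rw [h3, mul_comm]

/-- Pointwise core estimate on the tail. -/
theorem aux_core_tail (G : ℝ → ℝ) (hpos : ∀ s ≥ (0:ℝ), 0 < G s)
    (hmono : MonotoneOn G (Set.Ici 0))
    (c : ℝ) (hc : ∀ s ≥ (0:ℝ), G (2*s) ≤ c * G s) (t : ℝ) (ht : 1 ≤ t)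
    (x : ℝ) (hx : 4*t ≤ x) (K : ℕ) (hxK : x ≤ K) :
    x * G x ≤ 4*c^2 * ∑ k ∈ Finset.Icc (⌊t⌋₊+1) K,
      (if (k:ℝ) ≤ x then G ((k-1:ℕ):ℝ) else 0) := by
  have hc0 : 0 < c := by
    have h2 := hc 1 (by norm_num)
    rw [mul_one] at h2
    have g1 := hpos 1 (by norm_num)
    have g2 := hpos 2 (by norm_num)
    nlinarith
  have hx4 : (4:ℝ) ≤ x := by linarith
  have hx0 : (0:ℝ) ≤ x := by linarith
  set a := ⌊x/2⌋₊ + 1 with ha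
  set b := ⌊x⌋₊ with hb
  have hab : a ≤ b + 1 := by
    have := Nat.floor_le_floor (by linarith : x/2 ≤ x)
    omega
  have hsub : Finset.Icc a b ⊆ Finset.Icc (⌊t⌋₊+1) K := by
    intro k hk
    rw [Finset.mem_Icc] at hk ⊢
    constructor
    · have : ⌊t⌋₊ ≤ ⌊x/2⌋₊ := Nat.floor_le_floor (by linarith)
      omega
    · have : b ≤ K := by
        have := Nat.floor_le_floor hxK
        simpa using this
      omega
  have hGx4 : 0 < G (x/4) := hpos _ (by linarith)
  have hterm : ∀ k ∈ Finset.Icc a b, G (x/4) ≤ (if (k:ℝ) ≤ x then G ((k-1:ℕ):ℝ) else 0) := by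
    intro k hk
    rw [Finset.mem_Icc] at hk
    have hkx : (k:ℝ) ≤ x := by
      calc (k:ℝ) ≤ (b:ℝ) := by exact_mod_cast hk.2
      _ ≤ x := Nat.floor_le hx0
    rw [if_pos hkx]
    apply hmono (Set.mem_Ici.2 (by linarith)) (Set.mem_Ici.2 (by positivity))
    have h1 : (⌊x/2⌋₊ : ℝ) ≤ ((k-1:ℕ):ℝ) := by
      have : ⌊x/2⌋₊ ≤ k - 1 := by omega
      exact_mod_cast this
    have h2 : x/2 - 1 < (⌊x/2⌋₊:ℝ) := by
      have := Nat.lt_floor_add_one (x/2)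
      linarith
    linarith
  have hcard : x/4 ≤ ((Finset.Icc a b).card : ℝ) := by
    rw [Nat.card_Icc]
    have hcast : ((b + 1 - a : ℕ):ℝ) = (b:ℝ) + 1 - (a:ℝ) := by
      push_cast [Nat.cast_sub hab]; ring
    rw [hcast]
    have h1 : x - 1 < (b:ℝ) := by
      have := Nat.lt_floor_add_one x; push_cast [hb]; linarith
    have h2 : (a:ℝ) ≤ x/2 + 1 := by
      have := Nat.floor_le (by linarith : (0:ℝ) ≤ x/2)
      push_cast [ha]; linarith
    linarith
  have hsum : x/4 * G (x/4) ≤ ∑ k ∈ Finset.Icc (⌊t⌋₊+1) K,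
      (if (k:ℝ) ≤ x then G ((k-1:ℕ):ℝ) else 0) := by
    calc x/4 * G (x/4) ≤ ((Finset.Icc a b).card : ℝ) * G (x/4) := by
          apply mul_le_mul_of_nonneg_right hcard hGx4.le
    _ ≤ ∑ k ∈ Finset.Icc a b, (if (k:ℝ) ≤ x then G ((k-1:ℕ):ℝ) else 0) := by
          rw [← nsmul_eq_mul]
          exact Finset.card_nsmul_le_sum _ _ _ hterm
    _ ≤ _ := by
          apply Finset.sum_le_sum_of_subset_of_nonneg hsub
          intro k _ _
          split
          · exact (hpos _ (by positivity)).le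
          · exact le_rfl
  have hGc : G x ≤ c^2 * G (x/4) := by
    have e1 : G (2*(x/2)) ≤ c * G (x/2) := hc _ (by linarith)
    have e2 : G (2*(x/4)) ≤ c * G (x/4) := hc _ (by linarith)
    have h12 : 2*(x/2) = x := by ring
    have h24 : 2*(x/4) = x/2 := by ring
    rw [h12] at e1; rw [h24] at e2
    nlinarith
  nlinarith [hsum, hGc, hGx4, mul_le_mul_of_nonneg_left hsum (by positivity : (0:ℝ) ≤ 4*c^2)]


/-- Summing increments of `G` along levels below `L`. -/
theorem aux_le_evalG (G : ℝ → ℝ) (hGpos : ∀ s ≥ (0:ℝ), 0 < G s)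
    (hGmono : MonotoneOn G (Set.Ici 0)) (K N : ℕ) (L : ℕ∞) (b : ℕ → Prop)
    [DecidablePred b] (hb : ∀ n, b n → ((max n N : ℕ) : ℕ∞) ≤ L) :
    ∑ n ∈ Finset.range K, (if b n then ENNReal.ofReal (wG G n) else 0) ≤ evalG G L := by
  induction L using WithTop.recTopCoe with
  | top => exact le_top
  | coe j =>
    show _ ≤ ENNReal.ofReal (G (j:ℝ))
    have hstep : ∀ n ∈ Finset.range K, (if b n then ENNReal.ofReal (wG G n) else 0)
        ≤ if n ≤ j ∧ N ≤ j then ENNReal.ofReal (wG G n) else 0 := by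
      intro n _
      by_cases hbn : b n
      · have h1 : max n N ≤ j := ENat.coe_le_coe.mp (hb n hbn)
        rw [if_pos hbn, if_pos (by omega : n ≤ j ∧ N ≤ j)]
      · rw [if_neg hbn]
        exact zero_le
    refine le_trans (Finset.sum_le_sum hstep) ?_
    by_cases hNj : N ≤ j
    · have hcond : ∀ n ∈ Finset.range K, (if n ≤ j ∧ N ≤ j then ENNReal.ofReal (wG G n) else 0)
          = if n ≤ j then ENNReal.ofReal (wG G n) else 0 := by
        intro n _
        congr 1
        simp only [eq_iff_iff]
        omega
      rw [Finset.sum_congr rfl hcond, ← Finset.sum_filter]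
      have hfil : (Finset.range K).filter (fun n => n ≤ j) = Finset.range (min K (j+1)) := by
        ext a; simp only [Finset.mem_filter, Finset.mem_range, lt_min_iff]; omega
      rw [hfil, ← ENNReal.ofReal_sum_of_nonneg (fun n _ => aux_wG_nonneg G hGpos hGmono n)]
      apply ENNReal.ofReal_le_ofReal
      rcases Nat.eq_zero_or_pos (min K (j+1)) with hm0 | hm1
      · rw [hm0]
        simp only [Finset.range_zero, Finset.sum_empty]
        exact (hGpos _ (Nat.cast_nonneg j)).le
      · have h3 := aux_wG_tele G (min K (j+1) - 1)
        rw [Nat.sub_add_cancel hm1] at h3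
        rw [h3]
        apply hGmono (Set.mem_Ici.2 (Nat.cast_nonneg _)) (Set.mem_Ici.2 (Nat.cast_nonneg _))
        exact_mod_cast (by omega : min K (j+1) - 1 ≤ j)
    · have hz : ∀ n ∈ Finset.range K, (if n ≤ j ∧ N ≤ j then ENNReal.ofReal (wG G n) else 0) = 0 := by
        intro n _
        rw [if_neg (by omega)]
      rw [Finset.sum_congr rfl hz, Finset.sum_const_zero]
      exact zero_le

theorem stmt5 {Ω : Type*} [MeasurableSpace Ω] (μ : Measure Ω) [IsProbabilityMeasure μ]
    (X : Ω → ℝ) (Xs : ℕ → Ω → ℝ)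
    (hX : Measurable X) (hXs : ∀ n, Measurable (Xs n))
    (hindep : iIndepFun Xs μ)
    (hident : ∀ n, IdentDistrib (Xs n) X μ μ)
    (hint : Integrable X μ)
    (G : ℝ → ℝ) (hG : Moderate G)
    (c : ℝ) (hc : ∀ t ≥ 0, G (2 * t) ≤ c * G t)
    (α : ℝ) (hα : α ∈ Set.Ioo (0 : ℝ) 1)
    (t : ℝ) (ht : 1 ≤ t)
    (htail : ∫ ω in {ω | t ≤ |X ω|}, |X ω| ∂μ ≤ 1 - α) :
    ∫⁻ ω, ENNReal.ofReal (|X ω| * G |X ω|) ∂μ ≤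
      ENNReal.ofReal (4 * c ^ 2) * (ENNReal.ofReal (t * G t) +
        ENNReal.ofReal α⁻¹ * ∫⁻ ω, evalG G (lastDev Xs (1 / 2) ω) ∂μ) := by
  classical
  obtain ⟨hα0, hα1⟩ := hα
  have hGpos := hG.1
  have hGmono := hG.2.1
  have hc0 : 0 < c := by
    have h2 := hc 1 (by norm_num)
    rw [mul_one] at h2
    have g1 := hGpos 1 (by norm_num)
    have g2 := hGpos 2 (by norm_num)
    nlinarith
  have ht0 : (0:ℝ) < t := lt_of_lt_of_le one_pos ht
  set N := ⌊t⌋₊ with hNdef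
  have hN1 : 1 ≤ N := Nat.le_floor (by exact_mod_cast ht)
  have hNt : (N:ℝ) ≤ t := Nat.floor_le ht0.le
  have htN : t < (N:ℝ) + 1 := Nat.lt_floor_add_one t
  set q : ℕ → ℝ := fun k => (μ {ω | (k:ℝ) ≤ |X ω|}).toReal with hqdef
  have hq0 : ∀ k, 0 ≤ q k := fun k => ENNReal.toReal_nonneg
  have hq1 : ∀ k, q k ≤ 1 := by
    intro k
    have h1 : μ {ω | (k:ℝ) ≤ |X ω|} ≤ 1 := prob_le_one
    simpa using ENNReal.toReal_mono ENNReal.one_ne_top h1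
  have hofq : ∀ k, ENNReal.ofReal (q k) = μ {ω | (k:ℝ) ≤ |X ω|} :=
    fun k => ENNReal.ofReal_toReal (measure_ne_top μ _)
  have hsetcast : ∀ i : ℕ, {ω | ((i+1:ℕ):ℝ) ≤ |X ω|} = {ω | (i:ℝ) + 1 ≤ |X ω|} := by
    intro i
    ext ω
    push_cast
    rfl
  set F : ℕ → Set Ω := fun i => {ω | (i:ℝ) + 1 ≤ |Xs i ω|} with hFdef
  have hFmeas : ∀ i, MeasurableSet (F i) :=
    fun i => measurableSet_le measurable_const (hXs i).abs
  have hXsetmeas : ∀ r : ℝ, MeasurableSet {y : ℝ | r ≤ |y|} :=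
    fun r => measurableSet_le measurable_const measurable_abs
  have hFq : ∀ i, μ (F i) = ENNReal.ofReal (q (i+1)) := by
    intro i
    have h1 : μ (Xs i ⁻¹' {y | (i:ℝ) + 1 ≤ |y|}) = μ (X ⁻¹' {y | (i:ℝ) + 1 ≤ |y|}) :=
      (hident i).measure_mem_eq (hXsetmeas _)
    have h2 : X ⁻¹' {y | (i:ℝ) + 1 ≤ |y|} = {ω | (i:ℝ) + 1 ≤ |X ω|} := rfl
    have h3 : F i = Xs i ⁻¹' {y | (i:ℝ) + 1 ≤ |y|} := rfl
    rw [h3, h1, h2, hofq (i+1), hsetcast i]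
  -- tail sums are at most 1 - α
  have htsum : ∀ n M : ℕ, N ≤ n → ∑ i ∈ Finset.Icc n M, q (i+1) ≤ 1 - α := by
    intro n M hn
    have hsm : ∀ i : ℕ, MeasurableSet {ω' : Ω | (i:ℝ) + 1 ≤ |X ω'|} :=
      fun i => measurableSet_le measurable_const hX.abs
    have hstm : MeasurableSet {ω' : Ω | t ≤ |X ω'|} :=
      measurableSet_le measurable_const hX.abs
    have hind : ∀ i : ℕ,
        Integrable (Set.indicator {ω' : Ω | (i:ℝ) + 1 ≤ |X ω'|} (1 : Ω → ℝ)) μ :=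
      fun i => (integrable_const (1:ℝ)).indicator (hsm i)
    have hgint : Integrable (Set.indicator {ω' : Ω | t ≤ |X ω'|} (fun ω' => |X ω'|)) μ :=
      hint.abs.indicator hstm
    have hq_eq : ∀ i : ℕ, q (i+1)
        = ∫ ω, Set.indicator {ω' : Ω | (i:ℝ) + 1 ≤ |X ω'|} (1 : Ω → ℝ) ω ∂μ := by
      intro i
      rw [integral_indicator_one (hsm i)]
      show (μ {ω | ((i+1:ℕ):ℝ) ≤ |X ω|}).toReal = _
      rw [hsetcast i]; rfl
    calc ∑ i ∈ Finset.Icc n M, q (i+1)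
        = ∫ ω, (∑ i ∈ Finset.Icc n M,
            Set.indicator {ω' : Ω | (i:ℝ) + 1 ≤ |X ω'|} (1 : Ω → ℝ) ω) ∂μ := by
          rw [integral_finset_sum _ (fun i _ => hind i)]
          exact Finset.sum_congr rfl fun i _ => hq_eq i
      _ ≤ ∫ ω, Set.indicator {ω' : Ω | t ≤ |X ω'|} (fun ω' => |X ω'|) ω ∂μ := by
          apply integral_mono (integrable_finset_sum _ (fun i _ => hind i)) hgint
          intro ω
          show (∑ i ∈ Finset.Icc n M,
              Set.indicator {ω' : Ω | (i:ℝ) + 1 ≤ |X ω'|} (1 : Ω → ℝ) ω)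
            ≤ Set.indicator {ω' : Ω | t ≤ |X ω'|} (fun ω' => |X ω'|) ω
          by_cases hωt : t ≤ |X ω|
          · have hmemt : ω ∈ {ω' : Ω | t ≤ |X ω'|} := hωt
            rw [Set.indicator_of_mem hmemt]
            have hx0 : (0:ℝ) ≤ |X ω| := abs_nonneg _
            have heq : ∀ i ∈ Finset.Icc n M,
                Set.indicator {ω' : Ω | (i:ℝ) + 1 ≤ |X ω'|} (1 : Ω → ℝ) ω
                = if (i:ℝ) + 1 ≤ |X ω| then (1:ℝ) else 0 := by
              intro i _
              by_cases hmem : (i:ℝ) + 1 ≤ |X ω|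
              · have hm : ω ∈ {ω' : Ω | (i:ℝ) + 1 ≤ |X ω'|} := hmem
                rw [Set.indicator_of_mem hm, if_pos hmem, Pi.one_apply]
              · have hm : ω ∉ {ω' : Ω | (i:ℝ) + 1 ≤ |X ω'|} := hmem
                rw [Set.indicator_of_notMem hm, if_neg hmem]
            rw [Finset.sum_congr rfl heq, ← Finset.sum_filter]
            rw [Finset.sum_const, nsmul_eq_mul, mul_one]
            have hsubf : (Finset.Icc n M).filter (fun i : ℕ => (i:ℝ) + 1 ≤ |X ω|)
                ⊆ Finset.Icc n (⌊|X ω|⌋₊ - 1) := by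
              intro i hi
              rw [Finset.mem_filter, Finset.mem_Icc] at hi
              rw [Finset.mem_Icc]
              have hcast : (((i+1):ℕ):ℝ) ≤ |X ω| := by push_cast; linarith [hi.2]
              have hfl := Nat.le_floor hcast
              omega
            have hcard1 := Finset.card_le_card hsubf
            have hcard2 : (Finset.Icc n (⌊|X ω|⌋₊ - 1)).card ≤ ⌊|X ω|⌋₊ := by
              rw [Nat.card_Icc]; omega
            calc ((Finset.filter (fun i : ℕ => (i:ℝ) + 1 ≤ |X ω|) (Finset.Icc n M)).card : ℝ)
                ≤ (⌊|X ω|⌋₊ : ℝ) := by exact_mod_cast le_trans hcard1 hcard2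
              _ ≤ |X ω| := Nat.floor_le hx0
          · have hmemt : ω ∉ {ω' : Ω | t ≤ |X ω'|} := hωt
            rw [Set.indicator_of_notMem hmemt]
            have hzero : ∀ i ∈ Finset.Icc n M,
                Set.indicator {ω' : Ω | (i:ℝ) + 1 ≤ |X ω'|} (1 : Ω → ℝ) ω = 0 := by
              intro i hi
              rw [Finset.mem_Icc] at hi
              apply Set.indicator_of_notMem
              intro hmem
              have hmem' : (i:ℝ) + 1 ≤ |X ω| := hmem
              have hi1 : (N:ℝ) ≤ (i:ℝ) := by exact_mod_cast le_trans hn hi.1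
              rw [not_le] at hωt
              linarith
            rw [Finset.sum_congr rfl hzero, Finset.sum_const_zero]
      _ = ∫ ω in {ω' | t ≤ |X ω'|}, |X ω| ∂μ := integral_indicator hstm
      _ ≤ 1 - α := htail
  -- independence: complements multiply
  have hprod : ∀ n M : ℕ, μ (⋂ i ∈ Finset.Icc n M, (F i)ᶜ)
      = ∏ i ∈ Finset.Icc n M, μ ((F i)ᶜ) := by
    intro n M
    apply hindep.meas_biInter
    intro i _
    refine MeasurableSpace.measurableSet_comap.2 ⟨{y : ℝ | (i:ℝ) + 1 ≤ |y|}ᶜ, (hXsetmeas _).compl, ?_⟩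
    rfl
  have hcomplμ : ∀ i, μ ((F i)ᶜ) = ENNReal.ofReal (1 - q (i+1)) := by
    intro i
    rw [prob_compl_eq_one_sub (hFmeas i), hFq i,
      ENNReal.ofReal_sub 1 (hq0 (i+1)), ENNReal.ofReal_one]
  -- lower bound for union of deviation events
  have hA : ∀ n M : ℕ, N ≤ n →
      ENNReal.ofReal (α * ∑ i ∈ Finset.Icc n M, q (i+1)) ≤ μ (⋃ i ∈ Finset.Icc n M, F i) := by
    intro n M hn
    have hU : (⋃ i ∈ Finset.Icc n M, F i) = (⋂ i ∈ Finset.Icc n M, (F i)ᶜ)ᶜ := by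
      simp [Set.compl_iInter]
    have hImeas : MeasurableSet (⋂ i ∈ Finset.Icc n M, (F i)ᶜ) :=
      Finset.measurableSet_biInter _ (fun i _ => (hFmeas i).compl)
    rw [hU, prob_compl_eq_one_sub hImeas, hprod n M]
    have hPv : ∏ i ∈ Finset.Icc n M, μ ((F i)ᶜ)
        = ENNReal.ofReal (∏ i ∈ Finset.Icc n M, (1 - q (i+1))) := by
      rw [ENNReal.ofReal_prod_of_nonneg (fun i _ => by linarith [hq1 (i+1)])]
      exact Finset.prod_congr rfl fun i _ => hcomplμ i
    rw [hPv]
    have hbon := aux_bonf (Finset.Icc n M) (fun i => q (i+1)) α hα0 hα1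
      (fun i _ => hq0 _) (fun i _ => hq1 _) (htsum n M hn)
    apply ENNReal.le_sub_of_add_le_right ENNReal.ofReal_ne_top
    rw [← ENNReal.ofReal_add
      (mul_nonneg hα0.le (Finset.sum_nonneg fun i _ => hq0 _))
      (Finset.prod_nonneg fun i _ => by linarith [hq1 (i+1)])]
    calc ENNReal.ofReal (α * ∑ i ∈ Finset.Icc n M, q (i+1)
          + ∏ i ∈ Finset.Icc n M, (1 - q (i+1))) ≤ ENNReal.ofReal 1 :=
        ENNReal.ofReal_le_ofReal hbon
      _ = 1 := ENNReal.ofReal_one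
  -- reindexing
  have hre : ∀ m K : ℕ, 1 ≤ m →
      ∑ i ∈ Finset.Icc m (K-1), q (i+1) = ∑ k ∈ Finset.Icc (m+1) K, q k := by
    intro m K hm
    rcases K with _ | K'
    · rw [Finset.Icc_eq_empty (by omega), Finset.Icc_eq_empty (by omega), Finset.sum_empty,
        Finset.sum_empty]
    · have h1 : Finset.Icc (m+1) (K'+1) = (Finset.Icc m K').map (addRightEmbedding 1) := by
        rw [Finset.map_add_right_Icc]
      rw [h1, Finset.sum_map]
      simp only [addRightEmbedding_apply, Nat.add_sub_cancel]
  set I := ∫⁻ ω, evalG G (lastDev Xs (1/2) ω) ∂μ with hI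
  -- the key inequality
  have hkey : ∀ K : ℕ, ENNReal.ofReal α *
      ENNReal.ofReal (∑ k ∈ Finset.Icc (N+1) K, q k * G ((k-1:ℕ):ℝ)) ≤ I := by
    intro K
    set A : ℕ → Set Ω := fun m => ⋃ i ∈ Finset.Icc m (K-1), F i with hAdef
    have hAmeas : ∀ m, MeasurableSet (A m) :=
      fun m => Finset.measurableSet_biUnion _ (fun i _ => hFmeas i)
    have hAle : ∀ m, 1 ≤ m → ∀ ω, ω ∈ A m → ((m:ℕ) : ℕ∞) ≤ lastDev Xs (1/2) ω := by
      intro m hm ω hω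
      obtain ⟨i, hi, hωi⟩ := Set.mem_iUnion₂.1 hω
      rw [Finset.mem_Icc] at hi
      have h1 := aux_lastDev_ge Xs ω i (le_trans hm hi.1) hωi
      exact le_trans (by exact_mod_cast hi.1) h1
    have hpt : ∀ ω, (∑ n ∈ Finset.range K,
        ENNReal.ofReal (wG G n) * (A (max n N)).indicator (1 : Ω → ℝ≥0∞) ω)
        ≤ evalG G (lastDev Xs (1/2) ω) := by
      intro ω
      have heq : ∀ n ∈ Finset.range K,
          ENNReal.ofReal (wG G n) * (A (max n N)).indicator (1 : Ω → ℝ≥0∞) ω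
          = if ω ∈ A (max n N) then ENNReal.ofReal (wG G n) else 0 := by
        intro n _
        by_cases hmem : ω ∈ A (max n N)
        · rw [Set.indicator_of_mem hmem, if_pos hmem, Pi.one_apply, mul_one]
        · rw [Set.indicator_of_notMem hmem, if_neg hmem, mul_zero]
      rw [Finset.sum_congr rfl heq]
      apply aux_le_evalG G hGpos hGmono K N (lastDev Xs (1/2) ω) (fun n => ω ∈ A (max n N))
      intro n hbn
      exact hAle (max n N) (le_trans hN1 (le_max_right n N)) ω hbn
    have hintK : ∫⁻ ω, (∑ n ∈ Finset.range K,
        ENNReal.ofReal (wG G n) * (A (max n N)).indicator (1 : Ω → ℝ≥0∞) ω) ∂μ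
        = ∑ n ∈ Finset.range K, ENNReal.ofReal (wG G n) * μ (A (max n N)) := by
      rw [lintegral_finset_sum _ (fun n _ => (measurable_one.indicator (hAmeas _)).const_mul _)]
      apply Finset.sum_congr rfl
      intro n _
      rw [lintegral_const_mul _ (measurable_one.indicator (hAmeas _)),
        lintegral_indicator_one (hAmeas _)]
    calc ENNReal.ofReal α * ENNReal.ofReal (∑ k ∈ Finset.Icc (N+1) K, q k * G ((k-1:ℕ):ℝ))
        = ∑ n ∈ Finset.range K, ENNReal.ofReal α *
            ENNReal.ofReal (wG G n * ∑ k ∈ Finset.Icc (max n N + 1) K, q k) := by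
          rw [← aux_rswap G q N K, ENNReal.ofReal_sum_of_nonneg
            (fun n _ => mul_nonneg (aux_wG_nonneg G hGpos hGmono n)
              (Finset.sum_nonneg fun k _ => hq0 k)), Finset.mul_sum]
      _ ≤ ∑ n ∈ Finset.range K, ENNReal.ofReal (wG G n) * μ (A (max n N)) := by
          apply Finset.sum_le_sum
          intro n _
          have h1 : ENNReal.ofReal α *
              ENNReal.ofReal (wG G n * ∑ k ∈ Finset.Icc (max n N + 1) K, q k)
              = ENNReal.ofReal (wG G n) *
                ENNReal.ofReal (α * ∑ i ∈ Finset.Icc (max n N) (K-1), q (i+1)) := by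
            rw [hre (max n N) K (le_trans hN1 (le_max_right n N))]
            rw [← ENNReal.ofReal_mul hα0.le,
              ← ENNReal.ofReal_mul (aux_wG_nonneg G hGpos hGmono n)]
            congr 1
            ring
          rw [h1]
          exact mul_le_mul_right (hA (max n N) (K-1) (le_max_right n N)) _
      _ = ∫⁻ ω, (∑ n ∈ Finset.range K,
            ENNReal.ofReal (wG G n) * (A (max n N)).indicator (1 : Ω → ℝ≥0∞) ω) ∂μ :=
          hintK.symm
      _ ≤ I := lintegral_mono hpt
  -- per-K tail bound
  have hDmK : ∀ K : ℕ, MeasurableSet {ω' : Ω | 4*t ≤ |X ω'| ∧ |X ω'| ≤ (K:ℝ)} := by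
    intro K
    rw [Set.setOf_and]
    exact (measurableSet_le measurable_const hX.abs).inter
      (measurableSet_le hX.abs measurable_const)
  have hDK : ∀ K : ℕ, (∫⁻ ω, Set.indicator {ω' : Ω | 4*t ≤ |X ω'| ∧ |X ω'| ≤ (K:ℝ)}
      (fun ω' => ENNReal.ofReal (|X ω'| * G |X ω'|)) ω ∂μ)
      ≤ ENNReal.ofReal (4*c^2) * (ENNReal.ofReal α⁻¹ * I) := by
    intro K
    have hptD : ∀ ω, Set.indicator {ω' : Ω | 4*t ≤ |X ω'| ∧ |X ω'| ≤ (K:ℝ)}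
        (fun ω' => ENNReal.ofReal (|X ω'| * G |X ω'|)) ω
        ≤ ENNReal.ofReal (4*c^2) * ∑ k ∈ Finset.Icc (N+1) K,
            ENNReal.ofReal (G ((k-1:ℕ):ℝ)) *
              Set.indicator {ω' : Ω | (k:ℝ) ≤ |X ω'|} (1 : Ω → ℝ≥0∞) ω := by
      intro ω
      rw [Set.indicator_apply]
      split_ifs with hω
      · obtain ⟨h1, h2⟩ := hω
        have hcore := aux_core_tail G hGpos hGmono c hc t ht |X ω| h1 K h2
        rw [← hNdef] at hcore
        calc ENNReal.ofReal (|X ω| * G |X ω|)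
            ≤ ENNReal.ofReal (4*c^2 * ∑ k ∈ Finset.Icc (N+1) K,
                (if (k:ℝ) ≤ |X ω| then G ((k-1:ℕ):ℝ) else 0)) :=
              ENNReal.ofReal_le_ofReal hcore
          _ = ENNReal.ofReal (4*c^2) * ENNReal.ofReal (∑ k ∈ Finset.Icc (N+1) K,
                (if (k:ℝ) ≤ |X ω| then G ((k-1:ℕ):ℝ) else 0)) :=
              ENNReal.ofReal_mul (by positivity)
          _ = ENNReal.ofReal (4*c^2) * ∑ k ∈ Finset.Icc (N+1) K,
                ENNReal.ofReal (if (k:ℝ) ≤ |X ω| then G ((k-1:ℕ):ℝ) else 0) := by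
              rw [ENNReal.ofReal_sum_of_nonneg]
              intro k _
              split
              · exact (hGpos _ (by positivity)).le
              · exact le_rfl
          _ = ENNReal.ofReal (4*c^2) * ∑ k ∈ Finset.Icc (N+1) K,
                ENNReal.ofReal (G ((k-1:ℕ):ℝ)) *
                  Set.indicator {ω' : Ω | (k:ℝ) ≤ |X ω'|} (1 : Ω → ℝ≥0∞) ω := by
              congr 1
              apply Finset.sum_congr rfl
              intro k _
              by_cases hk : (k:ℝ) ≤ |X ω|
              · have hmemk : ω ∈ {ω' : Ω | (k:ℝ) ≤ |X ω'|} := hk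
                rw [if_pos hk, Set.indicator_of_mem hmemk, Pi.one_apply, mul_one]
              · have hmemk : ω ∉ {ω' : Ω | (k:ℝ) ≤ |X ω'|} := hk
                rw [if_neg hk, Set.indicator_of_notMem hmemk, mul_zero, ENNReal.ofReal_zero]
      · exact zero_le
    have hsm : ∀ k : ℕ, MeasurableSet {ω' : Ω | (k:ℝ) ≤ |X ω'|} :=
      fun k => measurableSet_le measurable_const hX.abs
    calc (∫⁻ ω, Set.indicator {ω' : Ω | 4*t ≤ |X ω'| ∧ |X ω'| ≤ (K:ℝ)}
          (fun ω' => ENNReal.ofReal (|X ω'| * G |X ω'|)) ω ∂μ)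
        ≤ ∫⁻ ω, ENNReal.ofReal (4*c^2) * ∑ k ∈ Finset.Icc (N+1) K,
            ENNReal.ofReal (G ((k-1:ℕ):ℝ)) *
              Set.indicator {ω' : Ω | (k:ℝ) ≤ |X ω'|} (1 : Ω → ℝ≥0∞) ω ∂μ :=
          lintegral_mono hptD
      _ = ENNReal.ofReal (4*c^2) * ∑ k ∈ Finset.Icc (N+1) K,
            ENNReal.ofReal (G ((k-1:ℕ):ℝ)) * μ {ω' : Ω | (k:ℝ) ≤ |X ω'|} := by
          rw [lintegral_const_mul _ (Finset.measurable_sum _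
            (fun k _ => (measurable_one.indicator (hsm k)).const_mul _))]
          congr 1
          rw [lintegral_finset_sum _
            (fun k _ => (measurable_one.indicator (hsm k)).const_mul _)]
          apply Finset.sum_congr rfl
          intro k _
          rw [lintegral_const_mul _ (measurable_one.indicator (hsm k)),
            lintegral_indicator_one (hsm k)]
      _ = ENNReal.ofReal (4*c^2) *
            ENNReal.ofReal (∑ k ∈ Finset.Icc (N+1) K, q k * G ((k-1:ℕ):ℝ)) := by
          congr 1
          rw [ENNReal.ofReal_sum_of_nonneg (fun k _ =>
            mul_nonneg (hq0 k) (hGpos _ (Nat.cast_nonneg _)).le)]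
          apply Finset.sum_congr rfl
          intro k _
          rw [← hofq k, ← ENNReal.ofReal_mul (hGpos _ (Nat.cast_nonneg _)).le]
          congr 1
          ring
      _ ≤ ENNReal.ofReal (4*c^2) * (ENNReal.ofReal α⁻¹ * I) := by
          apply mul_le_mul_right
          have h2 := hkey K
          calc ENNReal.ofReal (∑ k ∈ Finset.Icc (N+1) K, q k * G ((k-1:ℕ):ℝ))
              = ENNReal.ofReal α⁻¹ * (ENNReal.ofReal α *
                  ENNReal.ofReal (∑ k ∈ Finset.Icc (N+1) K, q k * G ((k-1:ℕ):ℝ))) := by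
                rw [← mul_assoc, ← ENNReal.ofReal_mul (inv_nonneg.2 hα0.le),
                  inv_mul_cancel₀ (ne_of_gt hα0), ENNReal.ofReal_one, one_mul]
            _ ≤ ENNReal.ofReal α⁻¹ * I := mul_le_mul_right h2 _
  -- measurability of the integrand
  set s4 : Set Ω := {ω' : Ω | 4*t ≤ |X ω'|} with hs4
  have hs4m : MeasurableSet s4 := measurableSet_le measurable_const hX.abs
  set f : Ω → ℝ≥0∞ := fun ω => ENNReal.ofReal (|X ω| * G |X ω|) with hfdef
  have hGmax : Monotone (fun y : ℝ => G (max 0 y)) := fun a b hab =>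
    hGmono (Set.mem_Ici.2 (le_max_left 0 a)) (Set.mem_Ici.2 (le_max_left 0 b))
      (max_le_max le_rfl hab)
  have hfmeas : Measurable f := by
    have hfeq : f = fun ω => ENNReal.ofReal (|X ω| * G (max 0 |X ω|)) := by
      funext ω
      rw [max_eq_right (abs_nonneg (X ω))]
    rw [hfeq]
    exact ENNReal.measurable_ofReal.comp ((hX.abs).mul (hGmax.measurable.comp hX.abs))
  -- monotone convergence for the tail
  have hmonoD : Monotone (fun K : ℕ =>
      Set.indicator {ω' : Ω | 4*t ≤ |X ω'| ∧ |X ω'| ≤ (K:ℝ)} f) := by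
    intro K1 K2 h12
    apply Set.indicator_le_indicator_of_subset
    · intro ω hω
      exact ⟨hω.1, le_trans hω.2 (by exact_mod_cast h12)⟩
    · intro ω; exact zero_le
  have hsupD : ∀ ω, (⨆ K : ℕ,
      Set.indicator {ω' : Ω | 4*t ≤ |X ω'| ∧ |X ω'| ≤ (K:ℝ)} f ω) = Set.indicator s4 f ω := by
    intro ω
    apply le_antisymm
    · apply iSup_le
      intro K
      by_cases hω : ω ∈ {ω' : Ω | 4*t ≤ |X ω'| ∧ |X ω'| ≤ (K:ℝ)}
      · rw [Set.indicator_of_mem hω, Set.indicator_of_mem (show ω ∈ s4 from hω.1)]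
      · rw [Set.indicator_of_notMem hω]; exact zero_le
    · by_cases hω : ω ∈ s4
      · rw [Set.indicator_of_mem hω]
        refine le_iSup_of_le ⌈|X ω|⌉₊ ?_
        rw [Set.indicator_of_mem (Set.mem_setOf.2 ⟨hω, Nat.le_ceil _⟩)]
      · rw [Set.indicator_of_notMem hω]; exact zero_le
  have htailbound : ∫⁻ ω, Set.indicator s4 f ω ∂μ
      ≤ ENNReal.ofReal (4*c^2) * (ENNReal.ofReal α⁻¹ * I) := by
    have hMCT := lintegral_iSup (μ := μ)
      (fun K : ℕ => hfmeas.indicator (hDmK K)) hmonoD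
    calc ∫⁻ ω, Set.indicator s4 f ω ∂μ
        = ∫⁻ ω, ⨆ K : ℕ, Set.indicator {ω' : Ω | 4*t ≤ |X ω'| ∧ |X ω'| ≤ (K:ℝ)} f ω ∂μ := by
          apply lintegral_congr
          intro ω
          rw [hsupD ω]
      _ = ⨆ K : ℕ, ∫⁻ ω, Set.indicator {ω' : Ω | 4*t ≤ |X ω'| ∧ |X ω'| ≤ (K:ℝ)} f ω ∂μ := hMCT
      _ ≤ _ := iSup_le (fun K => hDK K)
  -- head bound
  have hhead : ∫⁻ ω, Set.indicator s4ᶜ f ω ∂μ ≤ ENNReal.ofReal (4*c^2 * (t * G t)) := by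
    have hpt : ∀ ω, Set.indicator s4ᶜ f ω ≤ ENNReal.ofReal (4*c^2 * (t * G t)) := by
      intro ω
      by_cases hω : ω ∈ s4ᶜ
      · rw [Set.indicator_of_mem hω]
        apply ENNReal.ofReal_le_ofReal
        have hlt : |X ω| < 4*t := by
          have := hω
          rw [Set.mem_compl_iff, hs4, Set.mem_setOf, not_le] at this
          exact this
        have hx0 : (0:ℝ) ≤ |X ω| := abs_nonneg _
        have hm1 : G |X ω| ≤ G (4*t) :=
          hGmono (Set.mem_Ici.2 hx0) (Set.mem_Ici.2 (by linarith)) hlt.le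
        have hG4 : G (4*t) ≤ c^2 * G t := by
          have e1 := hc (2*t) (by linarith)
          have e2 := hc t (by linarith)
          have h1 : 2*(2*t) = 4*t := by ring
          rw [h1] at e1
          nlinarith [hGpos t (by linarith : t ≥ (0:ℝ))]
        have hGt0 := hGpos t (by linarith : t ≥ (0:ℝ))
        have hGx0 := hGpos _ (by positivity : |X ω| ≥ (0:ℝ))
        nlinarith
      · rw [Set.indicator_of_notMem hω]; exact zero_le
    calc ∫⁻ ω, Set.indicator s4ᶜ f ω ∂μ
        ≤ ∫⁻ _, ENNReal.ofReal (4*c^2 * (t * G t)) ∂μ := lintegral_mono hpt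
      _ = ENNReal.ofReal (4*c^2 * (t * G t)) := by
          rw [lintegral_const, measure_univ, mul_one]
  -- conclusion
  calc ∫⁻ ω, ENNReal.ofReal (|X ω| * G |X ω|) ∂μ
      = ∫⁻ ω, (Set.indicator s4ᶜ f ω + Set.indicator s4 f ω) ∂μ := by
        apply lintegral_congr
        intro ω
        by_cases hω : ω ∈ s4
        · rw [Set.indicator_of_mem hω, Set.indicator_of_notMem (by simpa using hω), zero_add]
        · rw [Set.indicator_of_notMem hω, Set.indicator_of_mem (by simpa using hω), add_zero]
    _ = (∫⁻ ω, Set.indicator s4ᶜ f ω ∂μ) + ∫⁻ ω, Set.indicator s4 f ω ∂μ :=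
        lintegral_add_left (hfmeas.indicator hs4m.compl) _
    _ ≤ ENNReal.ofReal (4*c^2 * (t * G t)) +
        ENNReal.ofReal (4*c^2) * (ENNReal.ofReal α⁻¹ * I) := add_le_add hhead htailbound
    _ = ENNReal.ofReal (4 * c ^ 2) * (ENNReal.ofReal (t * G t) +
        ENNReal.ofReal α⁻¹ * I) := by
        rw [mul_add, ← ENNReal.ofReal_mul (by positivity : (0:ℝ) ≤ 4*c^2)]
end

section
/- Let G be a moderate function. Then there exists an integer p ≥ 1 such that Σ_{n≥1} G(n)·n^{-(p+1)} < ∞, and there exists a constant c > 0 such that the function H := c·G satisfies H(n) ≥ n^p · Σ_{k≥n} G(k)·k^{-(p+1)} for every n ≥ 1. -/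
open MeasureTheory ProbabilityTheory ENNReal

theorem stmt7 (G : ℝ → ℝ) (hG : Moderate G) :
    ∃ p : ℕ, 1 ≤ p ∧
      (∑' n : {n : ℕ // 1 ≤ n},
        ENNReal.ofReal (G (n : ℕ)) / ((n : ℕ) : ℝ≥0∞) ^ (p + 1) < ⊤) ∧
      ∃ c : ℝ, 0 < c ∧ ∀ n : ℕ, 1 ≤ n →
        (n : ℝ≥0∞) ^ p *
          ∑' k : {k : ℕ // n ≤ k}, ENNReal.ofReal (G (k : ℕ)) / ((k : ℕ) : ℝ≥0∞) ^ (p + 1)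
        ≤ ENNReal.ofReal (c * G n) := by
  obtain ⟨hpos, hmono, -, c₀, hdb⟩ := hG
  have hG0 : 0 < G 0 := hpos 0 le_rfl
  have hc₀1 : 1 ≤ c₀ := by
    have h := hdb 0 le_rfl
    norm_num at h
    nlinarith
  have hc₀0 : 0 < c₀ := lt_of_lt_of_le one_pos hc₀1
  obtain ⟨p₀, hp₀⟩ := pow_unbounded_of_one_lt c₀ (one_lt_two : (1:ℝ) < 2)
  set p := max p₀ 1 with hp
  have hp1 : 1 ≤ p := le_max_right _ _
  have hcp : c₀ < 2 ^ p :=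
    lt_of_lt_of_le hp₀ (pow_le_pow_right₀ one_le_two (le_max_left _ _))
  set ρ : ℝ := c₀ / 2 ^ p with hρ
  have hρ0 : 0 ≤ ρ := div_nonneg hc₀0.le (by positivity)
  have hρ1 : ρ < 1 := (div_lt_one (by positivity)).2 hcp
  have h1ρ : 0 < 1 - ρ := by linarith
  have hGnn : ∀ k : ℕ, 0 ≤ G k := fun k => (hpos k (Nat.cast_nonneg k)).le
  -- iterated doubling
  have hiter : ∀ m : ℕ, ∀ t : ℝ, 0 ≤ t → G (2 ^ m * t) ≤ c₀ ^ m * G t := by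
    intro m
    induction m with
    | zero => intro t ht; simp
    | succ m ih =>
      intro t ht
      have h1 : (2:ℝ) ^ (m+1) * t = 2 * (2 ^ m * t) := by ring
      rw [h1]
      calc G (2 * (2 ^ m * t)) ≤ c₀ * G (2 ^ m * t) := hdb _ (by positivity)
        _ ≤ c₀ * (c₀ ^ m * G t) := mul_le_mul_of_nonneg_left (ih t ht) hc₀0.le
        _ = c₀ ^ (m+1) * G t := by ring
  -- block bound
  have hblock : ∀ n : ℕ, 1 ≤ n → ∀ j : ℕ,
      (∑ k ∈ Finset.Ico (2 ^ j * n) (2 ^ (j+1) * n),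
        ENNReal.ofReal (G k) / (k : ℝ≥0∞) ^ (p + 1))
        ≤ ENNReal.ofReal (c₀ * G n / (n : ℝ) ^ p * ρ ^ j) := by
    intro n hn j
    have hn0 : 0 < n := hn
    have hnR : (0:ℝ) < n := by exact_mod_cast hn0
    set m := 2 ^ j * n with hm
    have hm0 : 0 < m := by positivity
    have hmR : (0:ℝ) < m := by exact_mod_cast hm0
    have hmE0 : ((m : ℝ≥0∞)) ≠ 0 := by exact_mod_cast hm0.ne'
    have hmEt : ((m : ℝ≥0∞)) ≠ ⊤ := ENNReal.natCast_ne_top m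
    have hterm : ∀ k ∈ Finset.Ico m (2 ^ (j+1) * n),
        ENNReal.ofReal (G k) / (k : ℝ≥0∞) ^ (p + 1)
          ≤ ENNReal.ofReal (c₀ ^ (j+1) * G n) / (m : ℝ≥0∞) ^ (p + 1) := by
      intro k hk
      obtain ⟨hk1, hk2⟩ := Finset.mem_Ico.1 hk
      have hknum : G k ≤ c₀ ^ (j+1) * G n := by
        have h1 : G (k:ℝ) ≤ G ((2 ^ (j+1) * n : ℕ) : ℝ) :=
          hmono (Set.mem_Ici.2 (Nat.cast_nonneg k)) (Set.mem_Ici.2 (Nat.cast_nonneg _))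
            (Nat.cast_le.2 hk2.le)
        have h2 : ((2 ^ (j+1) * n : ℕ) : ℝ) = 2 ^ (j+1) * (n:ℝ) := by push_cast; ring
        rw [h2] at h1
        exact h1.trans (hiter (j+1) n (Nat.cast_nonneg n))
      have hden : ((m : ℝ≥0∞)) ^ (p+1) ≤ ((k : ℝ≥0∞)) ^ (p+1) :=
        pow_le_pow_left₀ (by positivity) (by exact_mod_cast hk1) _
      exact ENNReal.div_le_div (ENNReal.ofReal_le_ofReal hknum) hden
    calc (∑ k ∈ Finset.Ico (2 ^ j * n) (2 ^ (j+1) * n),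
            ENNReal.ofReal (G k) / (k : ℝ≥0∞) ^ (p + 1))
        ≤ (Finset.Ico m (2 ^ (j+1) * n)).card •
            (ENNReal.ofReal (c₀ ^ (j+1) * G n) / (m : ℝ≥0∞) ^ (p + 1)) :=
          Finset.sum_le_card_nsmul _ _ _ hterm
      _ = (m : ℝ≥0∞) * (ENNReal.ofReal (c₀ ^ (j+1) * G n) / (m : ℝ≥0∞) ^ (p + 1)) := by
          have h2m : 2 ^ (j+1) * n = 2 * m := by rw [hm, pow_succ]; ring
          rw [Nat.card_Ico, h2m, Nat.two_mul, Nat.add_sub_cancel, nsmul_eq_mul]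
      _ = ENNReal.ofReal (c₀ ^ (j+1) * G n) / (m : ℝ≥0∞) ^ p := by
          rw [show ((m : ℝ≥0∞)) ^ (p+1) = (m : ℝ≥0∞) * (m : ℝ≥0∞) ^ p by
            rw [pow_succ]; ring]
          rw [← mul_div_assoc, ENNReal.mul_div_mul_left _ _ hmE0 hmEt]
      _ = ENNReal.ofReal (c₀ ^ (j+1) * G n / (m : ℝ) ^ p) := by
          rw [ENNReal.ofReal_div_of_pos (by positivity), ENNReal.ofReal_pow (Nat.cast_nonneg m),
            ENNReal.ofReal_natCast]
      _ = ENNReal.ofReal (c₀ * G n / (n : ℝ) ^ p * ρ ^ j) := by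
          congr 1
          have hmcast : ((m : ℕ) : ℝ) = 2 ^ j * (n:ℝ) := by rw [hm]; push_cast; ring
          rw [hmcast, hρ, mul_pow, div_pow, pow_right_comm]
          field_simp
          ring
  -- splitting into blocks
  have hsplit : ∀ n : ℕ, 1 ≤ n → ∀ M : ℕ,
      (∑ k ∈ Finset.Ico n (2 ^ M * n), ENNReal.ofReal (G k) / (k : ℝ≥0∞) ^ (p + 1))
        = ∑ j ∈ Finset.range M, ∑ k ∈ Finset.Ico (2 ^ j * n) (2 ^ (j+1) * n),
            ENNReal.ofReal (G k) / (k : ℝ≥0∞) ^ (p + 1) := by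
    intro n hn M
    induction M with
    | zero => simp
    | succ M ih =>
      rw [Finset.sum_range_succ, ← ih,
        Finset.sum_Ico_consecutive _ (Nat.le_mul_of_pos_left n (Nat.two_pow_pos M))
          (Nat.mul_le_mul_right n (Nat.pow_le_pow_right (by norm_num) (Nat.le_succ M)))]
  -- tail is at most sum of blocks
  have hcover : ∀ n : ℕ, 1 ≤ n →
      (∑' k : {k : ℕ // n ≤ k}, ENNReal.ofReal (G (k:ℕ)) / ((k:ℕ) : ℝ≥0∞) ^ (p + 1))
        ≤ ∑' j : ℕ, ∑ k ∈ Finset.Ico (2 ^ j * n) (2 ^ (j+1) * n),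
            ENNReal.ofReal (G k) / (k : ℝ≥0∞) ^ (p + 1) := by
    intro n hn
    have e0 : (∑' k : {k : ℕ // n ≤ k}, ENNReal.ofReal (G (k:ℕ)) / ((k:ℕ) : ℝ≥0∞) ^ (p + 1))
        = ∑' x : ↥{k : ℕ | n ≤ k}, ENNReal.ofReal (G (x:ℕ)) / ((x:ℕ) : ℝ≥0∞) ^ (p + 1) := rfl
    rw [e0, tsum_subtype {k : ℕ | n ≤ k}
      (fun k => ENNReal.ofReal (G k) / (k : ℝ≥0∞) ^ (p + 1)), ENNReal.tsum_eq_iSup_nat]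
    apply iSup_le
    intro N
    have hsub : Finset.range N ⊆ Finset.range (2 ^ N * n) := by
      apply Finset.range_subset_range.2
      calc N ≤ 2 ^ N := Nat.le_of_lt Nat.lt_two_pow_self
        _ ≤ 2 ^ N * n := Nat.le_mul_of_pos_right _ hn
    calc (∑ k ∈ Finset.range N,
            {k : ℕ | n ≤ k}.indicator (fun k => ENNReal.ofReal (G k) / (k : ℝ≥0∞) ^ (p + 1)) k)
        ≤ ∑ k ∈ Finset.range (2 ^ N * n),
            {k : ℕ | n ≤ k}.indicator (fun k => ENNReal.ofReal (G k) / (k : ℝ≥0∞) ^ (p + 1)) k :=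
          Finset.sum_le_sum_of_subset hsub
      _ = ∑ k ∈ Finset.Ico n (2 ^ N * n), ENNReal.ofReal (G k) / (k : ℝ≥0∞) ^ (p + 1) := by
          rw [Finset.range_eq_Ico,
            ← Finset.sum_Ico_consecutive _ (Nat.zero_le n) (Nat.le_mul_of_pos_left n (Nat.two_pow_pos N))]
          have e1 : (∑ k ∈ Finset.Ico 0 n,
              {k : ℕ | n ≤ k}.indicator (fun k => ENNReal.ofReal (G k) / (k : ℝ≥0∞) ^ (p + 1)) k) = 0 :=
            Finset.sum_eq_zero fun k hk => Set.indicator_of_notMem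
              (by simp only [Set.mem_setOf_eq]; simp only [Finset.mem_Ico] at hk; omega) _
          have e2 : (∑ k ∈ Finset.Ico n (2 ^ N * n),
              {k : ℕ | n ≤ k}.indicator (fun k => ENNReal.ofReal (G k) / (k : ℝ≥0∞) ^ (p + 1)) k)
              = ∑ k ∈ Finset.Ico n (2 ^ N * n), ENNReal.ofReal (G k) / (k : ℝ≥0∞) ^ (p + 1) :=
            Finset.sum_congr rfl fun k hk => Set.indicator_of_mem
              (by simp only [Set.mem_setOf_eq]; exact (Finset.mem_Ico.1 hk).1) _
          rw [e1, e2, zero_add]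
      _ = ∑ j ∈ Finset.range N, ∑ k ∈ Finset.Ico (2 ^ j * n) (2 ^ (j+1) * n),
            ENNReal.ofReal (G k) / (k : ℝ≥0∞) ^ (p + 1) := hsplit n hn N
      _ ≤ ∑' j : ℕ, ∑ k ∈ Finset.Ico (2 ^ j * n) (2 ^ (j+1) * n),
            ENNReal.ofReal (G k) / (k : ℝ≥0∞) ^ (p + 1) := ENNReal.sum_le_tsum _
  -- key tail estimate
  have key : ∀ n : ℕ, 1 ≤ n →
      (∑' k : {k : ℕ // n ≤ k}, ENNReal.ofReal (G (k:ℕ)) / ((k:ℕ) : ℝ≥0∞) ^ (p + 1))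
        ≤ ENNReal.ofReal (c₀ * G n / (n : ℝ) ^ p * (1 - ρ)⁻¹) := by
    intro n hn
    have hA : 0 ≤ c₀ * G n / (n : ℝ) ^ p := by
      have := hGnn n
      positivity
    calc (∑' k : {k : ℕ // n ≤ k}, ENNReal.ofReal (G (k:ℕ)) / ((k:ℕ) : ℝ≥0∞) ^ (p + 1))
        ≤ ∑' j : ℕ, ∑ k ∈ Finset.Ico (2 ^ j * n) (2 ^ (j+1) * n),
            ENNReal.ofReal (G k) / (k : ℝ≥0∞) ^ (p + 1) := hcover n hn
      _ ≤ ∑' j : ℕ, ENNReal.ofReal (c₀ * G n / (n : ℝ) ^ p * ρ ^ j) :=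
          ENNReal.tsum_le_tsum (hblock n hn)
      _ = ENNReal.ofReal (c₀ * G n / (n : ℝ) ^ p * (1 - ρ)⁻¹) := by
          rw [← ENNReal.ofReal_tsum_of_nonneg (fun j => by positivity)
            ((summable_geometric_of_lt_one hρ0 hρ1).mul_left _),
            tsum_mul_left, tsum_geometric_of_lt_one hρ0 hρ1]
  refine ⟨p, hp1, ?_, ?_⟩
  · exact lt_of_le_of_lt (key 1 le_rfl) ENNReal.ofReal_lt_top
  · refine ⟨c₀ * (1 - ρ)⁻¹, mul_pos hc₀0 (inv_pos.2 h1ρ), ?_⟩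
    intro n hn
    have hnR : (0:ℝ) < n := by exact_mod_cast hn
    calc (n : ℝ≥0∞) ^ p *
          ∑' k : {k : ℕ // n ≤ k}, ENNReal.ofReal (G (k:ℕ)) / ((k:ℕ) : ℝ≥0∞) ^ (p + 1)
        ≤ (n : ℝ≥0∞) ^ p * ENNReal.ofReal (c₀ * G n / (n : ℝ) ^ p * (1 - ρ)⁻¹) :=
          mul_le_mul_right (key n hn) _
      _ = ENNReal.ofReal ((n : ℝ) ^ p * (c₀ * G n / (n : ℝ) ^ p * (1 - ρ)⁻¹)) := by
          have hnp : ((n : ℕ) : ℝ≥0∞) ^ p = ENNReal.ofReal ((n:ℝ) ^ p) := by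
            rw [← ENNReal.ofReal_natCast n, ← ENNReal.ofReal_pow (Nat.cast_nonneg n)]
          rw [hnp, ← ENNReal.ofReal_mul (by positivity)]
      _ = ENNReal.ofReal (c₀ * (1 - ρ)⁻¹ * G n) := by
          congr 1
          field_simp
end

section
/- Let G : [0,∞) → (0,∞) be non-decreasing and let X and (X_n)_{n≥1} be i.i.d. symmetric random variables. Then E[G(L_1)] ≤ G(0) + 12·S(X,G,1/8), where L_1 is the last time n with |S_n/n| ≥ 1 and S(X,G,1/8) := Σ_{n≥1} n^{-1}·G(n)·P[|S_n/n| ≥ 1/8] (both sides may be +∞). -/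
open MeasureTheory ProbabilityTheory ENNReal

namespace Stmt8Aux

/-- partial sums on the finite product space -/
noncomputable def pS (N k : ℕ) (x : Fin N → ℝ) : ℝ :=
  ∑ i ∈ Finset.range k, if h : i < N then x ⟨i, h⟩ else 0

lemma measurable_pS (N k : ℕ) : Measurable (pS N k) := by
  apply Finset.measurable_sum
  intro i _
  by_cases h : i < N
  · simpa [h] using measurable_pi_apply (⟨i, h⟩ : Fin N)
  · simpa [h] using measurable_const

/-- sign reflection of coordinates `≥ j` -/
def refl (N j : ℕ) (x : Fin N → ℝ) : Fin N → ℝ := fun i => if j ≤ (i : ℕ) then -x i else x i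

lemma measurable_refl (N j : ℕ) : Measurable (refl N j) := by
  apply measurable_pi_lambda
  intro i
  by_cases h : j ≤ (i : ℕ)
  · have : (fun c : Fin N → ℝ => refl N j c i) = fun x => -x i := by
      funext x; simp only [refl, if_pos h]
    rw [this]; exact (measurable_pi_apply i).neg
  · have : (fun c : Fin N → ℝ => refl N j c i) = fun x => x i := by
      funext x; simp only [refl, if_neg h]
    rw [this]; exact measurable_pi_apply i

lemma pS_refl_of_le {N k j : ℕ} (hkj : k ≤ j) (x : Fin N → ℝ) :
    pS N k (refl N j x) = pS N k x := by
  unfold pS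
  refine Finset.sum_congr rfl fun i hi => ?_
  rw [Finset.mem_range] at hi
  by_cases h : i < N
  · simp only [dif_pos h, refl]
    rw [if_neg (by omega)]
  · simp [dif_neg h]

lemma pS_split {N j : ℕ} (hj : j ≤ N) (y : Fin N → ℝ) :
    pS N N y = pS N j y + ∑ i ∈ Finset.Ico j N, (if h : i < N then y ⟨i, h⟩ else 0) := by
  unfold pS
  have e1 : Finset.range N = Finset.Ico 0 j ∪ Finset.Ico j N := by
    rw [Finset.range_eq_Ico, Finset.Ico_union_Ico_eq_Ico (Nat.zero_le j) hj]
  have e2 : Finset.range j = Finset.Ico 0 j := Finset.range_eq_Ico j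
  rw [e1, e2, Finset.sum_union (Finset.Ico_disjoint_Ico_consecutive 0 j N)]

lemma pS_refl_self {N j : ℕ} (hj : j ≤ N) (x : Fin N → ℝ) :
    pS N N (refl N j x) = 2 * pS N j x - pS N N x := by
  have h1 := pS_split hj (refl N j x)
  have h2 := pS_split hj x
  have h3 : ∑ i ∈ Finset.Ico j N, (if h : i < N then refl N j x ⟨i, h⟩ else 0)
      = - ∑ i ∈ Finset.Ico j N, (if h : i < N then x ⟨i, h⟩ else 0) := by
    rw [← Finset.sum_neg_distrib]
    refine Finset.sum_congr rfl fun i hi => ?_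
    rw [Finset.mem_Ico] at hi
    rw [dif_pos hi.2, dif_pos hi.2]
    simp [refl, hi.1]
  have h4 := pS_refl_of_le (le_refl j) x
  rw [h4] at h1
  rw [h1, h3]
  linarith


section Measures

variable {Ω : Type*} [MeasurableSpace Ω] {μ : Measure Ω} [IsProbabilityMeasure μ]
variable {X : Ω → ℝ} {Xs : ℕ → Ω → ℝ}

lemma joint (hX : Measurable X) (hXs : ∀ n, Measurable (Xs n))
    (hindep : iIndepFun Xs μ)
    (hident : ∀ n, IdentDistrib (Xs n) X μ μ) (N : ℕ) :
    Measure.pi (fun _ : Fin N => Measure.map X μ)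
      = Measure.map (fun ω (i : Fin N) => Xs i ω) μ := by
  classical
  refine Measure.pi_eq fun s hs => ?_
  rw [Measure.map_apply (measurable_pi_lambda (fun ω (i : Fin N) => Xs i ω) (fun i => hXs i)) (MeasurableSet.univ_pi hs)]
  set sets : ℕ → Set ℝ := fun i => if h : i < N then s ⟨i, h⟩ else Set.univ with hsets
  have hpre : (fun ω (i : Fin N) => Xs i ω) ⁻¹' Set.pi Set.univ s
      = ⋂ i ∈ Finset.range N, Xs i ⁻¹' sets i := by
    ext ω
    simp only [Set.mem_preimage, Set.mem_pi, Set.mem_univ, forall_true_left, Set.mem_iInter,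
      Finset.mem_range]
    constructor
    · intro h i hi
      simp only [hsets, dif_pos hi, Set.mem_preimage]
      exact h ⟨i, hi⟩
    · intro h i
      have := h (i : ℕ) i.isLt
      simpa only [hsets, dif_pos i.isLt, Set.mem_preimage, Fin.eta] using this
  have hms : ∀ i ∈ Finset.range N, MeasurableSet (sets i) := by
    intro i hi
    rw [Finset.mem_range] at hi
    simpa only [hsets, dif_pos hi] using hs ⟨i, hi⟩
  rw [hpre, hindep.measure_inter_preimage_eq_mul (Finset.range N) hms,
    ← Fin.prod_univ_eq_prod_range (fun i => μ (Xs i ⁻¹' sets i)) N]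
  refine Finset.prod_congr rfl fun i _ => ?_
  have h1 : sets (i : ℕ) = s i := by simp only [hsets, dif_pos i.isLt, Fin.eta]
  rw [h1, ← (hident i).map_eq, Measure.map_apply (hXs i) (hs i)]

lemma refl_pres (hX : Measurable X)
    (hsymm : Measure.map X μ = Measure.map (fun ω => -X ω) μ) (N j : ℕ) :
    Measure.map (refl N j) (Measure.pi fun _ : Fin N => Measure.map X μ)
      = Measure.pi (fun _ : Fin N => Measure.map X μ) := by
  classical
  haveI : IsProbabilityMeasure (Measure.map X μ) := Measure.isProbabilityMeasure_map hX.aemeasurable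
  refine (Measure.pi_eq fun s hs => ?_).symm
  rw [Measure.map_apply (measurable_refl N j) (MeasurableSet.univ_pi hs)]
  have hpre : refl N j ⁻¹' Set.pi Set.univ s
      = Set.pi Set.univ (fun i : Fin N => if j ≤ (i : ℕ) then Neg.neg ⁻¹' s i else s i) := by
    ext x
    simp only [Set.mem_preimage, Set.mem_pi, Set.mem_univ, forall_true_left, refl]
    refine forall_congr' fun i => ?_
    by_cases h : j ≤ (i : ℕ) <;> simp [h]
  rw [hpre, Measure.pi_pi]
  refine Finset.prod_congr rfl fun i _ => ?_
  by_cases h : j ≤ (i : ℕ)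
  · rw [if_pos h, ← Measure.map_apply measurable_neg (hs i), Measure.map_map measurable_neg hX]
    have h2 : (Neg.neg ∘ X) = fun ω => -X ω := rfl
    rw [h2, ← hsymm]
  · rw [if_neg h]

lemma levy (hX : Measurable X) (hXs : ∀ n, Measurable (Xs n))
    (hindep : iIndepFun Xs μ)
    (hident : ∀ n, IdentDistrib (Xs n) X μ μ)
    (hsymm : Measure.map X μ = Measure.map (fun ω => -X ω) μ) (N : ℕ) (t : ℝ) :
    μ {ω | ∃ k, 1 ≤ k ∧ k ≤ N ∧ t ≤ |partialSum Xs k ω|}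
      ≤ 2 * μ {ω | t ≤ |partialSum Xs N ω|} := by
  classical
  set ν := Measure.pi (fun _ : Fin N => Measure.map X μ) with hν
  set Y : Ω → (Fin N → ℝ) := fun ω i => Xs i ω with hYdef
  have hYm : Measurable Y := measurable_pi_lambda _ fun i => hXs i
  have htrans : ∀ E : Set (Fin N → ℝ), MeasurableSet E → μ (Y ⁻¹' E) = ν E := by
    intro E hE
    rw [← Measure.map_apply hYm hE, ← joint hX hXs hindep hident N]
  have hps : ∀ k, k ≤ N → ∀ ω, partialSum Xs k ω = pS N k (Y ω) := by
    intro k hk ω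
    unfold partialSum pS
    refine Finset.sum_congr rfl fun i hi => ?_
    rw [Finset.mem_range] at hi
    rw [dif_pos (lt_of_lt_of_le hi hk)]
  set B : Set (Fin N → ℝ) := {x | t ≤ |pS N N x|} with hB
  have hBm : MeasurableSet B := measurableSet_le measurable_const (measurable_pS N N).abs
  set A : ℕ → Set (Fin N → ℝ) :=
    fun j => {x | t ≤ |pS N j x| ∧ ∀ i, 1 ≤ i → i < j → |pS N i x| < t} with hA
  have hAm : ∀ j, MeasurableSet (A j) := by
    intro j
    have : A j = {x | t ≤ |pS N j x|} ∩ ⋂ i, {x | 1 ≤ i → i < j → |pS N i x| < t} := by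
      ext x
      simp only [hA, Set.mem_setOf_eq, Set.mem_inter_iff, Set.mem_iInter]
    rw [this]
    refine (measurableSet_le measurable_const (measurable_pS N j).abs).inter
      (MeasurableSet.iInter fun i => ?_)
    by_cases h1 : 1 ≤ i
    · by_cases h2 : i < j
      · have : {x : Fin N → ℝ | 1 ≤ i → i < j → |pS N i x| < t} = {x | |pS N i x| < t} := by
          ext x; simp [h1, h2]
        rw [this]
        exact measurableSet_lt (measurable_pS N i).abs measurable_const
      · have : {x : Fin N → ℝ | 1 ≤ i → i < j → |pS N i x| < t} = Set.univ := by
          ext x; simp [h2]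
        rw [this]; exact MeasurableSet.univ
    · have : {x : Fin N → ℝ | 1 ≤ i → i < j → |pS N i x| < t} = Set.univ := by
        ext x; simp [h1]
      rw [this]; exact MeasurableSet.univ
  have hrefl_apply : ∀ j (E : Set (Fin N → ℝ)), MeasurableSet E → ν (refl N j ⁻¹' E) = ν E := by
    intro j E hE
    rw [← Measure.map_apply (measurable_refl N j) hE, refl_pres hX hsymm N j]
  -- the sets A j for j ∈ [1, N] cover the event
  have hsub : {x | ∃ k, 1 ≤ k ∧ k ≤ N ∧ t ≤ |pS N k x|} ⊆ ⋃ j ∈ Finset.Icc 1 N, A j := by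
    rintro x hx
    have hex : ∃ k, 1 ≤ k ∧ k ≤ N ∧ t ≤ |pS N k x| := hx
    obtain ⟨h1, h2, h3⟩ := Nat.find_spec hex
    refine Set.mem_biUnion (Finset.mem_Icc.2 ⟨h1, h2⟩) ?_
    refine ⟨h3, fun i hi1 hik => ?_⟩
    by_contra hle
    push_neg at hle
    exact Nat.find_min hex hik ⟨hi1, le_trans (le_of_lt hik) h2, hle⟩
  -- disjointness
  have hAdisj : ∀ j j', 1 ≤ j → j < j' → Disjoint (A j) (A j') := by
    intro j j' h1 h2
    rw [Set.disjoint_left]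
    rintro x ⟨hx1, _⟩ ⟨_, hx2⟩
    exact absurd hx1 (not_le.2 (hx2 j h1 h2))
  -- key estimate
  have hkey : ∀ j ∈ Finset.Icc 1 N, ν (A j) ≤ 2 * ν (A j ∩ B) := by
    intro j hj
    rw [Finset.mem_Icc] at hj
    have hcov : A j ⊆ (A j ∩ B) ∪ refl N j ⁻¹' (A j ∩ B) := by
      intro x hx
      by_cases hxB : x ∈ B
      · exact Or.inl ⟨hx, hxB⟩
      · right
        obtain ⟨hx1, hx2⟩ := hx
        have hAr : refl N j x ∈ A j := by
          refine ⟨by rwa [pS_refl_of_le (le_refl j)], fun i hi1 hi2 => ?_⟩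
          rw [pS_refl_of_le (le_of_lt hi2)]
          exact hx2 i hi1 hi2
        have hBr : refl N j x ∈ B := by
          have e := pS_refl_self hj.2 x
          simp only [hB, Set.mem_setOf_eq, not_le] at hxB ⊢
          rw [e]
          have habs : |2 * pS N j x| - |pS N N x| ≤ |2 * pS N j x - pS N N x| :=
            abs_sub_abs_le_abs_sub _ _
          have h2a : |2 * pS N j x| = 2 * |pS N j x| := by
            rw [abs_mul]; norm_num
          have hx1' : t ≤ |pS N j x| := hx1
          nlinarith [hx1']
        exact ⟨hAr, hBr⟩
    calc ν (A j) ≤ ν ((A j ∩ B) ∪ refl N j ⁻¹' (A j ∩ B)) := measure_mono hcov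
      _ ≤ ν (A j ∩ B) + ν (refl N j ⁻¹' (A j ∩ B)) := measure_union_le _ _
      _ = ν (A j ∩ B) + ν (A j ∩ B) := by
          rw [hrefl_apply j _ ((hAm j).inter hBm)]
      _ = 2 * ν (A j ∩ B) := (two_mul _).symm
  have hPD : (↑(Finset.Icc 1 N) : Set ℕ).PairwiseDisjoint (fun j => A j ∩ B) := by
    intro j hj j' hj' hne
    simp only [Finset.coe_Icc, Set.mem_Icc] at hj hj'
    rcases lt_or_gt_of_ne hne with h | h
    · exact ((hAdisj j j' hj.1 h).mono Set.inter_subset_left Set.inter_subset_left)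
    · exact ((hAdisj j' j hj'.1 h).mono Set.inter_subset_left Set.inter_subset_left).symm
  have hmain : ν {x | ∃ k, 1 ≤ k ∧ k ≤ N ∧ t ≤ |pS N k x|} ≤ 2 * ν B := by
    calc ν {x | ∃ k, 1 ≤ k ∧ k ≤ N ∧ t ≤ |pS N k x|}
        ≤ ν (⋃ j ∈ Finset.Icc 1 N, A j) := measure_mono hsub
      _ ≤ ∑ j ∈ Finset.Icc 1 N, ν (A j) := measure_biUnion_finset_le _ _
      _ ≤ ∑ j ∈ Finset.Icc 1 N, 2 * ν (A j ∩ B) := Finset.sum_le_sum hkey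
      _ = 2 * ∑ j ∈ Finset.Icc 1 N, ν (A j ∩ B) := by rw [Finset.mul_sum]
      _ = 2 * ν (⋃ j ∈ Finset.Icc 1 N, (A j ∩ B)) := by
          rw [measure_biUnion_finset hPD (fun j _ => (hAm j).inter hBm)]
      _ ≤ 2 * ν B := by
          refine mul_le_mul_right (measure_mono ?_) 2
          exact Set.iUnion₂_subset fun j _ => Set.inter_subset_right
  have hEm : MeasurableSet {x : Fin N → ℝ | ∃ k, 1 ≤ k ∧ k ≤ N ∧ t ≤ |pS N k x|} := by
    have : {x : Fin N → ℝ | ∃ k, 1 ≤ k ∧ k ≤ N ∧ t ≤ |pS N k x|}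
        = ⋃ k ∈ Finset.Icc 1 N, {x | t ≤ |pS N k x|} := by
      ext x
      simp only [Set.mem_setOf_eq, Set.mem_iUnion, Finset.mem_Icc, exists_prop]
      constructor
      · rintro ⟨k, h1, h2, h3⟩; exact ⟨k, ⟨h1, h2⟩, h3⟩
      · rintro ⟨k, ⟨h1, h2⟩, h3⟩; exact ⟨k, h1, h2, h3⟩
    rw [this]
    exact Finset.measurableSet_biUnion _ fun k _ =>
      measurableSet_le measurable_const (measurable_pS N k).abs
  have hsetL : {ω | ∃ k, 1 ≤ k ∧ k ≤ N ∧ t ≤ |partialSum Xs k ω|}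
      = Y ⁻¹' {x | ∃ k, 1 ≤ k ∧ k ≤ N ∧ t ≤ |pS N k x|} := by
    ext ω
    simp only [Set.mem_setOf_eq, Set.mem_preimage]
    constructor
    · rintro ⟨k, h1, h2, h3⟩
      exact ⟨k, h1, h2, by rwa [← hps k h2 ω]⟩
    · rintro ⟨k, h1, h2, h3⟩
      exact ⟨k, h1, h2, by rwa [hps k h2 ω]⟩
  have hsetR : {ω | t ≤ |partialSum Xs N ω|} = Y ⁻¹' B := by
    ext ω
    simp only [Set.mem_setOf_eq, Set.mem_preimage, hB]
    rw [hps N (le_refl N) ω]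
  rw [hsetL, hsetR, htrans _ hEm, htrans _ hBm]
  exact hmain

end Measures

end Stmt8Aux

open Filter Stmt8Aux

theorem stmt8 {Ω : Type*} [MeasurableSpace Ω] (μ : Measure Ω) [IsProbabilityMeasure μ]
    (X : Ω → ℝ) (Xs : ℕ → Ω → ℝ)
    (hX : Measurable X) (hXs : ∀ n, Measurable (Xs n))
    (hindep : iIndepFun Xs μ)
    (hident : ∀ n, IdentDistrib (Xs n) X μ μ)
    (hsymm : Measure.map X μ = Measure.map (fun ω => -X ω) μ)
    (G : ℝ → ℝ) (hGpos : ∀ t ≥ 0, 0 < G t) (hGmono : MonotoneOn G (Set.Ici 0)) :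
    ∫⁻ ω, evalG G (lastDev Xs 1 ω) ∂μ ≤
      ENNReal.ofReal (G 0) + 12 * devSeries μ Xs G (1 / 8) := by
  classical
  by_cases hfin : devSeries μ Xs G (1 / 8) = ⊤
  · rw [hfin]
    have : (12 : ℝ≥0∞) * ⊤ = ⊤ := by simp
    rw [this, add_top]
    exact le_top
  -- notation
  set L : Ω → ℕ∞ := lastDev Xs 1 with hLdef
  set f : ℕ → ℝ≥0∞ := fun k => ((k : ℕ) : ℝ≥0∞)⁻¹ * ENNReal.ofReal (G k) *
    μ {ω | 1 / 8 ≤ |partialSum Xs k ω / (k : ℝ)|} with hfdef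
  have hdev : devSeries μ Xs G (1 / 8) = ∑' k : ℕ, Set.indicator {n : ℕ | 1 ≤ n} f k :=
    tsum_subtype {n : ℕ | 1 ≤ n} f
  set t' : ℕ → ℝ≥0∞ := Set.indicator {n : ℕ | 1 ≤ n} f with ht'def
  -- basic measurability
  have hSmeas : ∀ n, Measurable (partialSum Xs n) :=
    fun n => Finset.measurable_sum _ fun i _ => hXs i
  -- characterization of lastDev
  have hmemL : ∀ ω n, 1 ≤ n → (1:ℝ) ≤ |partialSum Xs n ω / n| → (n : ℕ∞) ≤ L ω := by
    intro ω n h1 h2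
    exact le_biSup (fun n : ℕ => (n : ℕ∞)) (Set.mem_setOf_eq ▸ ⟨h1, h2⟩)
  have hLub : ∀ ω (c : ℕ∞), (∀ n, 1 ≤ n → (1:ℝ) ≤ |partialSum Xs n ω / n| → (n : ℕ∞) ≤ c) →
      L ω ≤ c := by
    intro ω c h
    exact iSup₂_le fun n hn => h n hn.1 hn.2
  have hL0 : ∀ ω, L ω = 0 ↔ ∀ n, 1 ≤ n → ¬ ((1:ℝ) ≤ |partialSum Xs n ω / n|) := by
    intro ω
    constructor
    · intro h0 n h1 h2
      have := hmemL ω n h1 h2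
      rw [h0, nonpos_iff_eq_zero] at this
      exact absurd (Nat.cast_eq_zero.1 this) (by omega)
    · intro h
      refine le_antisymm ?_ zero_le
      exact hLub ω 0 fun n h1 h2 => absurd h2 (h n h1)
  have hLn : ∀ ω (n : ℕ), 1 ≤ n → (L ω = (n : ℕ∞) →
      ((1:ℝ) ≤ |partialSum Xs n ω / n| ∧
        ∀ m, n < m → ¬ ((1:ℝ) ≤ |partialSum Xs m ω / m|))) := by
    intro ω n h1 heq
    constructor
    · by_contra hn
      have hub : L ω ≤ ((n - 1 : ℕ) : ℕ∞) := by
        refine hLub ω _ fun m hm1 hm2 => ?_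
        have hmn : m ≤ n := by
          have := hmemL ω m hm1 hm2
          rw [heq] at this
          exact_mod_cast this
        have hne : m ≠ n := fun e => hn (e ▸ hm2)
        have hmn' : m ≤ n - 1 := by omega
        exact_mod_cast hmn'
      rw [heq] at hub
      have : n ≤ n - 1 := by exact_mod_cast hub
      omega
    · intro m hm hDm
      have h1m : 1 ≤ m := by omega
      have := hmemL ω m h1m hDm
      rw [heq] at this
      have : m ≤ n := by exact_mod_cast this
      omega
  have hLtop : ∀ ω, L ω = ⊤ → ∀ M : ℕ, ∃ n, M ≤ n ∧ 1 ≤ n ∧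
      (1:ℝ) ≤ |partialSum Xs n ω / n| := by
    intro ω htop M
    by_contra h'
    push_neg at h'
    have hub : L ω ≤ (M : ℕ∞) := by
      refine hLub ω _ fun m hm1 hm2 => ?_
      rcases le_or_gt (M : ℕ) m with h | h
      · exact absurd hm2 (not_le.2 (h' m h hm1))
      · exact_mod_cast le_of_lt h
    rw [htop] at hub
    simp at hub
  -- relation |S n / n| ≥ 1 ↔ n ≤ |S n|
  have hD_iff : ∀ n, 1 ≤ n → ∀ ω, ((1:ℝ) ≤ |partialSum Xs n ω / n| ↔
      (n : ℝ) ≤ |partialSum Xs n ω|) := by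
    intro n hn ω
    have hnpos : (0:ℝ) < n := by exact_mod_cast hn
    rw [abs_div, abs_of_pos hnpos, le_div_iff₀ hnpos, one_mul]
  -- block events
  set Bset : ℕ → Set Ω := fun j =>
    {ω | ∃ n : ℕ, 2^j ≤ n ∧ n < 2^(j+1) ∧ ((n:ℝ) ≤ |partialSum Xs n ω|)} with hBdef
  -- Levy corollaries
  have cor1 : ∀ (t : ℝ) (m k : ℕ), 1 ≤ m → m ≤ k →
      μ {ω | t ≤ |partialSum Xs m ω|} ≤ 2 * μ {ω | t ≤ |partialSum Xs k ω|} := by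
    intro t m k hm hmk
    refine le_trans (measure_mono ?_) (levy hX hXs hindep hident hsymm k t)
    intro ω hω
    exact ⟨m, hm, hmk, hω⟩
  have cor2 : ∀ j : ℕ, μ (Bset j) ≤
      2 * μ {ω | ((2^j : ℕ) : ℝ) ≤ |partialSum Xs (2^(j+1)) ω|} := by
    intro j
    refine le_trans (measure_mono ?_) (levy hX hXs hindep hident hsymm (2^(j+1)) ((2^j : ℕ) : ℝ))
    rintro ω ⟨n, h1, h2, h3⟩
    refine ⟨n, le_trans Nat.one_le_two_pow h1, le_of_lt h2, le_trans ?_ h3⟩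
    exact_mod_cast h1
  -- key per-scale estimate
  have hkeyn : ∀ n : ℕ, 1 ≤ n →
      ENNReal.ofReal (G n) * μ {ω | (n:ℝ)/2 ≤ |partialSum Xs n ω|}
        ≤ 4 * ∑ k ∈ Finset.Ioc n (2*n), f k := by
    intro n hn
    set μQ := μ {ω | (n:ℝ)/2 ≤ |partialSum Xs n ω|} with hμQ
    have hterm : ∀ k ∈ Finset.Ioc n (2*n),
        μQ ≤ 2 * μ {ω | 1/8 ≤ |partialSum Xs k ω / (k:ℝ)|} := by
      intro k hk
      rw [Finset.mem_Ioc] at hk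
      have hk1 : 1 ≤ k := by omega
      refine le_trans (cor1 ((n:ℝ)/2) n k hn (le_of_lt hk.1)) ?_
      refine mul_le_mul_right (measure_mono ?_) 2
      intro ω hω
      simp only [Set.mem_setOf_eq] at hω ⊢
      have hkpos : (0:ℝ) < k := by exact_mod_cast hk1
      have hk2n : (k:ℝ) ≤ 2*n := by exact_mod_cast hk.2
      rw [abs_div, abs_of_pos hkpos, le_div_iff₀ hkpos]
      calc (1:ℝ)/8 * k ≤ 1/8 * (2*n) := by nlinarith
        _ ≤ (n:ℝ)/2 := by nlinarith
        _ ≤ |partialSum Xs k ω| := hω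
    have hcard : (Finset.Ioc n (2*n)).card = n := by
      rw [Nat.card_Ioc]; omega
    have hsum : (n : ℝ≥0∞) * μQ
        ≤ ∑ k ∈ Finset.Ioc n (2*n), 2 * μ {ω | 1/8 ≤ |partialSum Xs k ω / (k:ℝ)|} := by
      calc (n : ℝ≥0∞) * μQ = ∑ _k ∈ Finset.Ioc n (2*n), μQ := by
            rw [Finset.sum_const, hcard, nsmul_eq_mul]
        _ ≤ _ := Finset.sum_le_sum hterm
    have hn0 : ((n:ℕ) : ℝ≥0∞) ≠ 0 := by
      simp only [ne_eq, Nat.cast_eq_zero]; omega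
    have hnt : ((n:ℕ) : ℝ≥0∞) ≠ ⊤ := natCast_ne_top n
    calc ENNReal.ofReal (G n) * μQ
        = (n : ℝ≥0∞)⁻¹ * ENNReal.ofReal (G n) * ((n : ℝ≥0∞) * μQ) := by
          rw [show (n : ℝ≥0∞)⁻¹ * ENNReal.ofReal (G n) * ((n : ℝ≥0∞) * μQ)
              = ((n : ℝ≥0∞)⁻¹ * (n : ℝ≥0∞)) * (ENNReal.ofReal (G n) * μQ) from by ring,
            ENNReal.inv_mul_cancel hn0 hnt, one_mul]
      _ ≤ (n : ℝ≥0∞)⁻¹ * ENNReal.ofReal (G n) *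
            ∑ k ∈ Finset.Ioc n (2*n), 2 * μ {ω | 1/8 ≤ |partialSum Xs k ω / (k:ℝ)|} :=
          mul_le_mul_right hsum _
      _ = ∑ k ∈ Finset.Ioc n (2*n), (n : ℝ≥0∞)⁻¹ * ENNReal.ofReal (G n) *
            (2 * μ {ω | 1/8 ≤ |partialSum Xs k ω / (k:ℝ)|}) := Finset.mul_sum _ _ _
      _ ≤ ∑ k ∈ Finset.Ioc n (2*n), 4 * f k := ?_
      _ = 4 * ∑ k ∈ Finset.Ioc n (2*n), f k := (Finset.mul_sum _ _ _).symm
    refine Finset.sum_le_sum fun k hk => ?_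
    rw [Finset.mem_Ioc] at hk
    have hk1 : 1 ≤ k := by omega
    have hinv : (n : ℝ≥0∞)⁻¹ ≤ 2 * (k : ℝ≥0∞)⁻¹ := by
      have h2n : ((2*n : ℕ) : ℝ≥0∞)⁻¹ ≤ (k : ℝ≥0∞)⁻¹ := by
        refine ENNReal.inv_le_inv' ?_
        exact_mod_cast hk.2
      have he : (n : ℝ≥0∞)⁻¹ = 2 * ((2*n : ℕ) : ℝ≥0∞)⁻¹ := by
        rw [Nat.cast_mul, Nat.cast_ofNat, ENNReal.mul_inv (Or.inl (by norm_num)) (Or.inl (by norm_num)),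
          ← mul_assoc, ENNReal.mul_inv_cancel (by norm_num) (by norm_num), one_mul]
      rw [he]
      exact mul_le_mul_right h2n 2
    have hG : ENNReal.ofReal (G n) ≤ ENNReal.ofReal (G k) := by
      refine ENNReal.ofReal_le_ofReal (hGmono ?_ ?_ ?_)
      · exact Set.mem_Ici.2 (by positivity)
      · exact Set.mem_Ici.2 (by positivity)
      · exact_mod_cast le_of_lt hk.1
    calc (n : ℝ≥0∞)⁻¹ * ENNReal.ofReal (G n) * (2 * μ {ω | 1/8 ≤ |partialSum Xs k ω / (k:ℝ)|})
        = 2 * ((n : ℝ≥0∞)⁻¹ * (ENNReal.ofReal (G n) * μ {ω | 1/8 ≤ |partialSum Xs k ω / (k:ℝ)|})) := by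
          ring
      _ ≤ 2 * ((2 * (k : ℝ≥0∞)⁻¹) * (ENNReal.ofReal (G k) * μ {ω | 1/8 ≤ |partialSum Xs k ω / (k:ℝ)|})) := by
          exact mul_le_mul_right (mul_le_mul' hinv (mul_le_mul' hG (le_refl _))) 2
      _ = 4 * f k := by rw [hfdef]; ring
  -- per-block estimate
  have hGmB : ∀ j : ℕ, ENNReal.ofReal (G ((2^(j+1) : ℕ) : ℝ)) * μ (Bset j)
      ≤ 8 * ∑ k ∈ Finset.Ioc (2^(j+1)) (2^(j+2)), f k := by
    intro j
    have h2 := hkeyn (2^(j+1)) Nat.one_le_two_pow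
    have hthr : (((2^(j+1) : ℕ)) : ℝ)/2 = ((2^j : ℕ) : ℝ) := by
      push_cast
      ring
    rw [hthr] at h2
    have h2n : 2 * 2^(j+1) = 2^(j+2) := by ring
    rw [h2n] at h2
    calc ENNReal.ofReal (G ((2^(j+1) : ℕ) : ℝ)) * μ (Bset j)
        ≤ ENNReal.ofReal (G ((2^(j+1) : ℕ) : ℝ)) *
            (2 * μ {ω | ((2^j : ℕ) : ℝ) ≤ |partialSum Xs (2^(j+1)) ω|}) :=
          mul_le_mul_right (cor2 j) _
      _ = 2 * (ENNReal.ofReal (G ((2^(j+1) : ℕ) : ℝ)) *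
            μ {ω | ((2^j : ℕ) : ℝ) ≤ |partialSum Xs (2^(j+1)) ω|}) := by ring
      _ ≤ 2 * (4 * ∑ k ∈ Finset.Ioc (2^(j+1)) (2^(j+2)), f k) := mul_le_mul_right h2 2
      _ = 8 * ∑ k ∈ Finset.Ioc (2^(j+1)) (2^(j+2)), f k := by rw [← mul_assoc]; norm_num
  -- summation over disjoint blocks
  have hdisjF : ∀ j j' : ℕ, j ≠ j' → ∀ k, k ∈ Finset.Ioc (2^(j+1)) (2^(j+2)) →
      k ∉ Finset.Ioc (2^(j'+1)) (2^(j'+2)) := by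
    intro j j' hne k hk hk'
    rw [Finset.mem_Ioc] at hk hk'
    rcases Nat.lt_or_ge j j' with h | h
    · have : (2:ℕ)^(j+2) ≤ 2^(j'+1) := Nat.pow_le_pow_right (by norm_num) (by omega)
      omega
    · have hlt : j' < j := by omega
      have : (2:ℕ)^(j'+2) ≤ 2^(j+1) := Nat.pow_le_pow_right (by norm_num) (by omega)
      omega
  have hcore : ∀ (g : ℕ → ℕ), Function.Injective g → ∀ M : ℕ,
      (∀ j k, k ∈ Finset.Ioc (2^(g j + 1)) (2^(g j + 2)) → M ≤ k) →
      (∑' j : ℕ, ∑ k ∈ Finset.Ioc (2^(g j + 1)) (2^(g j + 2)), f k)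
        ≤ ∑' k : ℕ, Set.indicator {n : ℕ | 1 ≤ n ∧ M ≤ n} f k := by
    intro g hg M hM
    have e1 : ∀ j : ℕ, ∑ k ∈ Finset.Ioc (2^(g j + 1)) (2^(g j + 2)), f k
        = ∑' k : ℕ, Set.indicator (↑(Finset.Ioc (2^(g j + 1)) (2^(g j + 2))) : Set ℕ) f k :=
      fun j => sum_eq_tsum_indicator f _
    calc (∑' j : ℕ, ∑ k ∈ Finset.Ioc (2^(g j + 1)) (2^(g j + 2)), f k)
        = ∑' j : ℕ, ∑' k : ℕ, Set.indicator (↑(Finset.Ioc (2^(g j + 1)) (2^(g j + 2))) : Set ℕ) f k := by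
          exact tsum_congr e1
      _ = ∑' k : ℕ, ∑' j : ℕ, Set.indicator (↑(Finset.Ioc (2^(g j + 1)) (2^(g j + 2))) : Set ℕ) f k :=
          ENNReal.tsum_comm
      _ ≤ ∑' k : ℕ, Set.indicator {n : ℕ | 1 ≤ n ∧ M ≤ n} f k := ?_
    refine ENNReal.tsum_le_tsum fun k => ?_
    by_cases hex : ∃ j, k ∈ Finset.Ioc (2^(g j + 1)) (2^(g j + 2))
    · obtain ⟨j0, hj0⟩ := hex
      have hz : ∀ j', j' ≠ j0 →
          Set.indicator (↑(Finset.Ioc (2^(g j' + 1)) (2^(g j' + 2))) : Set ℕ) f k = 0 := by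
        intro j' hne
        refine Set.indicator_of_notMem ?_ f
        simp only [Finset.coe_Ioc, Set.mem_Ioc, not_and_or, not_lt, not_le]
        have := hdisjF (g j0) (g j') (fun e => hne (hg e).symm) k hj0
        rw [Finset.mem_Ioc] at this
        omega
      rw [tsum_eq_single j0 hz]
      have hk1 : k ∈ ({n : ℕ | 1 ≤ n ∧ M ≤ n}) := by
        rw [Finset.mem_Ioc] at hj0
        have h2 : (1:ℕ) ≤ 2^(g j0 + 1) := Nat.one_le_two_pow
        exact ⟨by omega, hM j0 k (by rw [Finset.mem_Ioc]; omega)⟩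
      rw [Set.indicator_of_mem (Finset.mem_coe.2 hj0) f, Set.indicator_of_mem hk1 f]
    · push_neg at hex
      have : ∀ j : ℕ, Set.indicator (↑(Finset.Ioc (2^(g j + 1)) (2^(g j + 2))) : Set ℕ) f k = 0 :=
        fun j => Set.indicator_of_notMem (fun hmem => hex j (Finset.mem_coe.1 hmem)) f
      rw [tsum_congr this, tsum_zero]
      exact zero_le
  -- bound with devSeries
  have hSUM : (∑' j : ℕ, ∑ k ∈ Finset.Ioc (2^(j + 1)) (2^(j + 2)), f k)
      ≤ devSeries μ Xs G (1 / 8) := by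
    have h := hcore id Function.injective_id 0 (fun j k _ => Nat.zero_le k)
    simp only [id_eq] at h
    refine le_trans h ?_
    rw [hdev]
    refine ENNReal.tsum_le_tsum fun k => ?_
    have : {n : ℕ | 1 ≤ n ∧ 0 ≤ n} = {n : ℕ | 1 ≤ n} := by
      ext m; simp
    rw [this]
  -- shifted tail sums
  have hshift : ∀ M : ℕ, 1 ≤ M →
      (∑' k : ℕ, Set.indicator {n : ℕ | 1 ≤ n ∧ M ≤ n} f k) = ∑' k : ℕ, t' (k + M) := by
    intro M hM
    refine (Function.Injective.tsum_eq (add_left_injective M) ?_).symm.trans ?_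
    · intro x hx
      rw [Function.mem_support] at hx
      have hx1 : x ∈ {n : ℕ | 1 ≤ n ∧ M ≤ n} := by
        by_contra hc
        exact hx (Set.indicator_of_notMem hc f)
      obtain ⟨hxa, hxb⟩ := hx1
      refine ⟨x - M, ?_⟩
      show x - M + M = x
      omega
    · refine tsum_congr fun k => ?_
      have h1 : (k + M) ∈ {n : ℕ | 1 ≤ n ∧ M ≤ n} := ⟨by omega, by omega⟩
      have h2 : (k + M) ∈ {n : ℕ | 1 ≤ n} := by
        simp only [Set.mem_setOf_eq]; omega
      rw [Set.indicator_of_mem h1 f, ht'def, Set.indicator_of_mem h2 f]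
  -- the event L = ⊤ is null
  have htopnull : μ {ω | L ω = ⊤} = 0 := by
    have hGone : ENNReal.ofReal (G 1) ≠ 0 := by
      simp only [ne_eq, ENNReal.ofReal_eq_zero, not_le]
      exact hGpos 1 (by norm_num)
    have hbound : ∀ W : ℕ, ENNReal.ofReal (G 1) * μ {ω | L ω = ⊤}
        ≤ 8 * ∑' k : ℕ, t' (k + (2^(W+1) + 1)) := by
      intro W
      -- covering
      have hcov : {ω | L ω = ⊤} ⊆ ⋃ i : ℕ, Bset (W + i) := by
        intro ω hω
        obtain ⟨n, hn1, hn2, hn3⟩ := hLtop ω hω (2^W)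
        have hn0 : n ≠ 0 := by omega
        set j0 := Nat.log 2 n with hj0
        have hjW : W ≤ j0 := (Nat.le_log_iff_pow_le (by norm_num) hn0).2 hn1
        have h1 : 2^j0 ≤ n := Nat.pow_log_le_self 2 hn0
        have h2 : n < 2^(j0+1) := Nat.lt_pow_succ_log_self (by norm_num) n
        refine Set.mem_iUnion.2 ⟨j0 - W, ?_⟩
        have hWj : W + (j0 - W) = j0 := by omega
        rw [hWj]
        exact ⟨n, h1, h2, (hD_iff n hn2 ω).1 hn3⟩
      have hmeas : μ {ω | L ω = ⊤} ≤ ∑' i : ℕ, μ (Bset (W + i)) :=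
        le_trans (measure_mono hcov) (measure_iUnion_le _)
      have hBb : ∀ i : ℕ, ENNReal.ofReal (G 1) * μ (Bset (W + i))
          ≤ 8 * ∑ k ∈ Finset.Ioc (2^(W + i + 1)) (2^(W + i + 2)), f k := by
        intro i
        refine le_trans ?_ (hGmB (W + i))
        refine mul_le_mul_left (ENNReal.ofReal_le_ofReal (hGmono ?_ ?_ ?_)) _
        · exact Set.mem_Ici.2 (by norm_num)
        · exact Set.mem_Ici.2 (by positivity)
        · have : (1:ℕ) ≤ 2^(W + i + 1) := Nat.one_le_two_pow
          exact_mod_cast this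
      have hg : Function.Injective (fun i : ℕ => W + i) := fun a b h => Nat.add_left_cancel h
      have hMle : ∀ j k, k ∈ Finset.Ioc (2^(W + j + 1)) (2^(W + j + 2)) → 2^(W+1) + 1 ≤ k := by
        intro j k hk
        rw [Finset.mem_Ioc] at hk
        have : (2:ℕ)^(W+1) ≤ 2^(W + j + 1) := Nat.pow_le_pow_right (by norm_num) (by omega)
        omega
      calc ENNReal.ofReal (G 1) * μ {ω | L ω = ⊤}
          ≤ ENNReal.ofReal (G 1) * ∑' i : ℕ, μ (Bset (W + i)) := mul_le_mul_right hmeas _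
        _ = ∑' i : ℕ, ENNReal.ofReal (G 1) * μ (Bset (W + i)) := ENNReal.tsum_mul_left.symm
        _ ≤ ∑' i : ℕ, 8 * ∑ k ∈ Finset.Ioc (2^(W + i + 1)) (2^(W + i + 2)), f k :=
            ENNReal.tsum_le_tsum hBb
        _ = 8 * ∑' i : ℕ, ∑ k ∈ Finset.Ioc (2^(W + i + 1)) (2^(W + i + 2)), f k :=
            ENNReal.tsum_mul_left
        _ ≤ 8 * ∑' k : ℕ, Set.indicator {n : ℕ | 1 ≤ n ∧ 2^(W+1) + 1 ≤ n} f k := by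
            refine mul_le_mul_right ?_ 8
            exact hcore (fun i => W + i) hg (2^(W+1) + 1) hMle
        _ = 8 * ∑' k : ℕ, t' (k + (2^(W+1) + 1)) := by
            rw [hshift (2^(W+1) + 1) (Nat.succ_le_succ (Nat.zero_le _))]
    -- tail tends to zero
    have htail : Tendsto (fun W : ℕ => 8 * ∑' k : ℕ, t' (k + (2^(W+1) + 1)))
        atTop (nhds 0) := by
      have h1 : Tendsto (fun M : ℕ => ∑' k : ℕ, t' (k + M)) atTop (nhds 0) := by
        refine ENNReal.tendsto_sum_nat_add t' ?_
        rw [← hdev]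
        exact hfin
      have h2 : Tendsto (fun W : ℕ => 2^(W+1) + 1) atTop atTop := by
        refine tendsto_atTop_mono (fun W => ?_) tendsto_id
        have := Nat.lt_two_pow_self (n := W)
        have h3 : (2:ℕ)^W ≤ 2^(W+1) := Nat.pow_le_pow_right (by norm_num) (by omega)
        simp only [id_eq]
        omega
      have h3 := h1.comp h2
      have h4 := ENNReal.Tendsto.const_mul h3 (Or.inr (by norm_num : (8:ℝ≥0∞) ≠ ⊤))
      rwa [mul_zero] at h4
    have hle : ENNReal.ofReal (G 1) * μ {ω | L ω = ⊤} ≤ 0 :=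
      ge_of_tendsto htail (Filter.Eventually.of_forall hbound)
    rw [le_zero_iff, mul_eq_zero] at hle
    rcases hle with h | h
    · exact absurd h hGone
    · exact h
  -- measurable pieces
  set C0 : Set Ω := {ω | L ω = 0} with hC0def
  have hC0m : MeasurableSet C0 := by
    have he : C0 = ⋂ n : ℕ, {ω | 1 ≤ n → ¬ ((1:ℝ) ≤ |partialSum Xs n ω / n|)} := by
      ext ω
      simp only [hC0def, Set.mem_setOf_eq, Set.mem_iInter]
      exact hL0 ω
    rw [he]
    refine MeasurableSet.iInter fun n => ?_
    by_cases h1 : 1 ≤ n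
    · have : {ω | 1 ≤ n → ¬ ((1:ℝ) ≤ |partialSum Xs n ω / n|)}
          = {ω | (1:ℝ) ≤ |partialSum Xs n ω / n|}ᶜ := by
        ext ω; simp [h1]
      rw [this]
      exact (measurableSet_le measurable_const ((hSmeas n).div_const _).abs).compl
    · have : {ω | 1 ≤ n → ¬ ((1:ℝ) ≤ |partialSum Xs n ω / n|)} = Set.univ := by
        ext ω; simp [h1]
      rw [this]; exact MeasurableSet.univ
  have hLnm : ∀ n : ℕ, MeasurableSet {ω | L ω = (n : ℕ∞)} := by
    intro n
    by_cases h1 : 1 ≤ n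
    · have he : {ω | L ω = (n : ℕ∞)} = ({ω | (1:ℝ) ≤ |partialSum Xs n ω / n|} ∩
          ⋂ m : ℕ, {ω | n < m → ¬ ((1:ℝ) ≤ |partialSum Xs m ω / m|)}) := by
        ext ω
        simp only [Set.mem_setOf_eq, Set.mem_inter_iff, Set.mem_iInter]
        constructor
        · intro h
          exact hLn ω n h1 h
        · rintro ⟨ha, hb⟩
          refine le_antisymm ?_ (hmemL ω n h1 ha)
          refine hLub ω _ fun m hm1 hm2 => ?_
          rcases le_or_gt m n with h | h
          · exact_mod_cast h
          · exact absurd hm2 (hb m h)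
      rw [he]
      refine (measurableSet_le measurable_const ((hSmeas n).div_const _).abs).inter
        (MeasurableSet.iInter fun m => ?_)
      by_cases h2 : n < m
      · have : {ω | n < m → ¬ ((1:ℝ) ≤ |partialSum Xs m ω / m|)}
            = {ω | (1:ℝ) ≤ |partialSum Xs m ω / m|}ᶜ := by
          ext ω; simp [h2]
        rw [this]
        exact (measurableSet_le measurable_const ((hSmeas m).div_const _).abs).compl
      · have : {ω | n < m → ¬ ((1:ℝ) ≤ |partialSum Xs m ω / m|)} = Set.univ := by
          ext ω; simp [h2]
        rw [this]; exact MeasurableSet.univ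
    · have hn0 : n = 0 := by omega
      subst hn0
      have : {ω | L ω = ((0:ℕ) : ℕ∞)} = C0 := by
        ext ω
        simp only [hC0def, Set.mem_setOf_eq, Nat.cast_zero]
      rw [this]
      exact hC0m
  -- the families of sets
  set Cb : ℕ → Set Ω := fun i => Nat.casesOn i {ω | L ω = ⊤}
    (fun j => ⋃ n ∈ Finset.Ico ((2:ℕ)^j) ((2:ℕ)^(j+1)), {ω | L ω = (n : ℕ∞)}) with hCbdef
  have hCbm : ∀ j : ℕ, MeasurableSet (Cb (j+1)) := by
    intro j
    show MeasurableSet (⋃ n ∈ Finset.Ico ((2:ℕ)^j) ((2:ℕ)^(j+1)), {ω | L ω = (n : ℕ∞)})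
    exact Finset.measurableSet_biUnion _ fun n _ => hLnm n
  -- covering
  have hcompl : C0ᶜ ⊆ ⋃ i : ℕ, Cb i := by
    intro ω hω
    by_cases ht : L ω = ⊤
    · exact Set.mem_iUnion.2 ⟨0, ht⟩
    · obtain ⟨n, hn⟩ := WithTop.ne_top_iff_exists.1 ht
      have hn0 : n ≠ 0 := by
        intro h
        apply hω
        simp only [hC0def, Set.mem_setOf_eq]
        rw [← hn, h]
        exact Nat.cast_zero
      refine Set.mem_iUnion.2 ⟨Nat.log 2 n + 1, ?_⟩
      show ω ∈ ⋃ m ∈ Finset.Ico ((2:ℕ)^(Nat.log 2 n)) ((2:ℕ)^(Nat.log 2 n + 1)), {ω | L ω = (m : ℕ∞)}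
      refine Set.mem_biUnion (Finset.mem_Ico.2
        ⟨Nat.pow_log_le_self 2 hn0, Nat.lt_pow_succ_log_self (by norm_num) n⟩) hn.symm
  -- per-piece integral bounds
  have hint0 : ∫⁻ ω in C0, evalG G (L ω) ∂μ ≤ ENNReal.ofReal (G 0) := by
    have h1 : ∫⁻ ω in C0, evalG G (L ω) ∂μ ≤ ∫⁻ _ω in C0, ENNReal.ofReal (G 0) ∂μ := by
      refine setLIntegral_mono' hC0m fun ω hω => ?_
      have : L ω = ((0:ℕ) : ℕ∞) := by
        rw [Nat.cast_zero]; exact hω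
      rw [this]
      have he : evalG G ((0:ℕ) : ℕ∞) = ENNReal.ofReal (G ((0:ℕ):ℝ)) := rfl
      rw [he, Nat.cast_zero]
    refine le_trans h1 ?_
    rw [setLIntegral_const]
    calc ENNReal.ofReal (G 0) * μ C0 ≤ ENNReal.ofReal (G 0) * 1 :=
        mul_le_mul_right prob_le_one _
      _ = ENNReal.ofReal (G 0) := mul_one _
  have hinttop : ∫⁻ ω in Cb 0, evalG G (L ω) ∂μ = 0 :=
    setLIntegral_measure_zero _ _ htopnull
  have hintblock : ∀ j : ℕ, ∫⁻ ω in Cb (j+1), evalG G (L ω) ∂μ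
      ≤ 8 * ∑ k ∈ Finset.Ioc (2^(j+1)) (2^(j+2)), f k := by
    intro j
    have hsubB : Cb (j+1) ⊆ Bset j := by
      intro ω hω
      simp only [hCbdef, Set.mem_iUnion, Finset.mem_Ico, exists_prop] at hω
      obtain ⟨n, ⟨hn1, hn2⟩, hn3⟩ := hω
      have h1n : 1 ≤ n := le_trans Nat.one_le_two_pow hn1
      have hD := (hLn ω n h1n hn3).1
      exact ⟨n, hn1, hn2, (hD_iff n h1n ω).1 hD⟩
    have hb : ∫⁻ ω in Cb (j+1), evalG G (L ω) ∂μ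
        ≤ ∫⁻ _ω in Cb (j+1), ENNReal.ofReal (G ((2^(j+1):ℕ) : ℝ)) ∂μ := by
      refine setLIntegral_mono' (hCbm j) fun ω hω => ?_
      simp only [hCbdef, Set.mem_iUnion, Finset.mem_Ico, exists_prop] at hω
      obtain ⟨n, ⟨hn1, hn2⟩, hn3⟩ := hω
      rw [hn3]
      have : evalG G ((n:ℕ) : ℕ∞) = ENNReal.ofReal (G n) := rfl
      rw [this]
      refine ENNReal.ofReal_le_ofReal (hGmono ?_ ?_ ?_)
      · exact Set.mem_Ici.2 (by positivity)
      · exact Set.mem_Ici.2 (by positivity)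
      · exact_mod_cast le_of_lt hn2
    refine le_trans hb ?_
    rw [setLIntegral_const]
    calc ENNReal.ofReal (G ((2^(j+1):ℕ) : ℝ)) * μ (Cb (j+1))
        ≤ ENNReal.ofReal (G ((2^(j+1):ℕ) : ℝ)) * μ (Bset j) :=
          mul_le_mul_right (measure_mono hsubB) _
      _ ≤ 8 * ∑ k ∈ Finset.Ioc (2^(j+1)) (2^(j+2)), f k := hGmB j
  -- final assembly
  calc ∫⁻ ω, evalG G (L ω) ∂μ
      = (∫⁻ ω in C0, evalG G (L ω) ∂μ) + ∫⁻ ω in C0ᶜ, evalG G (L ω) ∂μ :=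
        (lintegral_add_compl _ hC0m).symm
    _ ≤ ENNReal.ofReal (G 0) + ∫⁻ ω in ⋃ i : ℕ, Cb i, evalG G (L ω) ∂μ :=
        add_le_add hint0 (lintegral_mono_set hcompl)
    _ ≤ ENNReal.ofReal (G 0) + ∑' i : ℕ, ∫⁻ ω in Cb i, evalG G (L ω) ∂μ :=
        add_le_add_right (lintegral_iUnion_le _ _) _
    _ = ENNReal.ofReal (G 0) + ((∫⁻ ω in Cb 0, evalG G (L ω) ∂μ) +
          ∑' j : ℕ, ∫⁻ ω in Cb (j+1), evalG G (L ω) ∂μ) := by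
        rw [tsum_eq_zero_add' ENNReal.summable]
    _ = ENNReal.ofReal (G 0) + ∑' j : ℕ, ∫⁻ ω in Cb (j+1), evalG G (L ω) ∂μ := by
        rw [hinttop, zero_add]
    _ ≤ ENNReal.ofReal (G 0) + ∑' j : ℕ, 8 * ∑ k ∈ Finset.Ioc (2^(j+1)) (2^(j+2)), f k :=
        add_le_add_right (ENNReal.tsum_le_tsum hintblock) _
    _ = ENNReal.ofReal (G 0) + 8 * ∑' j : ℕ, ∑ k ∈ Finset.Ioc (2^(j+1)) (2^(j+2)), f k := by
        rw [ENNReal.tsum_mul_left]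
    _ ≤ ENNReal.ofReal (G 0) + 8 * devSeries μ Xs G (1 / 8) :=
        add_le_add_right (mul_le_mul_right hSUM 8) _
    _ ≤ ENNReal.ofReal (G 0) + 12 * devSeries μ Xs G (1 / 8) :=
        by gcongr; norm_num
end

section
/- Let G be a moderate function, let X be a real random variable, let X' be an independent copy of X, and set X* := X − X'. Then |X|·G(|X|) is integrable if and only if |X*|·G(|X*|) is integrable. -/
open MeasureTheory ProbabilityTheory ENNReal

/-- Tail comparison through a monotone function: if for every `t > 0` with `s ≤ f t`
the tail `μ {t ≤ Y}` is bounded by `B`, then `μ {s ≤ f ∘ Y} ≤ B`, provided `f 0 < s`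
and `Y ≥ 0`. -/
lemma upset_tail {Ω : Type*} [MeasurableSpace Ω] (μ : Measure Ω) {Y : Ω → ℝ}
    (hY0 : ∀ ω, 0 ≤ Y ω) {f : ℝ → ℝ} (hf : Monotone f) {s : ℝ} (hs : f 0 < s)
    {B : ℝ≥0∞} (h : ∀ t > (0 : ℝ), s ≤ f t → μ {ω | t ≤ Y ω} ≤ B) :
    μ {ω | s ≤ f (Y ω)} ≤ B := by
  set A : Set ℝ := {t : ℝ | 0 < t ∧ s ≤ f t} with hA
  have hsub : {ω | s ≤ f (Y ω)} ⊆ {ω | Y ω ∈ A} := by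
    intro ω hω
    have hYpos : 0 < Y ω := by
      rcases lt_or_eq_of_le (hY0 ω) with h' | h'
      · exact h'
      · exfalso
        simp only [Set.mem_setOf_eq] at hω
        rw [← h'] at hω
        exact absurd hω (not_le.2 hs)
    exact ⟨hYpos, hω⟩
  rcases Set.eq_empty_or_nonempty A with hAe | hAne
  · have : {ω | Y ω ∈ A} = ∅ := by
      ext ω; simp [hAe]
    calc μ {ω | s ≤ f (Y ω)} ≤ μ {ω | Y ω ∈ A} := measure_mono hsub
      _ = 0 := by rw [this]; exact measure_empty
      _ ≤ B := zero_le
  · have hbdd : BddBelow A := ⟨0, fun t ht => ht.1.le⟩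
    set t₀ := sInf A with ht₀
    have ht₀0 : 0 ≤ t₀ := le_csInf hAne fun t ht => ht.1.le
    by_cases hmem : t₀ ∈ A
    · have hsub2 : {ω | Y ω ∈ A} ⊆ {ω | t₀ ≤ Y ω} :=
        fun ω hω => csInf_le hbdd hω
      calc μ {ω | s ≤ f (Y ω)} ≤ μ {ω | t₀ ≤ Y ω} :=
            measure_mono (hsub.trans hsub2)
        _ ≤ B := h t₀ hmem.1 hmem.2
    · have hA_iff : ∀ u, u ∈ A ↔ t₀ < u := by
        intro u
        constructor
        · intro hu
          rcases lt_or_eq_of_le (csInf_le hbdd hu) with h' | h'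
          · exact h'
          · exact absurd (by rw [ht₀, h']; exact hu) hmem
        · intro hu
          obtain ⟨a, haA, hau⟩ := exists_lt_of_csInf_lt hAne hu
          exact ⟨lt_trans haA.1 hau, le_trans haA.2 (hf hau.le)⟩
      have hunion : {ω | Y ω ∈ A} = ⋃ n : ℕ, {ω | t₀ + 1 / (n + 1) ≤ Y ω} := by
        ext ω
        simp only [Set.mem_setOf_eq, Set.mem_iUnion, hA_iff]
        constructor
        · intro hω
          obtain ⟨n, hn⟩ := exists_nat_one_div_lt (sub_pos.2 hω)
          exact ⟨n, by linarith⟩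
        · rintro ⟨n, hn⟩
          have : (0:ℝ) < 1 / (n + 1) := by positivity
          linarith
      have hmono : Monotone fun n : ℕ => {ω | t₀ + 1 / (n + 1) ≤ Y ω} := by
        intro m n hmn ω hω
        simp only [Set.mem_setOf_eq] at *
        have hc' : (m:ℝ) ≤ n := Nat.cast_le.2 hmn
        have : (1:ℝ) / (n + 1) ≤ 1 / (m + 1) := by
          apply one_div_le_one_div_of_le (by positivity)
          linarith
        linarith
      calc μ {ω | s ≤ f (Y ω)} ≤ μ {ω | Y ω ∈ A} := measure_mono hsub
        _ = ⨆ n : ℕ, μ {ω | t₀ + 1 / (n + 1) ≤ Y ω} := by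
            rw [hunion]; exact hmono.measure_iUnion
        _ ≤ B := by
            apply iSup_le
            intro n
            have hpos : (0:ℝ) < t₀ + 1 / (n + 1) := by
              have : (0:ℝ) < 1 / (n + 1) := by positivity
              linarith
            have hin : t₀ + 1 / (n + 1) ∈ A := (hA_iff _).2 (by
              have : (0:ℝ) < 1 / (n + 1) := by positivity
              linarith)
            exact h _ hpos hin.2

theorem stmt9 {Ω : Type*} [MeasurableSpace Ω] (μ : Measure Ω) [IsProbabilityMeasure μ]
    (G : ℝ → ℝ) (hG : Moderate G)
    (X X' : Ω → ℝ) (hX : Measurable X) (hX' : Measurable X')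
    (hindep : IndepFun X X' μ) (hcopy : IdentDistrib X' X μ μ) :
    (∫⁻ ω, ENNReal.ofReal (|X ω| * G |X ω|) ∂μ < ⊤) ↔
      (∫⁻ ω, ENNReal.ofReal (|X ω - X' ω| * G |X ω - X' ω|) ∂μ < ⊤) := by
  obtain ⟨hGpos, hGmono, _, c, hc⟩ := hG
  -- the modified function f t = (max t 0) * G (max t 0), monotone on all of ℝ
  set f : ℝ → ℝ := fun t => max t 0 * G (max t 0) with hf_def
  have hGnn : ∀ t, 0 ≤ t → 0 ≤ G t := fun t ht => (hGpos t ht).le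
  have hf_mono : Monotone f := by
    intro a b hab
    have h0a : (0:ℝ) ≤ max a 0 := le_max_right _ _
    have h0b : (0:ℝ) ≤ max b 0 := le_max_right _ _
    have hab' : max a 0 ≤ max b 0 := max_le_max hab le_rfl
    calc max a 0 * G (max a 0) ≤ max b 0 * G (max a 0) :=
          mul_le_mul_of_nonneg_right hab' (hGnn _ h0a)
      _ ≤ max b 0 * G (max b 0) :=
          mul_le_mul_of_nonneg_left (hGmono h0a h0b hab') h0b
  have hf_nn : ∀ t, 0 ≤ f t := fun t =>
    mul_nonneg (le_max_right _ _) (hGnn _ (le_max_right _ _))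
  have hf_meas : Measurable f := hf_mono.measurable
  have hf_zero : f 0 = 0 := by simp [hf_def]
  have hf_abs : ∀ x : ℝ, f |x| = |x| * G |x| := by
    intro x; simp [hf_def, max_eq_left (abs_nonneg x)]
  have hc1 : (1:ℝ) ≤ c := by
    have h1 := hc 0 le_rfl
    have h2 := hGpos 0 le_rfl
    norm_num at h1
    nlinarith [h1, h2]
  have hc0 : (0:ℝ) < c := lt_of_lt_of_le one_pos hc1
  -- doubling for f
  have hf_double : ∀ t : ℝ, 0 ≤ t → f (2 * t) ≤ 2 * c * f t := by
    intro t ht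
    have h2t : (0:ℝ) ≤ 2 * t := by linarith
    rw [hf_def]
    simp only [max_eq_left h2t, max_eq_left ht]
    calc 2 * t * G (2 * t) ≤ 2 * t * (c * G t) :=
          mul_le_mul_of_nonneg_left (hc t ht) h2t
      _ = 2 * c * (t * G t) := by ring
  -- rewrite both integrands via f
  have hI_eq : (fun ω => ENNReal.ofReal (|X ω| * G |X ω|)) =
      fun ω => ENNReal.ofReal (f (|X ω|)) := by
    funext ω; rw [hf_abs]
  have hJ_eq : (fun ω => ENNReal.ofReal (|X ω - X' ω| * G |X ω - X' ω|)) =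
      fun ω => ENNReal.ofReal (f (|X ω - X' ω|)) := by
    funext ω; rw [hf_abs]
  rw [hI_eq, hJ_eq]
  have hmeasI : Measurable fun ω => ENNReal.ofReal (f (|X ω|)) :=
    (hf_meas.comp hX.abs).ennreal_ofReal
  have hmeasI' : Measurable fun ω => ENNReal.ofReal (f (|X' ω|)) :=
    (hf_meas.comp hX'.abs).ennreal_ofReal
  have hI'_eq : ∫⁻ ω, ENNReal.ofReal (f (|X' ω|)) ∂μ
      = ∫⁻ ω, ENNReal.ofReal (f (|X ω|)) ∂μ := by
    have hid : IdentDistrib (fun ω => ENNReal.ofReal (f (|X' ω|)))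
        (fun ω => ENNReal.ofReal (f (|X ω|))) μ μ :=
      hcopy.comp (u := fun x : ℝ => ENNReal.ofReal (f |x|))
        ((hf_meas.comp measurable_abs).ennreal_ofReal)
    exact hid.lintegral_eq
  constructor
  · -- forward: E f(|X|) < ∞  →  E f(|X-X'|) < ∞
    intro hI
    have hpt : ∀ ω, ENNReal.ofReal (f (|X ω - X' ω|)) ≤
        ENNReal.ofReal (2 * c) *
          (ENNReal.ofReal (f (|X ω|)) + ENNReal.ofReal (f (|X' ω|))) := by
      intro ω
      set V := max (|X ω|) (|X' ω|) with hV
      have hV0 : 0 ≤ V := le_trans (abs_nonneg _) (le_max_left _ _)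
      have h1 : |X ω - X' ω| ≤ 2 * V := by
        calc |X ω - X' ω| ≤ |X ω| + |X' ω| := abs_sub _ _
          _ ≤ V + V := add_le_add (le_max_left _ _) (le_max_right _ _)
          _ = 2 * V := by ring
      have h2 : f (|X ω - X' ω|) ≤ 2 * c * f V :=
        le_trans (hf_mono h1) (hf_double V hV0)
      have h3 : f V ≤ f (|X ω|) + f (|X' ω|) := by
        rcases max_cases (|X ω|) (|X' ω|) with ⟨he, _⟩ | ⟨he, _⟩
        · rw [hV, he]; linarith [hf_nn (|X' ω|)]
        · rw [hV, he]; linarith [hf_nn (|X ω|)]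
      have h4 : f (|X ω - X' ω|) ≤ 2 * c * (f (|X ω|) + f (|X' ω|)) := by
        nlinarith [h2, h3, hc0]
      calc ENNReal.ofReal (f (|X ω - X' ω|))
          ≤ ENNReal.ofReal (2 * c * (f (|X ω|) + f (|X' ω|))) :=
            ENNReal.ofReal_le_ofReal h4
        _ = ENNReal.ofReal (2 * c) * ENNReal.ofReal (f (|X ω|) + f (|X' ω|)) :=
            ENNReal.ofReal_mul (by linarith)
        _ ≤ ENNReal.ofReal (2 * c) *
            (ENNReal.ofReal (f (|X ω|)) + ENNReal.ofReal (f (|X' ω|))) :=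
            mul_le_mul_right ENNReal.ofReal_add_le _
    calc ∫⁻ ω, ENNReal.ofReal (f (|X ω - X' ω|)) ∂μ
        ≤ ∫⁻ ω, ENNReal.ofReal (2 * c) *
            (ENNReal.ofReal (f (|X ω|)) + ENNReal.ofReal (f (|X' ω|))) ∂μ :=
          lintegral_mono hpt
      _ = ENNReal.ofReal (2 * c) *
          (∫⁻ ω, ENNReal.ofReal (f (|X ω|)) ∂μ + ∫⁻ ω, ENNReal.ofReal (f (|X' ω|)) ∂μ) := by
          rw [lintegral_const_mul _ (by exact hmeasI.add hmeasI' :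
              Measurable fun ω => ENNReal.ofReal (f (|X ω|)) + ENNReal.ofReal (f (|X' ω|))), lintegral_add_left hmeasI]
      _ < ⊤ := by
          rw [hI'_eq]
          exact ENNReal.mul_lt_top ENNReal.ofReal_lt_top (by
            exact ENNReal.add_lt_top.2 ⟨hI, hI⟩)
  · -- reverse: E f(|X-X'|) < ∞  →  E f(|X|) < ∞
    intro hJ
    -- choose M with μ {|X'| ≤ M} ≥ 1/2
    obtain ⟨M, hM⟩ : ∃ M : ℕ, (1:ℝ≥0∞)/2 ≤ μ {ω | |X' ω| ≤ (M:ℝ)} := by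
      by_contra hcon
      push_neg at hcon
      have hmono : Monotone fun n : ℕ => {ω | |X' ω| ≤ (n:ℝ)} := by
        intro m n hmn ω hω
        simp only [Set.mem_setOf_eq] at *
        exact le_trans hω (by exact_mod_cast hmn)
      have huniv : (⋃ n : ℕ, {ω | |X' ω| ≤ (n:ℝ)}) = Set.univ := by
        ext ω
        simp only [Set.mem_iUnion, Set.mem_setOf_eq, Set.mem_univ, iff_true]
        obtain ⟨n, hn⟩ := exists_nat_ge (|X' ω|)
        exact ⟨n, hn⟩
      have h1 : (1:ℝ≥0∞) = ⨆ n : ℕ, μ {ω | |X' ω| ≤ (n:ℝ)} := by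
        rw [← hmono.measure_iUnion, huniv, measure_univ]
      have h2 : (⨆ n : ℕ, μ {ω | |X' ω| ≤ (n:ℝ)}) ≤ 1/2 :=
        iSup_le fun n => (hcon n).le
      rw [← h1] at h2
      exact absurd h2 (by simp)
    -- tail comparison
    have htail : ∀ t : ℝ, 0 < t →
        μ {ω | t + M ≤ |X ω|} ≤ 2 * μ {ω | t ≤ |X ω - X' ω|} := by
      intro t ht
      set A : Set ℝ := {x | t + M ≤ |x|} with hAdef
      set B : Set ℝ := {x | |x| ≤ (M:ℝ)} with hBdef
      have hAm : MeasurableSet A := by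
        have : A = (fun x : ℝ => |x|) ⁻¹' Set.Ici (t + M) := rfl
        rw [this]; exact measurable_abs measurableSet_Ici
      have hBm : MeasurableSet B := by
        have : B = (fun x : ℝ => |x|) ⁻¹' Set.Iic (M:ℝ) := rfl
        rw [this]; exact measurable_abs measurableSet_Iic
      have hprod := hindep.measure_inter_preimage_eq_mul A B hAm hBm
      have hsub : X ⁻¹' A ∩ X' ⁻¹' B ⊆ {ω | t ≤ |X ω - X' ω|} := by
        rintro ω ⟨hωA, hωB⟩
        simp only [Set.mem_preimage, hAdef, hBdef, Set.mem_setOf_eq] at hωA hωB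
        simp only [Set.mem_setOf_eq]
        calc t = (t + M) - M := by ring
          _ ≤ |X ω| - |X' ω| := sub_le_sub hωA hωB
          _ ≤ |X ω - X' ω| := abs_sub_abs_le_abs_sub _ _
      have key : μ (X ⁻¹' A) * (1/2) ≤ μ {ω | t ≤ |X ω - X' ω|} := by
        calc μ (X ⁻¹' A) * (1/2) ≤ μ (X ⁻¹' A) * μ (X' ⁻¹' B) :=
              mul_le_mul_right hM _
          _ = μ (X ⁻¹' A ∩ X' ⁻¹' B) := hprod.symm
          _ ≤ μ {ω | t ≤ |X ω - X' ω|} := measure_mono hsub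
      have : μ (X ⁻¹' A) = μ (X ⁻¹' A) * (1/2) * 2 := by
        rw [mul_assoc]
        norm_num
        rw [ENNReal.inv_mul_cancel two_ne_zero ENNReal.ofNat_ne_top, mul_one]
      calc μ {ω | t + M ≤ |X ω|} = μ (X ⁻¹' A) := rfl
        _ = μ (X ⁻¹' A) * (1/2) * 2 := this
        _ ≤ μ {ω | t ≤ |X ω - X' ω|} * 2 := mul_le_mul_left key _
        _ = 2 * μ {ω | t ≤ |X ω - X' ω|} := mul_comm _ _
    -- truncated variable Y
    set Y : Ω → ℝ := fun ω => max (|X ω| - M) 0 with hYdef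
    have hY0 : ∀ ω, 0 ≤ Y ω := fun ω => le_max_right _ _
    have hYmeas : Measurable Y := (hX.abs.sub measurable_const).max measurable_const
    have hYtail : ∀ t : ℝ, 0 < t → {ω | t ≤ Y ω} = {ω | t + M ≤ |X ω|} := by
      intro t ht
      ext ω
      simp only [Set.mem_setOf_eq, hYdef, le_max_iff]
      constructor
      · rintro (h' | h')
        · linarith
        · linarith
      · intro h'; left; linarith
    -- layer cake comparison: ∫ f(Y) ≤ 2 ∫ f(|X-X'|)
    have hlc1 : ∫⁻ ω, ENNReal.ofReal (f (Y ω)) ∂μ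
        = ∫⁻ s in Set.Ioi (0:ℝ), μ {ω | s ≤ f (Y ω)} :=
      lintegral_eq_lintegral_meas_le μ (Filter.Eventually.of_forall fun ω => hf_nn _)
        (hf_meas.comp hYmeas).aemeasurable
    have hlc2 : ∫⁻ ω, ENNReal.ofReal (f (|X ω - X' ω|)) ∂μ
        = ∫⁻ s in Set.Ioi (0:ℝ), μ {ω | s ≤ f (|X ω - X' ω|)} :=
      lintegral_eq_lintegral_meas_le μ (Filter.Eventually.of_forall fun ω => hf_nn _)
        (hf_meas.comp (hX.sub hX').abs).aemeasurable
    have hcompare : ∀ s : ℝ, 0 < s →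
        μ {ω | s ≤ f (Y ω)} ≤ 2 * μ {ω | s ≤ f (|X ω - X' ω|)} := by
      intro s hs
      apply upset_tail μ hY0 hf_mono (by rw [hf_zero]; exact hs)
      intro t ht hst
      rw [hYtail t ht]
      calc μ {ω | t + M ≤ |X ω|} ≤ 2 * μ {ω | t ≤ |X ω - X' ω|} := htail t ht
        _ ≤ 2 * μ {ω | s ≤ f (|X ω - X' ω|)} := by
            apply mul_le_mul_right
            apply measure_mono
            intro ω hω
            simp only [Set.mem_setOf_eq] at *
            exact le_trans hst (hf_mono hω)
    have hYint : ∫⁻ ω, ENNReal.ofReal (f (Y ω)) ∂μ < ⊤ := by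
      rw [hlc1]
      calc ∫⁻ s in Set.Ioi (0:ℝ), μ {ω | s ≤ f (Y ω)}
          ≤ ∫⁻ s in Set.Ioi (0:ℝ), 2 * μ {ω | s ≤ f (|X ω - X' ω|)} := by
            apply setLIntegral_mono' measurableSet_Ioi
            intro s hs
            exact hcompare s hs
        _ = 2 * ∫⁻ s in Set.Ioi (0:ℝ), μ {ω | s ≤ f (|X ω - X' ω|)} :=
            lintegral_const_mul' _ _ ENNReal.ofNat_ne_top
        _ < ⊤ := by
            rw [← hlc2]
            exact ENNReal.mul_lt_top ENNReal.ofNat_lt_top hJ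
    -- pointwise: f(|X|) ≤ 2c f(Y) + f(2M)
    have hpt : ∀ ω, f (|X ω|) ≤ 2 * c * f (Y ω) + f (2 * M) := by
      intro ω
      have h1 : |X ω| ≤ Y ω + M := by
        simp only [hYdef]
        rcases le_or_gt (|X ω|) (M:ℝ) with h' | h'
        · rcases max_cases (|X ω| - (M:ℝ)) 0 with ⟨he, _⟩ | ⟨he, _⟩ <;> rw [he] <;> linarith
        · rcases max_cases (|X ω| - (M:ℝ)) 0 with ⟨he, _⟩ | ⟨he, _⟩ <;> rw [he] <;> linarith
      rcases le_or_gt (M:ℝ) (Y ω) with h' | h'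
      · have h2 : |X ω| ≤ 2 * Y ω := by linarith
        calc f (|X ω|) ≤ f (2 * Y ω) := hf_mono h2
          _ ≤ 2 * c * f (Y ω) := hf_double _ (hY0 ω)
          _ ≤ 2 * c * f (Y ω) + f (2 * M) := le_add_of_nonneg_right (hf_nn _)
      · have h2 : |X ω| ≤ 2 * M := by linarith
        calc f (|X ω|) ≤ f (2 * M) := hf_mono h2
          _ ≤ 2 * c * f (Y ω) + f (2 * M) := le_add_of_nonneg_left
              (mul_nonneg (by linarith) (hf_nn _))
    calc ∫⁻ ω, ENNReal.ofReal (f (|X ω|)) ∂μ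
        ≤ ∫⁻ ω, ENNReal.ofReal (2 * c) * ENNReal.ofReal (f (Y ω))
            + ENNReal.ofReal (f (2 * M)) ∂μ := by
          apply lintegral_mono
          intro ω
          calc ENNReal.ofReal (f (|X ω|))
              ≤ ENNReal.ofReal (2 * c * f (Y ω) + f (2 * M)) :=
                ENNReal.ofReal_le_ofReal (hpt ω)
            _ ≤ ENNReal.ofReal (2 * c * f (Y ω)) + ENNReal.ofReal (f (2 * M)) :=
                ENNReal.ofReal_add_le
            _ = ENNReal.ofReal (2 * c) * ENNReal.ofReal (f (Y ω))
                + ENNReal.ofReal (f (2 * M)) := by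
                rw [ENNReal.ofReal_mul (by linarith)]
      _ = ENNReal.ofReal (2 * c) * ∫⁻ ω, ENNReal.ofReal (f (Y ω)) ∂μ
          + ENNReal.ofReal (f (2 * M)) := by
          rw [lintegral_add_right _ measurable_const, lintegral_const,
            lintegral_const_mul' _ _ ENNReal.ofReal_ne_top, measure_univ, mul_one]
      _ < ⊤ := ENNReal.add_lt_top.2
          ⟨ENNReal.mul_lt_top ENNReal.ofReal_lt_top hYint, ENNReal.ofReal_lt_top⟩
end
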